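/- arXiv:1904.08656 — 6 statements merged into one kernel-verified Lean document; each statement's English description precedes it below -/
import Mathlib

section
/- The chromatic number of the Kneser graph Γ of plane-solid flags of PG(6,q) is at most q^4 + q^3 + q^2 + 1. -/
variable {F V : Type*} [Field F] [AddCommGroup V] [Module F V]

/-- A plane-solid flag of PG(6,q): a pair (E,S) with E a plane (3-dim subspace),
S a solid (4-dim subspace) and E ⊆ S. -/
def IsFlag (f : Submodule F V × Submodule F V) : Prop :=
  Module.finrank F f.1 = 3 ∧ Module.finrank F f.2 = 4 ∧ f.1 ≤ f.2

/-- Two flags are in general position if E ∩ S' = 0 and E' ∩ S = 0. -/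
def GenPos (f g : Submodule F V × Submodule F V) : Prop :=
  f.1 ⊓ g.2 = ⊥ ∧ g.1 ⊓ f.2 = ⊥

/-- An independent set of plane-solid flags: a set of flags no two distinct members
of which are in general position. -/
def IsIndep (C : Set (Submodule F V × Submodule F V)) : Prop :=
  (∀ f ∈ C, IsFlag f) ∧ ∀ f ∈ C, ∀ g ∈ C, f ≠ g → ¬ GenPos f g

/-- A maximal independent set of plane-solid flags. -/
def IsMaxIndep (C : Set (Submodule F V × Submodule F V)) : Prop :=
  IsIndep C ∧ ∀ D : Set (Submodule F V × Submodule F V), IsIndep D → C ⊆ D → C = D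

/-- The Kneser graph Γ of plane-solid flags: vertices are the flags, two distinct
flags being adjacent exactly when they are in general position. -/
def Gamma (F V : Type*) [Field F] [AddCommGroup V] [Module F V] :
    SimpleGraph {f : Submodule F V × Submodule F V // IsFlag f} where
  Adj f g := f ≠ g ∧ GenPos f.1 g.1
  symm := by
    constructor
    intro f g h
    refine ⟨h.1.symm, h.2.2, h.2.1⟩
  loopless := by
    constructor
    intro f h
    exact h.1 rfl

namespace Stmt5Aux

open Module Submodule

/-- Subspace of `Fin 7 → F` of vectors vanishing on coordinates `≥ k`. -/
def Zk (k : ℕ) : Submodule F (Fin 7 → F) where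
  carrier := {x | ∀ i : Fin 7, k ≤ (i : ℕ) → x i = 0}
  add_mem' := by
    intro a b ha hb i hi
    simp [ha i hi, hb i hi]
  zero_mem' := by intro i _; rfl
  smul_mem' := by
    intro c a ha i hi
    simp [ha i hi]

lemma mem_Zk {k : ℕ} {x : Fin 7 → F} : x ∈ (Zk k : Submodule F _) ↔ ∀ i : Fin 7, k ≤ (i : ℕ) → x i = 0 :=
  Iff.rfl

lemma Zk_mono {k k' : ℕ} (h : k ≤ k') : (Zk k : Submodule F _) ≤ Zk k' := by
  intro x hx i hi
  exact hx i (le_trans h hi)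

/-- Linear equivalence with `Fin k → F`. -/
noncomputable def zkEquiv (k : ℕ) (hk : k ≤ 7) : (Zk k : Submodule F _) ≃ₗ[F] (Fin k → F) where
  toFun x i := x.1 ⟨i.1, lt_of_lt_of_le i.2 hk⟩
  map_add' _ _ := rfl
  map_smul' _ _ := rfl
  invFun y := ⟨fun i => if h : i.1 < k then y ⟨i.1, h⟩ else 0, fun i hi => dif_neg (by omega)⟩
  left_inv := by
    rintro ⟨x, hx⟩
    apply Subtype.ext
    funext i
    by_cases h : i.1 < k
    · simp only [dif_pos h]
    · simp only [dif_neg h]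
      exact (hx i (by omega)).symm
  right_inv := by
    intro y
    funext i
    simp only [dif_pos i.2]

lemma finrank_Zk (k : ℕ) (hk : k ≤ 7) : finrank F (Zk k : Submodule F _) = k := by
  rw [LinearEquiv.finrank_eq (zkEquiv k hk), Module.finrank_fin_fun]

abbrev X0 : Submodule F (Fin 7 → F) := Zk 1
abbrev L0 : Submodule F (Fin 7 → F) := Zk 2
abbrev Y0 : Submodule F (Fin 7 → F) := Zk 5

/-- The vector `(δ, 1, 0, 0, 0, 0, 0)`. -/
def zvec (δ : F) : Fin 7 → F := fun i => if i = 0 then δ else if i = 1 then 1 else 0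

@[simp] lemma zvec_0 (δ : F) : zvec δ 0 = δ := rfl
@[simp] lemma zvec_1 (δ : F) : zvec δ 1 = 1 := rfl
@[simp] lemma zvec_2 (δ : F) : zvec δ 2 = 0 := rfl
@[simp] lemma zvec_3 (δ : F) : zvec δ 3 = 0 := rfl
@[simp] lemma zvec_4 (δ : F) : zvec δ 4 = 0 := rfl
@[simp] lemma zvec_5 (δ : F) : zvec δ 5 = 0 := rfl
@[simp] lemma zvec_6 (δ : F) : zvec δ 6 = 0 := rfl

lemma zvec_mem_Y0 (δ : F) : zvec δ ∈ (Y0 : Submodule F _) := by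
  intro i hi
  have : (i : ℕ) = 5 ∨ (i : ℕ) = 6 := by omega
  rcases this with h | h
  · have : i = (5 : Fin 7) := Fin.ext (by simpa using h)
    rw [this]; rfl
  · have : i = (6 : Fin 7) := Fin.ext (by simpa using h)
    rw [this]; rfl

/-- Normalized form : leading coordinate (largest of 2,3,4 that is nonzero) is 1. -/
def Nrm (w : Fin 7 → F) : Prop :=
  w 4 = 1 ∨ (w 4 = 0 ∧ w 3 = 1) ∨ (w 4 = 0 ∧ w 3 = 0 ∧ w 2 = 1)

open scoped Classical in
/-- Canonical representative of the line spanned by `v`. -/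
noncomputable def canv (v : Fin 7 → F) : Fin 7 → F :=
  if v 4 ≠ 0 then (v 4)⁻¹ • v else if v 3 ≠ 0 then (v 3)⁻¹ • v else (v 2)⁻¹ • v

lemma canv_spec (v : Fin 7 → F) (hv : v 2 ≠ 0 ∨ v 3 ≠ 0 ∨ v 4 ≠ 0) :
    Nrm (canv v) ∧ ∃ c : F, canv v = c • v := by
  unfold canv
  split_ifs with h1 h2
  · refine ⟨Or.inl ?_, ⟨_, rfl⟩⟩
    simp [inv_mul_cancel₀ h1]
  · push_neg at h1
    refine ⟨Or.inr (Or.inl ⟨?_, ?_⟩), ⟨_, rfl⟩⟩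
    · simp [h1]
    · simp [inv_mul_cancel₀ h2]
  · push_neg at h1 h2
    have h3 : v 2 ≠ 0 := by tauto
    refine ⟨Or.inr (Or.inr ⟨?_, ?_, ?_⟩), ⟨_, rfl⟩⟩
    · simp [h1]
    · simp [h2]
    · simp [inv_mul_cancel₀ h3]

lemma canv_of_nrm (w : Fin 7 → F) (h : Nrm w) : canv w = w := by
  unfold canv
  rcases h with h | ⟨h4, h3⟩ | ⟨h4, h3, h2⟩
  · rw [if_pos (by rw [h]; exact one_ne_zero), h, inv_one, one_smul]
  · rw [if_neg (by rw [h4]; simp), if_pos (by rw [h3]; exact one_ne_zero), h3, inv_one, one_smul]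
  · rw [if_neg (by rw [h4]; simp), if_neg (by rw [h3]; simp), h2, inv_one, one_smul]

lemma nrm_exists_j (w : Fin 7 → F) (h : Nrm w) :
    ∃ j : Fin 7, w j = 1 ∧ 2 ≤ (j : ℕ) ∧ (∀ δ : F, zvec δ j = 0) := by
  rcases h with h | ⟨_, h⟩ | ⟨_, _, h⟩
  · exact ⟨4, h, by decide, fun δ => rfl⟩
  · exact ⟨3, h, by decide, fun δ => rfl⟩
  · exact ⟨2, h, by decide, fun δ => rfl⟩

lemma nrm_ne_zero (w : Fin 7 → F) (h : Nrm w) : w ≠ 0 := by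
  obtain ⟨j, hj, _, _⟩ := nrm_exists_j w h
  intro h0
  rw [h0] at hj
  exact one_ne_zero hj.symm

lemma nrm_not_mem_L0 (w : Fin 7 → F) (h : Nrm w) : w ∉ (L0 : Submodule F _) := by
  obtain ⟨j, hj, hj2, _⟩ := nrm_exists_j w h
  intro hw
  rw [hw j hj2] at hj
  exact one_ne_zero hj.symm

open scoped Classical in
/-- Encoding of a normalized vector of `Y0 ∖ L0` into a small type. -/
noncomputable def enc (w : Fin 7 → F) : F × F × ((F × F) ⊕ (F ⊕ Unit)) :=
  (w 0, w 1,
    if w 4 ≠ 0 then Sum.inl (w 2, w 3)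
    else if w 3 ≠ 0 then Sum.inr (Sum.inl (w 2)) else Sum.inr (Sum.inr ()))

lemma enc_inj {w w' : Fin 7 → F} (hw : w ∈ (Y0 : Submodule F _)) (hw' : w' ∈ (Y0 : Submodule F _))
    (hn : Nrm w) (hn' : Nrm w') (he : enc w = enc w') : w = w' := by
  unfold enc at he
  obtain ⟨e0, e12⟩ := Prod.ext_iff.mp he
  obtain ⟨e1, e2⟩ := Prod.ext_iff.mp e12
  simp only at e0 e1 e2
  have h5 : w 5 = 0 := hw 5 (by decide)
  have h6 : w 6 = 0 := hw 6 (by decide)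
  have h5' : w' 5 = 0 := hw' 5 (by decide)
  have h6' : w' 6 = 0 := hw' 6 (by decide)
  have hco : w 2 = w' 2 ∧ w 3 = w' 3 ∧ w 4 = w' 4 := by
    rcases hn with h | ⟨ha4, ha3⟩ | ⟨ha4, ha3, ha2⟩ <;>
      rcases hn' with h' | ⟨hb4, hb3⟩ | ⟨hb4, hb3, hb2⟩ <;>
      split_ifs at e2 with p1 p2 p3 p4 <;>
      simp_all
  funext i
  fin_cases i <;> simp_all


section Ranks

lemma inf_ne_bot_of_le {W : Type*} [AddCommGroup W] [Module F W] [FiniteDimensional F W]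
    {A B S : Submodule F W} (hA : A ≤ S) (hB : B ≤ S)
    (h : finrank F S < finrank F A + finrank F B) : A ⊓ B ≠ ⊥ := by
  intro hbot
  have h1 := Submodule.finrank_sup_add_finrank_inf_eq A B
  rw [hbot, finrank_bot] at h1
  have h2 : finrank F ↥(A ⊔ B) ≤ finrank F S := Submodule.finrank_mono (sup_le hA hB)
  omega

lemma finrank_inf_lower {W : Type*} [AddCommGroup W] [Module F W] [FiniteDimensional F W]
    (A B : Submodule F W) :
    finrank F A + finrank F B ≤ finrank F W + finrank F ↥(A ⊓ B) := by
  have h1 := Submodule.finrank_sup_add_finrank_inf_eq A B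
  have h2 : finrank F ↥(A ⊔ B) ≤ finrank F W := Submodule.finrank_le _
  omega

/-- The span of `w` and `zvec δ` is 2-dimensional when `w` is normalized. -/
lemma finrank_pair (w : Fin 7 → F) (hN : Nrm w) (δ : F) :
    finrank F (span F {w, zvec δ} : Submodule F (Fin 7 → F)) = 2 := by
  obtain ⟨j, hj1, hj2, hjz⟩ := nrm_exists_j w hN
  have hw0 : w ≠ 0 := nrm_ne_zero w hN
  have hz0 : zvec δ ≠ 0 := by
    intro h
    have : zvec δ 1 = (0 : F) := by rw [h]; rfl
    simp at this
  have hspan : span F ({w, zvec δ} : Set (Fin 7 → F)) = (F ∙ w) ⊔ (F ∙ zvec δ) :=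
    Submodule.span_insert w {zvec δ}
  have hinf : (F ∙ w) ⊓ (F ∙ zvec δ) = ⊥ := by
    rw [eq_bot_iff]
    rintro x hx
    obtain ⟨hx1, hx2⟩ := Submodule.mem_inf.mp hx
    obtain ⟨a, ha⟩ := Submodule.mem_span_singleton.mp hx1
    obtain ⟨b, hb⟩ := Submodule.mem_span_singleton.mp hx2
    have hxj : x j = a := by rw [← ha]; simp [hj1]
    have hxj' : x j = 0 := by rw [← hb]; simp [hjz δ]
    have ha0 : a = 0 := by rw [← hxj, hxj']
    have : x = 0 := by rw [← ha, ha0, zero_smul]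
    simp [this]
  have h1 := Submodule.finrank_sup_add_finrank_inf_eq (F ∙ w) (F ∙ zvec δ)
  rw [hinf, finrank_bot, finrank_span_singleton hw0, finrank_span_singleton hz0] at h1
  rw [hspan]
  omega

end Ranks

/-- The line attached to the point spanned by `v`. -/
noncomputable def lineOf (v : Fin 7 → F) : Submodule F (Fin 7 → F) :=
  span F {canv v, zvec (canv v 1)}

open scoped Classical in
/-- The coloring of plane-solid flags. -/
noncomputable def col (f : Submodule F (Fin 7 → F) × Submodule F (Fin 7 → F)) :
    Option (F × F × ((F × F) ⊕ (F ⊕ Unit))) :=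
  if X0 ≤ f.1 ∨ L0 ≤ f.2 then none
  else if h2 : ∃ v, v ∈ f.1 ∧ v ∈ (Y0 : Submodule F _) ∧ v ∉ (L0 : Submodule F _) then
    some (enc (canv h2.choose))
  else if h3 : ∃ v, v ∈ (Y0 : Submodule F _) ∧ v ∉ (L0 : Submodule F _) ∧ lineOf v ≤ f.2 then
    some (enc (canv h3.choose))
  else none

lemma not_mem_L0_cases {v : Fin 7 → F} (hY : v ∈ (Y0 : Submodule F _))
    (hL : v ∉ (L0 : Submodule F _)) : v 2 ≠ 0 ∨ v 3 ≠ 0 ∨ v 4 ≠ 0 := by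
  by_contra h
  push_neg at h
  obtain ⟨h2, h3, h4⟩ := h
  refine hL ?_
  intro i hi
  have : (i : ℕ) = 2 ∨ (i : ℕ) = 3 ∨ (i : ℕ) = 4 ∨ (i : ℕ) = 5 ∨ (i : ℕ) = 6 := by omega
  have h5 : v 5 = 0 := hY 5 (by decide)
  have h6 : v 6 = 0 := hY 6 (by decide)
  clear this
  fin_cases i
  · exact absurd hi (by decide)
  · exact absurd hi (by decide)
  · exact h2
  · exact h3
  · exact h4
  · exact h5
  · exact h6

/-- The coverage lemma: every flag not containing `X0` in its plane nor `L0` in its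
solid, whose plane meets `Y0` only inside `L0`, has a solid containing one of the
assigned lines. -/
lemma coverage {f : Submodule F (Fin 7 → F) × Submodule F (Fin 7 → F)} (hf : IsFlag f)
    (h1 : ¬(X0 ≤ f.1 ∨ L0 ≤ f.2))
    (h2 : ¬∃ v, v ∈ f.1 ∧ v ∈ (Y0 : Submodule F _) ∧ v ∉ (L0 : Submodule F _)) :
    ∃ v, v ∈ (Y0 : Submodule F _) ∧ v ∉ (L0 : Submodule F _) ∧ lineOf v ≤ f.2 := by
  obtain ⟨hE3, hS4, hES⟩ := hf
  push_neg at h1 h2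
  obtain ⟨h1X, h1L⟩ := h1
  have h7 : finrank F (Fin 7 → F) = 7 := Module.finrank_fin_fun F
  have hY5 : finrank F (Y0 : Submodule F _) = 5 := finrank_Zk 5 (by norm_num)
  have hL2 : finrank F (L0 : Submodule F _) = 2 := finrank_Zk 2 (by norm_num)
  -- find z spanning E ⊓ Y0, inside L0
  have hA : f.1 ⊓ (Y0 : Submodule F _) ≠ ⊥ := by
    intro hbot
    have h1' := finrank_inf_lower f.1 (Y0 : Submodule F _)
    rw [hbot, finrank_bot, hE3, hY5, h7] at h1'
    omega
  obtain ⟨z, hz, hz0⟩ := Submodule.exists_mem_ne_zero_of_ne_bot hA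
  obtain ⟨hzE, hzY⟩ := Submodule.mem_inf.mp hz
  have hzL : z ∈ (L0 : Submodule F _) := h2 z hzE hzY
  have hz2 : z 2 = 0 := hzL 2 (by decide)
  have hz3 : z 3 = 0 := hzL 3 (by decide)
  have hz4 : z 4 = 0 := hzL 4 (by decide)
  have hz5 : z 5 = 0 := hzL 5 (by decide)
  have hz6 : z 6 = 0 := hzL 6 (by decide)
  have hz1 : z 1 ≠ 0 := by
    intro hz1
    refine h1X ?_
    -- X0 ≤ f.1 : every x ∈ X0 is a multiple of z
    have hz00 : z 0 ≠ 0 := by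
      intro hz00
      refine hz0 ?_
      funext i
      fin_cases i <;> simp_all
    intro x hx
    have hx1 : x 1 = 0 := hx 1 (by decide)
    have hx2 : x 2 = 0 := hx 2 (by decide)
    have hx3 : x 3 = 0 := hx 3 (by decide)
    have hx4 : x 4 = 0 := hx 4 (by decide)
    have hx5 : x 5 = 0 := hx 5 (by decide)
    have hx6 : x 6 = 0 := hx 6 (by decide)
    have : x = (x 0 * (z 0)⁻¹) • z := by
      funext i
      fin_cases i <;> simp_all [mul_assoc, inv_mul_cancel₀ hz00]
    rw [this]
    exact Submodule.smul_mem _ _ hzE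
  set δ : F := z 0 * (z 1)⁻¹ with hδ
  have hζ : (z 1)⁻¹ • z = zvec δ := by
    funext i
    fin_cases i <;> simp_all [mul_comm, inv_mul_cancel₀ hz1]
  have hζS : zvec δ ∈ f.2 := by
    rw [← hζ]
    exact Submodule.smul_mem _ _ (hES hzE)
  -- find v in (S ⊓ Y0) \ L0
  have hJ : 2 ≤ finrank F ↥(f.2 ⊓ (Y0 : Submodule F _)) := by
    have h1' := finrank_inf_lower f.2 (Y0 : Submodule F _)
    rw [hS4, hY5, h7] at h1'
    omega
  have hJL : ¬(f.2 ⊓ (Y0 : Submodule F _) ≤ L0) := by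
    intro hle
    have : f.2 ⊓ (Y0 : Submodule F _) = L0 :=
      Submodule.eq_of_le_of_finrank_le hle (by rw [hL2]; exact hJ)
    exact h1L (this ▸ inf_le_left)
  obtain ⟨v, hvJ, hvL⟩ := SetLike.not_le_iff_exists.mp hJL
  obtain ⟨hvS, hvY⟩ := Submodule.mem_inf.mp hvJ
  obtain ⟨hNw, c, hcw⟩ := canv_spec v (not_mem_L0_cases hvY hvL)
  set w : Fin 7 → F := canv v with hwdef
  have hwS : w ∈ f.2 := by rw [hcw]; exact Submodule.smul_mem _ _ hvS
  have hwY : w ∈ (Y0 : Submodule F _) := by rw [hcw]; exact Submodule.smul_mem _ _ hvY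
  -- the adjusted vector
  set u : Fin 7 → F := w + (δ - w 1) • zvec δ with hudef
  have hu2 : u 2 = w 2 := by simp [hudef]
  have hu3 : u 3 = w 3 := by simp [hudef]
  have hu4 : u 4 = w 4 := by simp [hudef]
  have hu1 : u 1 = δ := by simp [hudef]
  have huS : u ∈ f.2 := Submodule.add_mem _ hwS (Submodule.smul_mem _ _ hζS)
  have huY : u ∈ (Y0 : Submodule F _) :=
    Submodule.add_mem _ hwY (Submodule.smul_mem _ _ (zvec_mem_Y0 δ))
  have hNu : Nrm u := by
    rcases hNw with h | ⟨h4, h3⟩ | ⟨h4, h3, h2'⟩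
    · exact Or.inl (by rw [hu4]; exact h)
    · exact Or.inr (Or.inl ⟨by rw [hu4]; exact h4, by rw [hu3]; exact h3⟩)
    · exact Or.inr (Or.inr ⟨by rw [hu4]; exact h4, by rw [hu3]; exact h3, by rw [hu2]; exact h2'⟩)
  have huL : u ∉ (L0 : Submodule F _) := nrm_not_mem_L0 u hNu
  refine ⟨u, huY, huL, ?_⟩
  have hcanu : canv u = u := canv_of_nrm u hNu
  unfold lineOf
  rw [hcanu, hu1]
  rw [Submodule.span_le]
  intro x hx
  rcases hx with hx | hx
  · subst hx; exact huS
  · rw [Set.mem_singleton_iff] at hx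
    subst hx; exact hζS


lemma col_none {f : Submodule F (Fin 7 → F) × Submodule F (Fin 7 → F)} (hf : IsFlag f)
    (h : col f = none) : X0 ≤ f.1 ∨ L0 ≤ f.2 := by
  by_contra hc
  unfold col at h
  rw [if_neg hc] at h
  rcases Classical.em (∃ v, v ∈ f.1 ∧ v ∈ (Y0 : Submodule F _) ∧ v ∉ (L0 : Submodule F _)) with
    h2 | h2
  · rw [dif_pos h2] at h
    exact Option.some_ne_none _ h
  · rw [dif_neg h2] at h
    have h3 := coverage hf hc h2
    rw [dif_pos h3] at h
    exact Option.some_ne_none _ h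

lemma col_some {f : Submodule F (Fin 7 → F) × Submodule F (Fin 7 → F)}
    {d : F × F × ((F × F) ⊕ (F ⊕ Unit))} (h : col f = some d) :
    ∃ w, w ∈ (Y0 : Submodule F _) ∧ Nrm w ∧ enc w = d ∧
      (w ∈ f.1 ∨ span F {w, zvec (w 1)} ≤ f.2) := by
  unfold col at h
  rcases Classical.em ((X0 : Submodule F _) ≤ f.1 ∨ (L0 : Submodule F _) ≤ f.2) with h1 | h1
  · rw [if_pos h1] at h
    exact absurd h (by simp)
  rw [if_neg h1] at h
  rcases Classical.em (∃ v, v ∈ f.1 ∧ v ∈ (Y0 : Submodule F _) ∧ v ∉ (L0 : Submodule F _)) with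
    h2 | h2
  · rw [dif_pos h2] at h
    obtain ⟨hvE, hvY, hvL⟩ := h2.choose_spec
    obtain ⟨hN, c, hc⟩ := canv_spec h2.choose (not_mem_L0_cases hvY hvL)
    refine ⟨canv h2.choose, by rw [hc]; exact Submodule.smul_mem _ _ hvY, hN,
      Option.some_inj.mp h, Or.inl (by rw [hc]; exact Submodule.smul_mem _ _ hvE)⟩
  rw [dif_neg h2] at h
  rcases Classical.em (∃ v, v ∈ (Y0 : Submodule F _) ∧ v ∉ (L0 : Submodule F _) ∧
      lineOf v ≤ f.2) with h3 | h3
  · rw [dif_pos h3] at h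
    obtain ⟨hvY, hvL, hvline⟩ := h3.choose_spec
    obtain ⟨hN, c, hc⟩ := canv_spec h3.choose (not_mem_L0_cases hvY hvL)
    have hline : lineOf h3.choose ≤ f.2 := hvline
    rw [lineOf] at hline
    refine ⟨canv h3.choose, by rw [hc]; exact Submodule.smul_mem _ _ hvY, hN,
      Option.some_inj.mp h, Or.inr hline⟩
  · rw [dif_neg h3] at h
    exact absurd h (by simp)

lemma proper {f g : Submodule F (Fin 7 → F) × Submodule F (Fin 7 → F)}
    (hf : IsFlag f) (hg : IsFlag g) (hcol : col f = col g) : ¬ GenPos f g := by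
  rintro ⟨hfg1, hfg2⟩
  have hL2 : finrank F (L0 : Submodule F _) = 2 := finrank_Zk 2 (by norm_num)
  have hX0L0 : (X0 : Submodule F _) ≤ L0 := Zk_mono (by norm_num)
  have he0 : (fun i => if i = 0 then 1 else 0 : Fin 7 → F) ∈ (X0 : Submodule F _) := by
    intro i hi
    have : i ≠ 0 := by
      intro h
      subst h
      simp at hi
    simp [this]
  match hc : col f with
  | none =>
    have hcg : col g = none := by rw [← hcol]; exact hc
    have h1f := col_none hf hc
    have h1g := col_none hg hcg
    have hne : ((fun i => if i = 0 then 1 else 0 : Fin 7 → F)) ≠ 0 := by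
      intro h
      have := congrFun h 0
      simp at this
    rcases h1f with hXf | hLf <;> rcases h1g with hXg | hLg
    · have : (X0 : Submodule F _) ≤ f.1 ⊓ g.2 := le_inf hXf (le_trans hXg hg.2.2)
      rw [hfg1] at this
      exact hne (by simpa using this he0)
    · have : (X0 : Submodule F _) ≤ f.1 ⊓ g.2 := le_inf hXf (le_trans hX0L0 hLg)
      rw [hfg1] at this
      exact hne (by simpa using this he0)
    · have : (X0 : Submodule F _) ≤ g.1 ⊓ f.2 := le_inf hXg (le_trans hX0L0 hLf)
      rw [hfg2] at this
      exact hne (by simpa using this he0)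
    · have hne' : f.1 ⊓ (L0 : Submodule F _) ≠ ⊥ := by
        refine inf_ne_bot_of_le hf.2.2 hLf ?_
        rw [hf.2.1, hf.1, hL2]
        norm_num
      refine hne' ?_
      rw [eq_bot_iff, ← hfg1]
      exact inf_le_inf le_rfl hLg
  | some d =>
    have hcg : col g = some d := by rw [← hcol]; exact hc
    obtain ⟨w, hwY, hwN, hwe, hwf⟩ := col_some hc
    obtain ⟨w', hwY', hwN', hwe', hwg⟩ := col_some hcg
    have hww : w' = w := enc_inj hwY' hwY hwN' hwN (hwe'.trans hwe.symm)
    rw [hww] at hwg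
    have hw0 : w ≠ 0 := nrm_ne_zero w hwN
    have hwmem : w ∈ span F ({w, zvec (w 1)} : Set (Fin 7 → F)) :=
      Submodule.subset_span (Set.mem_insert _ _)
    rcases hwf with hwE | hwS <;> rcases hwg with hwE' | hwS'
    · have : w ∈ f.1 ⊓ g.2 := Submodule.mem_inf.mpr ⟨hwE, hg.2.2 hwE'⟩
      rw [hfg1] at this
      exact hw0 (by simpa using this)
    · have : w ∈ f.1 ⊓ g.2 := Submodule.mem_inf.mpr ⟨hwE, hwS' hwmem⟩
      rw [hfg1] at this
      exact hw0 (by simpa using this)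
    · have : w ∈ g.1 ⊓ f.2 := Submodule.mem_inf.mpr ⟨hwE', hwS hwmem⟩
      rw [hfg2] at this
      exact hw0 (by simpa using this)
    · have hm2 : finrank F (span F {w, zvec (w 1)} : Submodule F (Fin 7 → F)) = 2 :=
        finrank_pair w hwN (w 1)
      have hne' : f.1 ⊓ span F {w, zvec (w 1)} ≠ ⊥ := by
        refine inf_ne_bot_of_le hf.2.2 hwS ?_
        rw [hf.2.1, hf.1, hm2]
        norm_num
      refine hne' ?_
      rw [eq_bot_iff, ← hfg1]
      exact inf_le_inf le_rfl hwS'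

end Stmt5Aux

theorem stmt5 {q : ℕ} [Fintype F] [FiniteDimensional F V]
    (hq : Fintype.card F = q) (hV : Module.finrank F V = 7) :
    (Gamma F V).chromaticNumber ≤ ((q ^ 4 + q ^ 3 + q ^ 2 + 1 : ℕ) : ℕ∞) := by
  classical
  let b : Module.Basis (Fin 7) F V := (Module.finBasis F V).reindex (finCongr hV)
  let e : V ≃ₗ[F] (Fin 7 → F) := b.equivFun
  let C : (Gamma F V).Coloring (Option (F × F × ((F × F) ⊕ (F ⊕ Unit)))) :=
    SimpleGraph.Coloring.mk
      (fun x => Stmt5Aux.col (x.1.1.map (e : V →ₗ[F] (Fin 7 → F)),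
        x.1.2.map (e : V →ₗ[F] (Fin 7 → F))))
      (by
        rintro x y ⟨hne, hgp1, hgp2⟩ hcol
        have hmapflag : ∀ z : {f : Submodule F V × Submodule F V // IsFlag f},
            IsFlag (z.1.1.map (e : V →ₗ[F] (Fin 7 → F)),
              z.1.2.map (e : V →ₗ[F] (Fin 7 → F))) := by
          intro z
          obtain ⟨h1, h2, h3⟩ := z.2
          exact ⟨by rw [LinearEquiv.finrank_map_eq]; exact h1,
            by rw [LinearEquiv.finrank_map_eq]; exact h2, Submodule.map_mono h3⟩
        refine Stmt5Aux.proper (hmapflag x) (hmapflag y) hcol ⟨?_, ?_⟩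
        · show Submodule.map _ _ ⊓ Submodule.map _ _ = ⊥
          rw [← Submodule.map_inf ((e : V →ₗ[F] (Fin 7 → F))) (e.injective), hgp1,
            Submodule.map_bot]
        · show Submodule.map _ _ ⊓ Submodule.map _ _ = ⊥
          rw [← Submodule.map_inf ((e : V →ₗ[F] (Fin 7 → F))) (e.injective), hgp2,
            Submodule.map_bot])
  have hcol := C.colorable
  have hcard : Fintype.card (Option (F × F × ((F × F) ⊕ (F ⊕ Unit)))) =
      q ^ 4 + q ^ 3 + q ^ 2 + 1 := by
    simp [Fintype.card_option, Fintype.card_prod, Fintype.card_sum, hq]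
    ring
  rw [hcard] at hcol
  exact hcol.chromaticNumber_le
end

section
/- Let H be a hyperplane of PG(6,q). Then the set Λ(H,∅) of all plane-solid flags (E,S) with S ⊆ H is an independent set. Moreover, a set C of plane-solid flags is a maximal independent set containing Λ(H,∅) if and only if C = Λ(H,𝓔) for some maximal intersecting set 𝓔 of planes of H. -/
open Module


variable {F V : Type*} [Field F] [AddCommGroup V] [Module F V]

/-- Λ(H,𝓔): all plane-solid flags (E,S) with S ⊆ H or E ∈ 𝓔. -/
def LambdaH (H : Submodule F V) (E : Set (Submodule F V)) :
    Set (Submodule F V × Submodule F V) :=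
  {f | IsFlag f ∧ (f.2 ≤ H ∨ f.1 ∈ E)}

/-- A maximal intersecting set of planes of H. -/
def MaxPlaneSet (H : Submodule F V) (E : Set (Submodule F V)) : Prop :=
  (∀ E₁ ∈ E, Module.finrank F E₁ = 3 ∧ E₁ ≤ H) ∧
  (∀ E₁ ∈ E, ∀ E₂ ∈ E, E₁ ⊓ E₂ ≠ ⊥) ∧
  ∀ E' : Set (Submodule F V),
    ((∀ E₁ ∈ E', Module.finrank F E₁ = 3 ∧ E₁ ≤ H) ∧
      ∀ E₁ ∈ E', ∀ E₂ ∈ E', E₁ ⊓ E₂ ≠ ⊥) → E ⊆ E' → E = E'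

section Aux

variable [FiniteDimensional F V]

lemma meet_ne_bot {W A B : Submodule F V} (hA : A ≤ W) (hB : B ≤ W)
    (h : finrank F W < finrank F A + finrank F B) : A ⊓ B ≠ ⊥ := by
  intro h0
  have h1 := Submodule.finrank_sup_add_finrank_inf_eq A B
  rw [h0, finrank_bot] at h1
  have h2 : finrank F (A ⊔ B : Submodule F V) ≤ finrank F W :=
    Submodule.finrank_mono (sup_le hA hB)
  omega

lemma exists_compl_within (W P : Submodule F V) (hP : P ≤ W) :
    ∃ U : Submodule F V, U ≤ W ∧ U ⊓ P = ⊥ ∧ U ⊔ P = W ∧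
      finrank F U + finrank F P = finrank F W := by
  obtain ⟨Q', hQ'⟩ := Submodule.exists_isCompl (Submodule.comap W.subtype P)
  have hPmap : Submodule.map W.subtype (Submodule.comap W.subtype P) = P := by
    rw [Submodule.map_comap_subtype, inf_eq_right.mpr hP]
  have hinf : (Q'.map W.subtype) ⊓ P = ⊥ := by
    rw [← hPmap, ← Submodule.map_inf _ W.injective_subtype,
      (disjoint_iff.mp hQ'.symm.disjoint), Submodule.map_bot]
  have hsup : (Q'.map W.subtype) ⊔ P = W := by
    rw [← hPmap, ← Submodule.map_sup, hQ'.symm.sup_eq_top, Submodule.map_subtype_top]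
  refine ⟨Q'.map W.subtype, Submodule.map_subtype_le W Q', hinf, hsup, ?_⟩
  have := Submodule.finrank_sup_add_finrank_inf_eq (Q'.map W.subtype) P
  rw [hinf, hsup, finrank_bot] at this
  omega

lemma exists_notMem_of_finrank_lt {A W : Submodule F V} (hA : A ≤ W)
    (h : finrank F A < finrank F W) : ∃ x ∈ W, x ∉ A := by
  by_contra hc
  push_neg at hc
  exact absurd (Submodule.finrank_mono (fun x hx => hc x hx)) (by omega)

lemma finrank_sup_span {A : Submodule F V} {x : V} (hx : x ∉ A) :
    finrank F (A ⊔ Submodule.span F {x} : Submodule F V) = finrank F A + 1 := by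
  have hx0 : x ≠ 0 := fun h => hx (h ▸ A.zero_mem)
  have hd : A ⊓ Submodule.span F {x} = ⊥ :=
    disjoint_iff.mp (Submodule.disjoint_span_singleton.mpr (fun h => absurd h hx))
  have := Submodule.finrank_sup_add_finrank_inf_eq A (Submodule.span F {x})
  rw [hd, finrank_bot, finrank_span_singleton hx0] at this
  omega

omit [FiniteDimensional F V] in
lemma sup_span_inf_eq {A H : Submodule F V} {x : V} (hA : A ≤ H) (hx : x ∉ H) :
    (A ⊔ Submodule.span F {x}) ⊓ H = A := by
  apply le_antisymm
  · rintro v ⟨hv1, hv2⟩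
    obtain ⟨y, hy, z, hz, rfl⟩ := Submodule.mem_sup.mp hv1
    obtain ⟨c, rfl⟩ := Submodule.mem_span_singleton.mp hz
    rcases eq_or_ne c 0 with rfl | hc
    · simpa using hy
    · exfalso
      apply hx
      have hcx : c • x ∈ H := by
        have h' : c • x = y + c • x - y := by abel
        rw [h']; exact H.sub_mem hv2 (hA hy)
      have h2 := H.smul_mem c⁻¹ hcx
      rwa [smul_smul, inv_mul_cancel₀ hc, one_smul] at h2
  · exact le_inf le_sup_left hA

omit [FiniteDimensional F V] in
lemma inf_restrict {A B H : Submodule F V} (hA : A ≤ H) : A ⊓ B = A ⊓ (B ⊓ H) :=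
  le_antisymm (le_inf inf_le_left (le_inf inf_le_right (le_trans inf_le_left hA)))
    (le_inf inf_le_left (le_trans inf_le_right inf_le_left))

lemma ne_bot_of_finrank_eq {A : Submodule F V} {n : ℕ} (hn : n ≠ 0)
    (h : finrank F A = n) : A ≠ ⊥ := by
  intro hb
  rw [hb, finrank_bot] at h
  omega

lemma flag_inf_eq {H : Submodule F V} (f : Submodule F V × Submodule F V)
    (hf : IsFlag f) (hfH : f.1 ≤ H) (hS : ¬ f.2 ≤ H) : f.2 ⊓ H = f.1 := by
  have h1 : f.1 ≤ f.2 ⊓ H := le_inf hf.2.2 hfH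
  have hlt : f.2 ⊓ H < f.2 :=
    lt_of_le_of_ne inf_le_left (fun h => hS (h ▸ inf_le_right))
  have h2 := Submodule.finrank_lt_finrank_of_lt hlt
  exact (Submodule.eq_of_le_of_finrank_le h1 (by rw [hf.1]; rw [hf.2.1] at h2; omega)).symm

lemma lambda_indep (hV : finrank F V = 7) {H : Submodule F V} (hH : finrank F H = 6)
    {E : Set (Submodule F V)} (h1 : ∀ E₁ ∈ E, E₁ ≤ H)
    (h2 : ∀ E₁ ∈ E, ∀ E₂ ∈ E, E₁ ⊓ E₂ ≠ ⊥) :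
    IsIndep (LambdaH H E) := by
  refine ⟨fun f hf => hf.1, ?_⟩
  rintro f ⟨hf, hfc⟩ g ⟨hg, hgc⟩ hne ⟨hgp1, hgp2⟩
  rcases hfc with hfc | hfc
  · rcases hgc with hgc | hgc
    · exact meet_ne_bot (le_trans hf.2.2 hfc) hgc
        (by rw [hH, hf.1, hg.2.1]; omega) hgp1
    · exact meet_ne_bot (h1 _ hgc) hfc (by rw [hH, hg.1, hf.2.1]; omega) hgp2
  · rcases hgc with hgc | hgc
    · exact meet_ne_bot (h1 _ hfc) hgc (by rw [hH, hf.1, hg.2.1]; omega) hgp1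
    · have hle : f.1 ⊓ g.1 ≤ f.1 ⊓ g.2 := inf_le_inf le_rfl hg.2.2
      rw [hgp1, le_bot_iff] at hle
      exact h2 _ hfc _ hgc hle

/-- If `D` is independent, contains all flags inside `H`, and `f ∈ D` has its solid
not contained in `H`, then its plane lies in `H`. -/
lemma ext_plane_le (hV : finrank F V = 7) {H : Submodule F V} (hH : finrank F H = 6)
    {D : Set (Submodule F V × Submodule F V)} (hD : IsIndep D)
    (hsub : LambdaH H (∅ : Set (Submodule F V)) ⊆ D)
    {f : Submodule F V × Submodule F V} (hf : f ∈ D) (hS : ¬ f.2 ≤ H) : f.1 ≤ H := by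
  obtain ⟨hE3, hS4, hES⟩ := hD.1 f hf
  by_contra hEH
  set P := f.2 ⊓ H with hPdef
  have hPle : P ≤ H := inf_le_right
  have hP3 : finrank F P = 3 := by
    have h1 := Submodule.finrank_sup_add_finrank_inf_eq f.2 H
    have h2 : finrank F (f.2 ⊔ H : Submodule F V) ≤ 7 := hV ▸ Submodule.finrank_le _
    have h3 : P < f.2 := lt_of_le_of_ne inf_le_left (fun h => hS (h ▸ inf_le_right))
    have h4 := Submodule.finrank_lt_finrank_of_lt h3
    rw [hS4] at h4
    rw [← hPdef, hS4, hH] at h1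
    omega
  set L := f.1 ⊓ H with hLdef
  have hLP : L ≤ P := inf_le_inf hES le_rfl
  have hL2 : finrank F L ≤ 2 := by
    have h3 : L < f.1 := lt_of_le_of_ne inf_le_left (fun h => hEH (h ▸ inf_le_right))
    have h4 := Submodule.finrank_lt_finrank_of_lt h3
    rw [hE3] at h4
    omega
  obtain ⟨E'', hE''H, hE''P, hsupP, hrank⟩ := exists_compl_within H P hPle
  have hE''3 : finrank F E'' = 3 := by rw [hP3, hH] at hrank; omega
  have hEL : finrank F (E'' ⊔ L : Submodule F V) < finrank F H := by
    have h5 := Submodule.finrank_sup_add_finrank_inf_eq E'' L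
    rw [hH]
    omega
  obtain ⟨x, hxH, hxEL⟩ :=
    exists_notMem_of_finrank_lt (sup_le hE''H (le_trans hLP hPle)) hEL
  set S'' := E'' ⊔ Submodule.span F {x} with hS''def
  have hxE'' : x ∉ E'' := fun h => hxEL (Submodule.mem_sup_left h)
  have hS''4 : finrank F S'' = 4 := by rw [hS''def, finrank_sup_span hxE'', hE''3]
  have hS''H : S'' ≤ H := sup_le hE''H ((Submodule.span_singleton_le_iff_mem x H).mpr hxH)
  have hg : ((E'', S'') : Submodule F V × Submodule F V) ∈
      LambdaH H (∅ : Set (Submodule F V)) := ⟨⟨hE''3, hS''4, le_sup_left⟩, Or.inl hS''H⟩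
  have hne : f ≠ (E'', S'') := by
    intro h
    apply hS
    rw [h]
    exact hS''H
  apply hD.2 f hf _ (hsub hg) hne
  constructor
  · -- f.1 ⊓ S'' = ⊥
    rw [eq_bot_iff]
    rintro v ⟨hv1, hv2⟩
    have hvL : v ∈ L := ⟨hv1, hS''H hv2⟩
    obtain ⟨y, hy, z, hz, rfl⟩ := Submodule.mem_sup.mp hv2
    obtain ⟨c, rfl⟩ := Submodule.mem_span_singleton.mp hz
    rcases eq_or_ne c 0 with rfl | hc
    · rw [zero_smul, add_zero] at hvL ⊢
      have : y ∈ E'' ⊓ P := ⟨hy, hLP hvL⟩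
      rwa [hE''P] at this
    · exfalso
      apply hxEL
      have hcx : c • x ∈ (E'' ⊔ L : Submodule F V) := by
        have h' : c • x = (y + c • x) - y := by abel
        rw [h']
        exact Submodule.sub_mem _ (Submodule.mem_sup_right hvL) (Submodule.mem_sup_left hy)
      have h2 := Submodule.smul_mem _ c⁻¹ hcx
      rwa [smul_smul, inv_mul_cancel₀ hc, one_smul] at h2
  · -- E'' ⊓ f.2 = ⊥
    rw [eq_bot_iff]
    rintro v ⟨hv1, hv2⟩
    have : v ∈ E'' ⊓ P := ⟨hv1, hv2, hE''H hv1⟩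
    rwa [hE''P] at this

end Aux

theorem stmt6 {q : ℕ} [Fintype F] [FiniteDimensional F V]
    (hq : Fintype.card F = q) (hV : Module.finrank F V = 7)
    (H : Submodule F V) (hH : Module.finrank F H = 6) :
    IsIndep (LambdaH H (∅ : Set (Submodule F V))) ∧
    ∀ C : Set (Submodule F V × Submodule F V),
      (IsMaxIndep C ∧ LambdaH H (∅ : Set (Submodule F V)) ⊆ C) ↔
        ∃ E : Set (Submodule F V), MaxPlaneSet H E ∧ C = LambdaH H E := by
  have hmono : ∀ E : Set (Submodule F V),
      LambdaH H (∅ : Set (Submodule F V)) ⊆ LambdaH H E := by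
    intro E g hg
    exact ⟨hg.1, hg.2.imp id (fun h => absurd h (Set.notMem_empty _))⟩
  refine ⟨lambda_indep hV hH (by simp) (by simp), fun C => ⟨?_, ?_⟩⟩
  · -- forward direction
    rintro ⟨⟨hCi, hCmax⟩, hCsub⟩
    set 𝓕 : Set (Submodule F V) := {p | ∃ s, (p, s) ∈ C ∧ ¬ s ≤ H} with h𝓕def
    have hFplanes : ∀ E ∈ 𝓕, finrank F E = 3 ∧ E ≤ H := by
      rintro E ⟨s, hs, hsH⟩
      exact ⟨(hCi.1 _ hs).1, ext_plane_le hV hH hCi hCsub hs hsH⟩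
    have hFint : ∀ E₁ ∈ 𝓕, ∀ E₂ ∈ 𝓕, E₁ ⊓ E₂ ≠ ⊥ := by
      rintro E₁ ⟨s₁, h1, h1H⟩ E₂ ⟨s₂, h2, h2H⟩
      have hE₁H : E₁ ≤ H := ext_plane_le hV hH hCi hCsub h1 h1H
      have hE₂H : E₂ ≤ H := ext_plane_le hV hH hCi hCsub h2 h2H
      by_cases heq : ((E₁, s₁) : Submodule F V × Submodule F V) = (E₂, s₂)
      · have : E₁ = E₂ := congrArg Prod.fst heq
        rw [this, inf_idem]
        exact ne_bot_of_finrank_eq (by omega) (hCi.1 _ h2).1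
      · have hng := hCi.2 _ h1 _ h2 heq
        rcases not_and_or.mp hng with h | h
        · rw [inf_restrict hE₁H (B := s₂),
            flag_inf_eq (E₂, s₂) (hCi.1 _ h2) hE₂H h2H] at h
          exact h
        · rw [inf_restrict hE₂H (B := s₁),
            flag_inf_eq (E₁, s₁) (hCi.1 _ h1) hE₁H h1H] at h
          rw [inf_comm] at h
          exact h
    set 𝒮 : Set (Set (Submodule F V)) :=
      {X | (∀ E₁ ∈ X, finrank F E₁ = 3 ∧ E₁ ≤ H) ∧
        ∀ E₁ ∈ X, ∀ E₂ ∈ X, E₁ ⊓ E₂ ≠ ⊥} with h𝒮def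
    have hchain : ∀ c ⊆ 𝒮, IsChain (fun x1 x2 => x1 ⊆ x2) c → c.Nonempty →
        ∃ ub ∈ 𝒮, ∀ s ∈ c, s ⊆ ub := by
      intro c hcS hc hcne
      refine ⟨⋃₀ c, ⟨?_, ?_⟩, fun s hs => Set.subset_sUnion_of_mem hs⟩
      · rintro E ⟨t, htc, hEt⟩
        exact (hcS htc).1 E hEt
      · rintro E₁ ⟨t₁, ht₁, hE₁⟩ E₂ ⟨t₂, ht₂, hE₂⟩
        rcases eq_or_ne t₁ t₂ with rfl | hne
        · exact (hcS ht₁).2 E₁ hE₁ E₂ hE₂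
        · rcases hc ht₁ ht₂ hne with h | h
          · exact (hcS ht₂).2 E₁ (h hE₁) E₂ hE₂
          · exact (hcS ht₁).2 E₁ hE₁ E₂ (h hE₂)
    obtain ⟨𝓔, h𝓕𝓔, h𝓔M⟩ := zorn_subset_nonempty 𝒮 hchain 𝓕 ⟨hFplanes, hFint⟩
    refine ⟨𝓔, ⟨h𝓔M.prop.1, h𝓔M.prop.2,
      fun E' hE' hsub' => subset_antisymm hsub' (h𝓔M.2 hE' hsub')⟩, ?_⟩
    apply hCmax
    · exact lambda_indep hV hH (fun E₁ hE₁ => (h𝓔M.prop.1 E₁ hE₁).2) h𝓔M.prop.2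
    · intro f hf
      refine ⟨hCi.1 f hf, ?_⟩
      by_cases h : f.2 ≤ H
      · exact Or.inl h
      · exact Or.inr (h𝓕𝓔 ⟨f.2, by rwa [Prod.mk.eta], h⟩)
  · -- backward direction
    rintro ⟨𝓔, ⟨h𝓔p, h𝓔i, h𝓔max⟩, rfl⟩
    refine ⟨⟨lambda_indep hV hH (fun E₁ hE₁ => (h𝓔p E₁ hE₁).2) h𝓔i, ?_⟩, hmono 𝓔⟩
    intro D hD hCD
    apply subset_antisymm hCD
    intro f hf
    have hflag := hD.1 f hf
    by_cases hfH : f.2 ≤ H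
    · exact ⟨hflag, Or.inl hfH⟩
    · have hsub0 : LambdaH H (∅ : Set (Submodule F V)) ⊆ D :=
        subset_trans (hmono 𝓔) hCD
      have hE1H : f.1 ≤ H := ext_plane_le hV hH hD hsub0 hf hfH
      have key : ∀ E' ∈ 𝓔, f.1 ⊓ E' ≠ ⊥ := by
        intro E' hE'
        by_cases heq : f.1 = E'
        · rw [heq, inf_idem]
          exact ne_bot_of_finrank_eq (by omega) (h𝓔p E' hE').1
        · obtain ⟨x, -, hxH⟩ :=
            exists_notMem_of_finrank_lt (le_top : H ≤ ⊤)
              (by rw [hH, finrank_top, hV]; omega)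
          have hE'H := (h𝓔p E' hE').2
          have hE'3 := (h𝓔p E' hE').1
          have hxE' : x ∉ E' := fun h => hxH (hE'H h)
          set S' := E' ⊔ Submodule.span F {x} with hS'def
          have hS'4 : finrank F S' = 4 := by rw [hS'def, finrank_sup_span hxE', hE'3]
          have hgC : ((E', S') : Submodule F V × Submodule F V) ∈ LambdaH H 𝓔 :=
            ⟨⟨hE'3, hS'4, le_sup_left⟩, Or.inr hE'⟩
          have hne : f ≠ (E', S') := fun h => heq (congrArg Prod.fst h)
          rcases not_and_or.mp (hD.2 f hf _ (hCD hgC) hne) with h | h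
          · rwa [show ((E', S') : Submodule F V × Submodule F V).2 = S' from rfl,
              inf_restrict hE1H (B := S'), sup_span_inf_eq hE'H hxH] at h
          · rw [show ((E', S') : Submodule F V × Submodule F V).1 = E' from rfl,
              inf_restrict hE'H (B := f.2), flag_inf_eq f hflag hE1H hfH,
              inf_comm] at h
            exact h
      have hmem : f.1 ∈ 𝓔 := by
        have hEq := h𝓔max (𝓔 ∪ {f.1}) ⟨?_, ?_⟩ Set.subset_union_left
        · rw [hEq]
          exact Set.mem_union_right _ rfl
        · rintro E₁ (h₁ | h₁)
          · exact h𝓔p E₁ h₁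
          · rw [Set.mem_singleton_iff] at h₁
            rw [h₁]
            exact ⟨hflag.1, hE1H⟩
        · rintro E₁ (h₁ | h₁) E₂ (h₂ | h₂)
          · exact h𝓔i E₁ h₁ E₂ h₂
          · rw [Set.mem_singleton_iff] at h₂
            rw [h₂, inf_comm]
            exact key E₁ h₁
          · rw [Set.mem_singleton_iff] at h₁
            rw [h₁]
            exact key E₂ h₂
          · rw [Set.mem_singleton_iff] at h₁ h₂
            rw [h₁, h₂, inf_idem]
            exact ne_bot_of_finrank_eq (by omega) hflag.1
      exact ⟨hflag, Or.inr hmem⟩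
end

section
/- Let K and L be linear subspaces of W with K ∩ L = 0, dim K = a and dim L = b, and let c be a natural number with a ≤ c ≤ N − b. Then the number of c-dimensional linear subspaces D of W with K ⊆ D and D ∩ L = 0 equals q^{b·(c−a)} · ∏_{i=1}^{c−a} (q^{N−a−b+1−i} − 1)/(q^i − 1). -/
open Module Submodule

section core
variable {F V : Type*} [Field F] [Fintype F] [AddCommGroup V] [Module F V]
  [FiniteDimensional F V]

private lemma nat_card_sigma' {ι : Type*} [Fintype ι] (f : ι → Type*) [∀ i, Finite (f i)] :
    Nat.card (Σ i, f i) = ∑ i, Nat.card (f i) := by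
  letI := fun i => Fintype.ofFinite (f i)
  simp [Nat.card_eq_fintype_card]

/-- fibers of the span map are bases of D -/
private def fiberEquiv (L D : Submodule F V) (c : ℕ) (hD : finrank F D = c)
    (hDL : D ⊓ L = ⊥) :
    {f : {f : Fin c → V // LinearIndependent F (L.mkQ ∘ f)} //
        Submodule.span F (Set.range f.1) = D} ≃
      {g : Fin c → D // LinearIndependent F g} where
  toFun := fun ⟨⟨f, hLI⟩, hspan⟩ =>
    ⟨fun i => ⟨f i, hspan ▸ Submodule.subset_span ⟨i, rfl⟩⟩,
      LinearIndependent.of_comp D.subtype (LinearIndependent.of_comp L.mkQ hLI)⟩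
  invFun g := by
    have hf : LinearIndependent F (fun i => ((g.1 i : V))) := g.2.map' D.subtype (ker_subtype D)
    have hspan : Submodule.span F (Set.range fun i => ((g.1 i : V))) = D := by
      refine Submodule.eq_of_le_of_finrank_le ?_ ?_
      · rw [Submodule.span_le]; rintro x ⟨i, rfl⟩; exact (g.1 i).2
      · rw [hD, finrank_span_eq_card hf, Fintype.card_fin]
    refine ⟨⟨fun i => (g.1 i : V), ?_⟩, hspan⟩
    refine hf.map ?_
    rw [hspan, Submodule.ker_mkQ]
    exact disjoint_iff.mpr hDL
  left_inv f := by
    apply Subtype.ext; apply Subtype.ext; funext i; rfl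
  right_inv g := by
    apply Subtype.ext; funext i; rfl

end core

section core2
variable {F V : Type*} [Field F] [Fintype F] [AddCommGroup V] [Module F V]
  [FiniteDimensional F V]

private noncomputable def complEquiv (L C : Submodule F V) (hC : IsCompl L C) (c : ℕ) :
    {f : Fin c → V // LinearIndependent F (L.mkQ ∘ f)} ≃
      (Fin c → L) × {g : Fin c → C // LinearIndependent F g} where
  toFun := fun x => by
    obtain ⟨f, hf⟩ := x
    refine ⟨fun i => Submodule.linearProjOfIsCompl L C hC (f i),
      fun i => Submodule.linearProjOfIsCompl C L hC.symm (f i), ?_⟩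
    have h0 : ∀ y : V, L.mkQ y =
        L.mkQ ((Submodule.linearProjOfIsCompl C L hC.symm y : V)) := by
      intro y
      conv_lhs => rw [← (show ((Submodule.linearProjOfIsCompl L C hC y : V) + (Submodule.linearProjOfIsCompl C L hC.symm y : V)) = y from Submodule.projection_add_projection_eq_self hC y)]
      rw [map_add]
      have h1 : L.mkQ ((Submodule.linearProjOfIsCompl L C hC y : V)) = 0 :=
        (Submodule.Quotient.mk_eq_zero L).mpr (Submodule.coe_mem _)
      rw [h1, zero_add]
    have key : L.mkQ ∘ f = (L.mkQ.comp C.subtype) ∘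
        (fun i => Submodule.linearProjOfIsCompl C L hC.symm (f i)) := by
      funext i; exact h0 (f i)
    exact LinearIndependent.of_comp (L.mkQ.comp C.subtype) (key ▸ hf)
  invFun := fun x => by
    obtain ⟨l, g, hg⟩ := x
    refine ⟨fun i => (l i : V) + (g i : V), ?_⟩
    have hker : LinearMap.ker (L.mkQ.comp C.subtype) = ⊥ := by
      rw [LinearMap.ker_comp, Submodule.ker_mkQ, eq_bot_iff]
      rintro x hx
      have hm : (x : V) ∈ L ⊓ C := ⟨hx, x.2⟩
      rw [disjoint_iff.mp hC.disjoint] at hm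
      exact Subtype.ext hm
    have key : (L.mkQ ∘ fun i => (l i : V) + (g i : V)) = (L.mkQ.comp C.subtype) ∘ g := by
      funext i
      have h1 : L.mkQ ((l i : V)) = 0 := (Submodule.Quotient.mk_eq_zero L).mpr (l i).2
      simp only [Function.comp_apply, map_add, LinearMap.comp_apply, h1, zero_add]
      rfl
    rw [key]
    exact hg.map' (L.mkQ.comp C.subtype) hker
  left_inv := fun ⟨f, hf⟩ => by
    apply Subtype.ext; funext i
    exact Submodule.projection_add_projection_eq_self hC (f i)
  right_inv := fun ⟨l, ⟨g, hg⟩⟩ => by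
    refine Prod.ext ?_ ?_
    · funext i
      show Submodule.projectionOnto L C hC ((l i : V) + (g i : V)) = l i
      rw [map_add, Submodule.projectionOnto_apply_left hC (l i),
        Submodule.projectionOnto_apply_of_mem_right hC (g i).2, add_zero]
    · apply Subtype.ext; funext i
      show Submodule.projectionOnto C L hC.symm ((l i : V) + (g i : V)) = g i
      rw [map_add, Submodule.projectionOnto_apply_left hC.symm (g i),
        Submodule.projectionOnto_apply_of_mem_right hC.symm (l i).2, zero_add]

end core2

section core3
variable {F V : Type*} [Field F] [Fintype F] [AddCommGroup V] [Module F V]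
  [FiniteDimensional F V]

private lemma span_inf_eq_bot {c : ℕ} (L : Submodule F V) {f : Fin c → V}
    (hf : LinearIndependent F (L.mkQ ∘ f)) :
    Submodule.span F (Set.range f) ⊓ L = ⊥ := by
  rw [eq_bot_iff]
  rintro x ⟨hx1, hx2⟩
  obtain ⟨a, rfl⟩ := (mem_span_range_iff_exists_fun F).mp hx1
  have h0 : ∑ i, a i • (L.mkQ ∘ f) i = 0 := by
    have h1 : (∑ i, a i • (L.mkQ ∘ f) i) = L.mkQ (∑ i, a i • f i) := by
      rw [map_sum]; simp
    rw [h1]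
    exact (Submodule.Quotient.mk_eq_zero L).mpr hx2
  have hz := Fintype.linearIndependent_iff.mp hf a h0
  simp only [hz, zero_smul, Finset.sum_const_zero]
  exact Submodule.zero_mem ⊥

private lemma nat_core (L : Submodule F V) {q n b c : ℕ} (hq : Fintype.card F = q)
    (hn : finrank F V = n) (hb : finrank F L = b) (hbc : b + c ≤ n) :
    {D : Submodule F V | finrank F D = c ∧ D ⊓ L = ⊥}.ncard *
      ∏ i ∈ Finset.range c, (q ^ c - q ^ i) =
    q ^ (b * c) * ∏ i ∈ Finset.range c, (q ^ (n - b) - q ^ i) := by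
  classical
  have hFin : Finite V := Module.finite_of_finite F
  set A := {D : Submodule F V | finrank F D = c ∧ D ⊓ L = ⊥} with hA
  letI : Fintype (Submodule F V) := Fintype.ofFinite _
  have hfib : ∀ D : Submodule F V, D ∈ A →
      Nat.card {f : {f : Fin c → V // LinearIndependent F (L.mkQ ∘ f)} //
        Submodule.span F (Set.range f.1) = D} = ∏ i ∈ Finset.range c, (q ^ c - q ^ i) := by
    intro D hD
    rw [Nat.card_congr (fiberEquiv L D c hD.1 hD.2)]
    rw [card_linearIndependent (le_of_eq hD.1.symm)]
    rw [hD.1, hq]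
    exact Fin.prod_univ_eq_prod_range (fun i => q ^ c - q ^ i) c
  have count1 : Nat.card {f : Fin c → V // LinearIndependent F (L.mkQ ∘ f)} =
      A.ncard * ∏ i ∈ Finset.range c, (q ^ c - q ^ i) := by
    rw [← Nat.card_congr (Equiv.sigmaFiberEquiv
      (fun f : {f : Fin c → V // LinearIndependent F (L.mkQ ∘ f)} =>
        Submodule.span F (Set.range f.1)))]
    rw [nat_card_sigma']
    have hz : ∀ D ∈ Finset.univ, D ∉ A.toFinset →
        Nat.card {f : {f : Fin c → V // LinearIndependent F (L.mkQ ∘ f)} //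
          Submodule.span F (Set.range f.1) = D} = 0 := by
      intro D _ hD
      rw [Nat.card_eq_zero]
      left
      constructor
      rintro ⟨⟨f, hf⟩, hsp⟩
      apply hD
      rw [Set.mem_toFinset]
      refine ⟨?_, ?_⟩
      · rw [← hsp, finrank_span_eq_card (LinearIndependent.of_comp L.mkQ hf),
          Fintype.card_fin]
      · rw [← hsp]
        exact span_inf_eq_bot L hf
    rw [← Finset.sum_subset (A.toFinset.subset_univ) hz]
    rw [Finset.sum_congr rfl (fun D hD => hfib D (Set.mem_toFinset.mp hD))]
    rw [Finset.sum_const, smul_eq_mul, Set.ncard_eq_toFinset_card' A]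
  have count2 : Nat.card {f : Fin c → V // LinearIndependent F (L.mkQ ∘ f)} =
      q ^ (b * c) * ∏ i ∈ Finset.range c, (q ^ (n - b) - q ^ i) := by
    obtain ⟨C, hC⟩ := Submodule.exists_isCompl L
    have hCrank : finrank F C = n - b := by
      have h2 := Submodule.finrank_add_eq_of_isCompl hC
      omega
    rw [Nat.card_congr (complEquiv L C hC c), Nat.card_prod]
    haveI : Fintype L := Fintype.ofFinite L
    congr 1
    · rw [Nat.card_eq_fintype_card, Fintype.card_fun,
        card_eq_pow_finrank (K := F) (V := L), hq, hb, Fintype.card_fin, ← pow_mul]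
    · rw [card_linearIndependent (by omega), hCrank, hq]
      exact Fin.prod_univ_eq_prod_range (fun i => q ^ (n - b) - q ^ i) c
  rw [← count1]
  exact count2

end core3

section core4
variable {F V : Type*} [Field F] [Fintype F] [AddCommGroup V] [Module F V]
  [FiniteDimensional F V]

private lemma rat_core (L : Submodule F V) {q n b c : ℕ} (hq : Fintype.card F = q)
    (hn : finrank F V = n) (hb : finrank F L = b) (hbc : b + c ≤ n) :
    ({D : Submodule F V | finrank F D = c ∧ D ⊓ L = ⊥}.ncard : ℚ) =
      (q : ℚ) ^ (b * c) *
        ∏ i ∈ Finset.Icc 1 c, ((q : ℚ) ^ (n - b + 1 - i) - 1) / ((q : ℚ) ^ i - 1) := by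
  have hq2 : 2 ≤ q := by rw [← hq]; exact Fintype.one_lt_card
  have hq1 : (1 : ℚ) < (q : ℚ) := by exact_mod_cast hq2
  have hq0 : (q : ℚ) ≠ 0 := by positivity
  have key := nat_core L hq hn hb hbc
  have c1 : ((∏ i ∈ Finset.range c, (q ^ c - q ^ i) : ℕ) : ℚ) =
      ∏ i ∈ Finset.range c, ((q : ℚ) ^ c - (q : ℚ) ^ i) := by
    rw [Nat.cast_prod]
    refine Finset.prod_congr rfl fun i hi => ?_
    have h : q ^ i ≤ q ^ c := Nat.pow_le_pow_right (by omega)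
      (le_of_lt (Finset.mem_range.mp hi))
    rw [Nat.cast_sub h, Nat.cast_pow, Nat.cast_pow]
  have c2 : ((∏ i ∈ Finset.range c, (q ^ (n - b) - q ^ i) : ℕ) : ℚ) =
      ∏ i ∈ Finset.range c, ((q : ℚ) ^ (n - b) - (q : ℚ) ^ i) := by
    rw [Nat.cast_prod]
    refine Finset.prod_congr rfl fun i hi => ?_
    have h : q ^ i ≤ q ^ (n - b) := Nat.pow_le_pow_right (by omega)
      (by have := Finset.mem_range.mp hi; omega)
    rw [Nat.cast_sub h, Nat.cast_pow, Nat.cast_pow]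
  have keyQ : ({D : Submodule F V | finrank F D = c ∧ D ⊓ L = ⊥}.ncard : ℚ) *
      ∏ i ∈ Finset.range c, ((q : ℚ) ^ c - (q : ℚ) ^ i) =
      (q : ℚ) ^ (b * c) * ∏ i ∈ Finset.range c, ((q : ℚ) ^ (n - b) - (q : ℚ) ^ i) := by
    have hcast := congrArg (fun m : ℕ => (m : ℚ)) key
    simp only [Nat.cast_mul, Nat.cast_pow] at hcast
    rw [c1, c2] at hcast
    exact_mod_cast hcast
  have e1 : ∏ i ∈ Finset.range c, ((q : ℚ) ^ c - (q : ℚ) ^ i) =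
      (∏ i ∈ Finset.range c, (q : ℚ) ^ i) *
        ∏ i ∈ Finset.range c, ((q : ℚ) ^ (c - i) - 1) := by
    rw [← Finset.prod_mul_distrib]
    refine Finset.prod_congr rfl fun i hi => ?_
    have hi' : i ≤ c := le_of_lt (Finset.mem_range.mp hi)
    rw [mul_sub, mul_one, ← pow_add]
    congr 2
    omega
  have e2 : ∏ i ∈ Finset.range c, ((q : ℚ) ^ (n - b) - (q : ℚ) ^ i) =
      (∏ i ∈ Finset.range c, (q : ℚ) ^ i) *
        ∏ i ∈ Finset.range c, ((q : ℚ) ^ (n - b - i) - 1) := by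
    rw [← Finset.prod_mul_distrib]
    refine Finset.prod_congr rfl fun i hi => ?_
    have hi' : i ≤ n - b := by have := Finset.mem_range.mp hi; omega
    rw [mul_sub, mul_one, ← pow_add]
    congr 2
    omega
  have hP : (∏ i ∈ Finset.range c, (q : ℚ) ^ i) ≠ 0 :=
    Finset.prod_ne_zero_iff.mpr fun i _ => pow_ne_zero _ hq0
  have key2 : ({D : Submodule F V | finrank F D = c ∧ D ⊓ L = ⊥}.ncard : ℚ) *
      ∏ i ∈ Finset.range c, ((q : ℚ) ^ (c - i) - 1) =
      (q : ℚ) ^ (b * c) * ∏ i ∈ Finset.range c, ((q : ℚ) ^ (n - b - i) - 1) := by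
    apply mul_right_cancel₀ hP
    rw [e1, e2] at keyQ
    ring_nf
    ring_nf at keyQ
    linarith [keyQ]
  have hX1 : ∏ i ∈ Finset.range c, ((q : ℚ) ^ (c - i) - 1) =
      ∏ i ∈ Finset.Icc 1 c, ((q : ℚ) ^ i - 1) := by
    refine Finset.prod_nbij' (fun i => c - i) (fun j => c - j) ?_ ?_ ?_ ?_ ?_
    · intro i hi; have := Finset.mem_range.mp hi; rw [Finset.mem_Icc]; omega
    · intro j hj; rw [Finset.mem_Icc] at hj; rw [Finset.mem_range]; omega
    · intro i hi; have := Finset.mem_range.mp hi; omega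
    · intro j hj; rw [Finset.mem_Icc] at hj; omega
    · intro i hi; rfl
  have hX2 : ∏ i ∈ Finset.range c, ((q : ℚ) ^ (n - b - i) - 1) =
      ∏ i ∈ Finset.Icc 1 c, ((q : ℚ) ^ (n - b + 1 - i) - 1) := by
    refine Finset.prod_nbij' (fun i => i + 1) (fun j => j - 1) ?_ ?_ ?_ ?_ ?_
    · intro i hi; have := Finset.mem_range.mp hi; rw [Finset.mem_Icc]; omega
    · intro j hj; rw [Finset.mem_Icc] at hj; rw [Finset.mem_range]; omega
    · intro i hi; omega
    · intro j hj; rw [Finset.mem_Icc] at hj; omega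
    · intro i hi
      have := Finset.mem_range.mp hi
      congr 2
      omega
  rw [hX1, hX2] at key2
  have hden : (∏ i ∈ Finset.Icc 1 c, ((q : ℚ) ^ i - 1)) ≠ 0 := by
    refine Finset.prod_ne_zero_iff.mpr fun i hi => ?_
    rw [Finset.mem_Icc] at hi
    have : (1 : ℚ) < (q : ℚ) ^ i := one_lt_pow₀ hq1 (by omega)
    exact sub_ne_zero.mpr (ne_of_gt this)
  rw [Finset.prod_div_distrib, ← mul_div_assoc, eq_div_iff hden]
  exact key2

end core4

private lemma finrank_map_mkQ {F W : Type*} [Field F] [AddCommGroup W] [Module F W]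
    [FiniteDimensional F W] (K D : Submodule F W) (h : K ≤ D) :
    finrank F (D.map K.mkQ) + finrank F K = finrank F D := by
  have h1 := LinearMap.finrank_range_add_finrank_ker (K.mkQ.comp D.subtype)
  rw [LinearMap.range_comp, Submodule.range_subtype, LinearMap.ker_comp,
    Submodule.ker_mkQ] at h1
  rw [← h1]
  congr 1
  exact (Submodule.comapSubtypeEquivOfLe h).finrank_eq.symm

theorem stmt11 {F W : Type*} [Field F] [Fintype F] [AddCommGroup W] [Module F W]
    [FiniteDimensional F W] {q N a b c : ℕ}
    (hq : Fintype.card F = q) (hN : 0 < N) (hW : Module.finrank F W = N)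
    (K L : Submodule F W) (hKL : K ⊓ L = ⊥)
    (hK : Module.finrank F K = a) (hL : Module.finrank F L = b)
    (hac : a ≤ c) (hcb : c ≤ N - b) :
    ({D : Submodule F W | Module.finrank F D = c ∧ K ≤ D ∧ D ⊓ L = ⊥}.ncard : ℚ) =
      (q : ℚ) ^ (b * (c - a)) *
        ∏ i ∈ Finset.Icc 1 (c - a),
          ((q : ℚ) ^ (N - a - b + 1 - i) - 1) / ((q : ℚ) ^ i - 1) := by
  classical
  have haN : a ≤ N := by rw [← hW, ← hK]; exact Submodule.finrank_le K
  have hbN : b ≤ N := by rw [← hW, ← hL]; exact Submodule.finrank_le L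
  have hbc : b + c ≤ N := by omega
  set L' : Submodule F (W ⧸ K) := L.map K.mkQ with hL'
  have hnQ : finrank F (W ⧸ K) = N - a := by
    have h1 := Submodule.finrank_quotient_add_finrank K
    rw [hW, hK] at h1; omega
  have hbQ : finrank F L' = b := by
    have hinj : Function.Injective (K.mkQ.comp L.subtype) := by
      rw [← LinearMap.ker_eq_bot, LinearMap.ker_comp, Submodule.ker_mkQ, eq_bot_iff]
      rintro x hx
      have hm : (x : W) ∈ K ⊓ L := ⟨hx, x.2⟩
      rw [hKL] at hm
      exact Subtype.ext hm
    have h2 := LinearMap.finrank_range_of_inj hinj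
    rw [LinearMap.range_comp, Submodule.range_subtype] at h2
    rw [hL', h2, hL]
  have hmapcomap : ∀ D' : Submodule F (W ⧸ K),
      Submodule.map K.mkQ (Submodule.comap K.mkQ D') = D' :=
    fun D' => Submodule.map_comap_eq_of_surjective (Submodule.mkQ_surjective K) D'
  have hKle : ∀ D' : Submodule F (W ⧸ K), K ≤ Submodule.comap K.mkQ D' := by
    intro D' x hx
    show K.mkQ x ∈ D'
    have h0 : K.mkQ x = 0 := (Submodule.Quotient.mk_eq_zero K).mpr hx
    rw [h0]; exact Submodule.zero_mem D'
  have himg : {D : Submodule F W | finrank F D = c ∧ K ≤ D ∧ D ⊓ L = ⊥} =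
      (Submodule.comap K.mkQ) ''
        {D' : Submodule F (W ⧸ K) | finrank F D' = c - a ∧ D' ⊓ L' = ⊥} := by
    ext D
    constructor
    · rintro ⟨hd1, hKD, hDL⟩
      refine ⟨D.map K.mkQ, ⟨?_, ?_⟩, ?_⟩
      · have h3 := finrank_map_mkQ K D hKD
        rw [hK, hd1] at h3
        omega
      · rw [eq_bot_iff]
        rintro y ⟨hy1, hy2⟩
        obtain ⟨d, hd, rfl⟩ := hy1
        obtain ⟨l, hl, hdl⟩ := hy2
        have hdlK : l - d ∈ K := by
          rw [← Submodule.Quotient.eq K]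
          simpa using hdl
        have hlD : l ∈ D := by
          have he : d + (l - d) = l := by abel
          rw [← he]
          exact Submodule.add_mem D hd (hKD hdlK)
        have hbot : l ∈ D ⊓ L := ⟨hlD, hl⟩
        rw [hDL, Submodule.mem_bot] at hbot
        rw [Submodule.mem_bot, ← hdl, hbot, map_zero]
      · rw [Submodule.comap_map_eq, Submodule.ker_mkQ, sup_eq_left.mpr hKD]
    · rintro ⟨D', ⟨hd1, hd2⟩, rfl⟩
      have h3 := finrank_map_mkQ K (Submodule.comap K.mkQ D') (hKle D')
      rw [hmapcomap D', hK, hd1] at h3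
      refine ⟨by omega, hKle D', ?_⟩
      rw [eq_bot_iff]
      rintro x ⟨hx1, hx2⟩
      have h4 : K.mkQ x ∈ D' ⊓ L' := ⟨hx1, Submodule.mem_map_of_mem hx2⟩
      rw [hd2, Submodule.mem_bot] at h4
      have h5 : x ∈ K := (Submodule.Quotient.mk_eq_zero K).mp h4
      have h6 : x ∈ K ⊓ L := ⟨h5, hx2⟩
      rw [hKL] at h6
      exact h6
  have hinjOn : Set.InjOn (Submodule.comap K.mkQ)
      {D' : Submodule F (W ⧸ K) | finrank F D' = c - a ∧ D' ⊓ L' = ⊥} := by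
    intro x _ y _ h
    have := congrArg (Submodule.map K.mkQ) h
    rwa [hmapcomap, hmapcomap] at this
  rw [himg, Set.ncard_image_of_injOn hinjOn]
  exact rat_core L' hq hnQ hbQ (by omega)
end

section
/- Let n ≥ 5 and let 𝓔 be a set of 3-dimensional linear subspaces of W such that dim(E ∩ E') = 2 for any two distinct E, E' ∈ 𝓔 (in projective terms: any two distinct planes of 𝓔 meet in a line). Then |𝓔| ≤ (q^{n−1} − 1)/(q − 1) = 1 + q + q^2 + ⋯ + q^{n−2}. -/
open Module Submodule

lemma geom_nat {q : ℕ} (hq : 1 ≤ q) (d : ℕ) :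
    (q - 1) * ∑ i ∈ Finset.range d, q ^ i = q ^ d - 1 := by
  induction d with
  | zero => simp
  | succ d ih =>
    rw [Finset.sum_range_succ, Nat.mul_add, ih, pow_succ]
    have h1 : 1 ≤ q ^ d := Nat.one_le_pow _ _ hq
    have h2 : (q - 1) * q ^ d = q ^ d * q - q ^ d := by
      rw [Nat.sub_mul, one_mul, mul_comm]
    have h3 : q ^ d ≤ q ^ d * q := Nat.le_mul_of_pos_right _ (by omega)
    rw [h2]
    omega

lemma line_count {F V : Type*} [Field F] [Fintype F] [AddCommGroup V] [Module F V]
    [FiniteDimensional F V] {q : ℕ} (hq : Fintype.card F = q) :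
    {p : Submodule F V | finrank F p = 1}.ncard ≤ ∑ i ∈ Finset.range (finrank F V), q ^ i := by
  classical
  have hFV : Finite V := Module.finite_of_finite F
  have : Fintype V := Fintype.ofFinite V
  have hq2 : 2 ≤ q := hq ▸ Fintype.one_lt_card
  have hfinS : Finite (Submodule F V) :=
    Finite.of_injective (fun p => (p : Set V)) SetLike.coe_injective
  have hfin : {p : Submodule F V | finrank F p = 1}.Finite := Set.toFinite _
  set PF := hfin.toFinset with hPF
  set D : Submodule F V → Finset V := fun p => ((p : Set V).toFinset.erase 0) with hD
  have hcard : ∀ p ∈ PF, (D p).card = q - 1 := by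
    intro p hp
    have hp1 : finrank F p = 1 := by simpa [hPF] using hp
    have hc : Fintype.card p = q := by
      rw [card_eq_pow_finrank (K := F) (V := p), hp1, pow_one, hq]
    have h0 : (0:V) ∈ (p : Set V).toFinset := by simp
    rw [hD, Finset.card_erase_of_mem h0, Set.toFinset_card]
    simp only [SetLike.coe_sort_coe]
    omega
  have hdisj : ∀ p ∈ PF, ∀ p' ∈ PF, p ≠ p' → Disjoint (D p) (D p') := by
    intro p hp p' hp' hne
    simp only [hPF, Set.Finite.mem_toFinset, Set.mem_setOf_eq] at hp hp'
    rw [Finset.disjoint_left]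
    intro v hv hv'
    simp only [hD, Finset.mem_erase, Set.mem_toFinset, SetLike.mem_coe] at hv hv'
    have h1 : span F {v} ≤ p := by rw [span_singleton_le_iff_mem]; exact hv.2
    have h2 : span F {v} ≤ p' := by rw [span_singleton_le_iff_mem]; exact hv'.2
    have e1 : span F {v} = p :=
      eq_of_le_of_finrank_le h1 (by rw [hp, finrank_span_singleton hv.1])
    have e2 : span F {v} = p' :=
      eq_of_le_of_finrank_le h2 (by rw [hp', finrank_span_singleton hv'.1])
    exact hne (e1.symm.trans e2)
  have hsum : PF.card * (q - 1) = (PF.biUnion D).card := by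
    rw [Finset.card_biUnion hdisj, Finset.sum_congr rfl hcard, Finset.sum_const, smul_eq_mul]
  have hsub : PF.biUnion D ⊆ Finset.univ.erase 0 := by
    intro v hv
    simp only [Finset.mem_biUnion, hD, Finset.mem_erase, Set.mem_toFinset] at hv
    obtain ⟨p, _, hv0, _⟩ := hv
    simp [hv0]
  have hle : PF.card * (q - 1) ≤ q ^ finrank F V - 1 := by
    rw [hsum]
    calc (PF.biUnion D).card ≤ (Finset.univ.erase (0:V)).card := Finset.card_le_card hsub
      _ = Fintype.card V - 1 := by
          rw [Finset.card_erase_of_mem (Finset.mem_univ _), Finset.card_univ]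
      _ = q ^ finrank F V - 1 := by rw [card_eq_pow_finrank (K := F), hq]
  rw [Set.ncard_eq_toFinset_card _ hfin]
  have hgeom := geom_nat (by omega : 1 ≤ q) (finrank F V)
  have hpos : 0 < q - 1 := by omega
  have : (q - 1) * PF.card ≤ (q - 1) * ∑ i ∈ Finset.range (finrank F V), q ^ i := by
    rw [hgeom, mul_comm]; exact hle
  exact Nat.le_of_mul_le_mul_left this hpos

open Module Submodule

theorem stmt12 {F W : Type*} [Field F] [Fintype F] [AddCommGroup W] [Module F W]
    [FiniteDimensional F W] {q n : ℕ}
    (hq : Fintype.card F = q) (hn : 5 ≤ n) (hW : Module.finrank F W = n + 1)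
    (E : Set (Submodule F W))
    (hplanes : ∀ E₁ ∈ E, Module.finrank F E₁ = 3)
    (hmeet : ∀ E₁ ∈ E, ∀ E₂ ∈ E, E₁ ≠ E₂ → Module.finrank F ↥(E₁ ⊓ E₂) = 2) :
    E.ncard ≤ ∑ i ∈ Finset.range (n - 1), q ^ i := by
  classical
  have hq2 : 2 ≤ q := hq ▸ Fintype.one_lt_card
  have hone : 1 ≤ ∑ i ∈ Finset.range (n - 1), q ^ i := by
    have h0 : (0:ℕ) ∈ Finset.range (n-1) := by simp; omega
    calc 1 = q ^ 0 := (pow_zero q).symm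
      _ ≤ _ := Finset.single_le_sum (fun i _ => Nat.zero_le _) h0
  have hfinW : Finite W := Module.finite_of_finite F
  have hfinS : Finite (Submodule F W) :=
    Finite.of_injective (fun p => (p : Set W)) SetLike.coe_injective
  have hEfin : E.Finite := Set.toFinite _
  by_cases hsmall : E.ncard ≤ 1
  · exact hsmall.trans hone
  push_neg at hsmall
  obtain ⟨E₁, E₂, hE₁, hE₂, hne12⟩ := (Set.one_lt_ncard_iff hEfin).mp hsmall
  set L := E₁ ⊓ E₂ with hLdef
  set S := E₁ ⊔ E₂ with hSdef
  have hL2 : finrank F L = 2 := hmeet E₁ hE₁ E₂ hE₂ hne12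
  have hS4 : finrank F S = 4 := by
    have := Submodule.finrank_sup_add_finrank_inf_eq E₁ E₂
    rw [hplanes E₁ hE₁, hplanes E₂ hE₂, ← hLdef, hL2, ← hSdef] at this
    omega
  by_cases hcase : ∀ A ∈ E, L ≤ A
  · -- common line case
    set f : Submodule F W → Submodule F (W ⧸ L) := fun A => A.map L.mkQ with hf
    have hinj : Set.InjOn f E := by
      intro A hA B hB hAB
      simp only [hf] at hAB
      have : comap L.mkQ (map L.mkQ A) = comap L.mkQ (map L.mkQ B) := by rw [hAB]
      rw [comap_map_mkQ, comap_map_mkQ, sup_eq_right.mpr (hcase A hA),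
        sup_eq_right.mpr (hcase B hB)] at this
      exact this
    have hrank1 : ∀ A ∈ E, finrank F (f A) = 1 := by
      intro A hA
      set g : A →ₗ[F] W ⧸ L := L.mkQ.comp A.subtype with hg
      have hrange : LinearMap.range g = f A := by
        rw [hg, LinearMap.range_comp, range_subtype]
      have hker : LinearMap.ker g = comap A.subtype L := by
        rw [hg, LinearMap.ker_comp, ker_mkQ]
      have hkerrank : finrank F (LinearMap.ker g) = 2 := by
        rw [hker, ← Submodule.finrank_map_subtype_eq, Submodule.map_comap_subtype,
          inf_eq_right.mpr (hcase A hA), hL2]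
      have := g.finrank_range_add_finrank_ker
      rw [hrange, hkerrank, hplanes A hA] at this
      omega
    have himg : f '' E ⊆ {p : Submodule F (W ⧸ L) | finrank F p = 1} := by
      rintro _ ⟨A, hA, rfl⟩
      exact hrank1 A hA
    have hfinT :  ({p : Submodule F (W ⧸ L) | finrank F p = 1}).Finite := by
      have : Finite (W ⧸ L) := Quotient.finite _
      have : Finite (Submodule F (W ⧸ L)) :=
        Finite.of_injective (fun p => (p : Set (W ⧸ L))) SetLike.coe_injective
      exact Set.toFinite _
    have hQrank : finrank F (W ⧸ L) = n - 1 := by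
      have := L.finrank_quotient_add_finrank
      rw [hL2, hW] at this
      omega
    calc E.ncard = (f '' E).ncard := (Set.ncard_image_of_injOn hinj).symm
      _ ≤ ({p : Submodule F (W ⧸ L) | finrank F p = 1}).ncard :=
          Set.ncard_le_ncard himg hfinT
      _ ≤ ∑ i ∈ Finset.range (finrank F (W ⧸ L)), q ^ i := line_count hq
      _ = ∑ i ∈ Finset.range (n - 1), q ^ i := by rw [hQrank]
  · push_neg at hcase
    obtain ⟨E₃, hE₃, hnle⟩ := hcase
    -- key lemma: a plane containing two distinct lines is their sup
    have key : ∀ A : Submodule F W, finrank F A = 3 → ∀ M₁ M₂ : Submodule F W,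
        M₁ ≤ A → M₂ ≤ A → finrank F M₁ = 2 → finrank F M₂ = 2 → M₁ ≠ M₂ → A = M₁ ⊔ M₂ := by
      intro A hA3 M₁ M₂ h1 h2 d1 d2 hnem
      have hsup_le : M₁ ⊔ M₂ ≤ A := sup_le h1 h2
      have hinf_lt : finrank F (M₁ ⊓ M₂ : Submodule F W) < 2 := by
        by_contra h
        push_neg at h
        have he : M₁ ⊓ M₂ = M₁ := eq_of_le_of_finrank_le inf_le_left (by omega)
        have hle' : M₁ ≤ M₂ := he ▸ inf_le_right
        exact hnem (eq_of_le_of_finrank_le hle' (by omega))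
      have hsum := Submodule.finrank_sup_add_finrank_inf_eq M₁ M₂
      rw [d1, d2] at hsum
      exact (eq_of_le_of_finrank_le hsup_le (by omega)).symm
    have subl : ∀ A ∈ E, ¬ L ≤ A → A ≤ S := by
      intro A hA hnleA
      have hA1 : A ≠ E₁ := by rintro rfl; exact hnleA inf_le_left
      have hA2 : A ≠ E₂ := by rintro rfl; exact hnleA inf_le_right
      have d1 : finrank F (A ⊓ E₁ : Submodule F W) = 2 := hmeet A hA E₁ hE₁ hA1
      have d2 : finrank F (A ⊓ E₂ : Submodule F W) = 2 := hmeet A hA E₂ hE₂ hA2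
      have hnem : A ⊓ E₁ ≠ A ⊓ E₂ := by
        intro h
        have hle2 : A ⊓ E₁ ≤ E₂ := by rw [h]; exact inf_le_right
        have hle : A ⊓ E₁ ≤ L := le_inf inf_le_right hle2
        have heq : A ⊓ E₁ = L := eq_of_le_of_finrank_le hle (by rw [hL2, d1])
        have : L ≤ A := by rw [← heq]; exact inf_le_left
        exact hnleA this
      have := key A (hplanes A hA) (A ⊓ E₁) (A ⊓ E₂) inf_le_left inf_le_left d1 d2 hnem
      rw [this]
      exact sup_le (le_trans inf_le_right le_sup_left) (le_trans inf_le_right le_sup_right)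
    have hallS : ∀ A ∈ E, A ≤ S := by
      intro A hA
      by_cases hc : L ≤ A
      · by_cases hA3 : A = E₃
        · exact absurd (hA3 ▸ hc) hnle
        have hM : finrank F (A ⊓ E₃ : Submodule F W) = 2 := hmeet A hA E₃ hE₃ hA3
        have hnem : L ≠ A ⊓ E₃ := by
          intro h
          have : L ≤ E₃ := by rw [h]; exact inf_le_right
          exact hnle this
        have := key A (hplanes A hA) L (A ⊓ E₃) hc inf_le_left hL2 hM hnem
        rw [this]
        exact sup_le (le_trans inf_le_left le_sup_left)
          (le_trans inf_le_right (subl E₃ hE₃ hnle))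
      · exact subl A hA hc
    -- now inject into lines of the dual of S
    set g : Submodule F W → Submodule F (Module.Dual F S) :=
      fun A => (A.comap S.subtype).dualAnnihilator with hg
    have hcomap_rank : ∀ A ∈ E, finrank F (A.comap S.subtype) = 3 := by
      intro A hA
      rw [← Submodule.finrank_map_subtype_eq, Submodule.map_comap_subtype,
        inf_eq_right.mpr (hallS A hA)]
      exact hplanes A hA
    have hinj : Set.InjOn g E := by
      intro A hA B hB hAB
      simp only [hg] at hAB
      have h1 : A.comap S.subtype = B.comap S.subtype :=
        Subspace.dualAnnihilator_inj.mp hAB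
      have : map S.subtype (A.comap S.subtype) = map S.subtype (B.comap S.subtype) := by
        rw [h1]
      rwa [Submodule.map_comap_subtype, Submodule.map_comap_subtype,
        inf_eq_right.mpr (hallS A hA), inf_eq_right.mpr (hallS B hB)] at this
    have hrank1 : ∀ A ∈ E, finrank F (g A) = 1 := by
      intro A hA
      have hequiv : finrank F (↥S ⧸ (A.comap S.subtype)) =
          finrank F (A.comap S.subtype).dualAnnihilator :=
        LinearEquiv.finrank_eq (Subspace.quotEquivAnnihilator _)
      have hquot := (A.comap S.subtype).finrank_quotient_add_finrank
      rw [hcomap_rank A hA, hS4] at hquot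
      rw [hg]
      simp only
      omega
    have hfinT : ({p : Submodule F (Module.Dual F S) | finrank F p = 1}).Finite := by
      have : Finite S := Subtype.finite
      have : Finite (Module.Dual F S) := Finite.of_injective
        (fun φ => (φ : S → F)) (fun a b h => LinearMap.ext fun x => congrFun h x)
      have : Finite (Submodule F (Module.Dual F S)) :=
        Finite.of_injective (fun p => (p : Set (Module.Dual F S))) SetLike.coe_injective
      exact Set.toFinite _
    have hdual : finrank F (Module.Dual F S) = 4 := by
      rw [Subspace.dual_finrank_eq, hS4]
    calc E.ncard = (g '' E).ncard := (Set.ncard_image_of_injOn hinj).symm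
      _ ≤ ({p : Submodule F (Module.Dual F S) | finrank F p = 1}).ncard := by
          refine Set.ncard_le_ncard ?_ hfinT
          rintro _ ⟨A, hA, rfl⟩
          exact hrank1 A hA
      _ ≤ ∑ i ∈ Finset.range (finrank F (Module.Dual F S)), q ^ i := line_count hq
      _ ≤ ∑ i ∈ Finset.range (n - 1), q ^ i := by
          rw [hdual]
          exact Finset.sum_le_sum_of_subset (Finset.range_subset_range.mpr (by omega))
end

section
/- Let C be an independent set of plane-solid flags of PG(6,q), let ξ be a natural number such that every solid of PG(6,q) occurs in at most ξ flags of C, and let (E,S) ∈ C. Then the number of flags (E',S') ∈ C with E' ∩ E = 0 and S' ∩ E ≠ 0 is at most (q^8 + 2q^7 + 4q^6 + 5q^5 + 6q^4 + 5q^3 + 4q^2 + 2q + 1)·ξ. -/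
variable {F V : Type*} [Field F] [AddCommGroup V] [Module F V]

section AuxAll
open Module Polynomial

section Transitivity
variable {F W : Type*} [Field F] [AddCommGroup W] [Module F W] [FiniteDimensional F W]

lemma exists_linearEquiv_map_eq (A B : Submodule F W) (h : finrank F A = finrank F B) :
    ∃ g : W ≃ₗ[F] W, Submodule.map (g : W →ₗ[F] W) A = B := by
  obtain ⟨A', hA⟩ := Submodule.exists_isCompl A
  obtain ⟨B', hB⟩ := Submodule.exists_isCompl B
  have hd1 := Submodule.finrank_add_eq_of_isCompl hA
  have hd2 := Submodule.finrank_add_eq_of_isCompl hB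
  have h2 : finrank F A' = finrank F B' := by omega
  let e1 : (A : Submodule F W) ≃ₗ[F] B := LinearEquiv.ofFinrankEq _ _ h
  let e2 : (A' : Submodule F W) ≃ₗ[F] B' := LinearEquiv.ofFinrankEq _ _ h2
  let g : W ≃ₗ[F] W := ((Submodule.prodEquivOfIsCompl A A' hA).symm.trans
    (e1.prodCongr e2)).trans (Submodule.prodEquivOfIsCompl B B' hB)
  have hle : Submodule.map (g : W →ₗ[F] W) A ≤ B := by
    rintro y ⟨x, hx, rfl⟩
    replace hx : x ∈ A := hx
    have h1 : (Submodule.prodEquivOfIsCompl A A' hA).symm x = (⟨x, hx⟩, 0) :=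
      Submodule.prodEquivOfIsCompl_symm_apply_left A A' hA ⟨x, hx⟩
    have : (g : W →ₗ[F] W) x = (e1 ⟨x, hx⟩ : W) + (e2 0 : W) := by
      simp only [g, LinearEquiv.coe_coe, LinearEquiv.trans_apply, h1]
      rw [Submodule.coe_prodEquivOfIsCompl']
      rfl
    rw [this]
    simp only [map_zero, Submodule.coe_zero, add_zero]
    exact (e1 ⟨x, hx⟩).2
  refine ⟨g, Submodule.eq_of_le_of_finrank_eq hle ?_⟩
  rw [LinearEquiv.finrank_map_eq]
  exact h
end Transitivity

section Counting
variable {F W : Type*} [Field F] [Fintype F] [AddCommGroup W] [Module F W]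
  [FiniteDimensional F W]

attribute [local instance] Fintype.ofFinite

lemma grass_count (k : ℕ) (hk : k ≤ finrank F W) :
    Nat.card {A : Submodule F W // finrank F ↥A = k} *
      ∏ i : Fin k, (Fintype.card F ^ k - Fintype.card F ^ (i : ℕ)) =
      ∏ i : Fin k, (Fintype.card F ^ finrank F W - Fintype.card F ^ (i : ℕ)) := by
  classical
  haveI : Finite W := Module.finite_of_finite F
  rw [← card_linearIndependent (K := F) (V := W) hk]
  set LI := {s : Fin k → W // LinearIndependent F s} with hLI
  have hspan : ∀ s : LI, finrank F ↥(Submodule.span F (Set.range s.1)) = k := by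
    intro s
    rw [finrank_span_eq_card s.2, Fintype.card_fin]
  set f : LI → {A : Submodule F W // finrank F ↥A = k} :=
    fun s => ⟨Submodule.span F (Set.range s.1), hspan s⟩ with hf
  have fibEquiv : ∀ A : {A : Submodule F W // finrank F ↥A = k},
      {s : LI // f s = A} ≃ {t : Fin k → ↥A.1 // LinearIndependent F t} := by
    intro A
    have hmem : ∀ s : {s : LI // f s = A}, ∀ i, s.1.1 i ∈ A.1 := by
      intro s i
      have h1 : Submodule.span F (Set.range s.1.1) = A.1 := congrArg Subtype.val s.2
      exact h1 ▸ Submodule.subset_span (Set.mem_range_self i)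
    refine ⟨fun s => ⟨fun i => ⟨s.1.1 i, hmem s i⟩, ?_⟩,
      fun t => ⟨⟨A.1.subtype ∘ t.1, t.2.map' A.1.subtype (Submodule.ker_subtype A.1)⟩, ?_⟩,
      ?_, ?_⟩
    · refine LinearIndependent.of_comp A.1.subtype ?_
      have : A.1.subtype ∘ (fun i => (⟨s.1.1 i, hmem s i⟩ : ↥A.1)) = s.1.1 := rfl
      rw [this]; exact s.1.2
    · apply Subtype.ext
      show Submodule.span F (Set.range (A.1.subtype ∘ t.1)) = A.1
      apply Submodule.eq_of_le_of_finrank_eq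
      · rw [Submodule.span_le]
        rintro x ⟨i, rfl⟩
        exact (t.1 i).2
      · rw [finrank_span_eq_card (t.2.map' A.1.subtype (Submodule.ker_subtype A.1)),
          Fintype.card_fin, A.2]
    · intro s; apply Subtype.ext; apply Subtype.ext; rfl
    · intro t; apply Subtype.ext; funext i; apply Subtype.ext; rfl
  have hfib : ∀ A : {A : Submodule F W // finrank F ↥A = k},
      Fintype.card {s : LI // f s = A} =
        ∏ i : Fin k, (Fintype.card F ^ k - Fintype.card F ^ (i : ℕ)) := by
    intro A
    rw [← Nat.card_eq_fintype_card, Nat.card_congr (fibEquiv A),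
      card_linearIndependent (K := F) (V := ↥A.1) (le_of_eq A.2.symm), A.2]
  rw [← Nat.card_congr (Equiv.sigmaFiberEquiv f)]
  conv_rhs => rw [Nat.card_eq_fintype_card, Fintype.card_sigma]
  simp only [hfib]
  rw [Finset.sum_const, Finset.card_univ, smul_eq_mul, Nat.card_eq_fintype_card]
end Counting

section EKRCore
variable {F W : Type*} [Field F] [Fintype F] [AddCommGroup W] [Module F W]
  [FiniteDimensional F W]

attribute [local instance] Fintype.ofFinite

lemma map_ltrans (e f : W ≃ₗ[F] W) (p : Submodule F W) :
    Submodule.map ((e.trans f : W ≃ₗ[F] W) : W →ₗ[F] W) p =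
      Submodule.map (f : W →ₗ[F] W) (Submodule.map (e : W →ₗ[F] W) p) := by
  rw [← Submodule.map_comp]; rfl


lemma transporter_card_eq (B A B' A' : Submodule F W)
    (h1 : finrank F ↥B' = finrank F ↥B) (h2 : finrank F ↥A = finrank F ↥A') :
    Nat.card {g : W ≃ₗ[F] W // Submodule.map (g : W →ₗ[F] W) B = A} =
      Nat.card {g : W ≃ₗ[F] W // Submodule.map (g : W →ₗ[F] W) B' = A'} := by
  obtain ⟨σ, hσ⟩ := exists_linearEquiv_map_eq B' B h1
  obtain ⟨τ, hτ⟩ := exists_linearEquiv_map_eq A A' h2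
  apply Nat.card_congr
  have hmap : ∀ g : W ≃ₗ[F] W, Submodule.map (g : W →ₗ[F] W) B = A →
      Submodule.map (((σ.trans g).trans τ : W ≃ₗ[F] W) : W →ₗ[F] W) B' = A' := by
    intro g hg
    rw [map_ltrans, map_ltrans, hσ, hg, hτ]
  have hmap' : ∀ g : W ≃ₗ[F] W, Submodule.map (g : W →ₗ[F] W) B' = A' →
      Submodule.map (((σ.symm.trans g).trans τ.symm : W ≃ₗ[F] W) : W →ₗ[F] W) B = A := by
    intro g hg
    have hσ' : Submodule.map (σ.symm : W →ₗ[F] W) B = B' := by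
      rw [← hσ, ← map_ltrans, LinearEquiv.self_trans_symm]
      simp [Submodule.map_id]
    have hτ' : Submodule.map (τ.symm : W →ₗ[F] W) A' = A := by
      rw [← hτ, ← map_ltrans, LinearEquiv.self_trans_symm]
      simp [Submodule.map_id]
    rw [map_ltrans, map_ltrans, hσ', hg, hτ']
  refine ⟨fun g => ⟨(σ.trans g.1).trans τ, hmap g.1 g.2⟩,
    fun g => ⟨(σ.symm.trans g.1).trans τ.symm, hmap' g.1 g.2⟩, ?_, ?_⟩
  · intro g; apply Subtype.ext
    apply LinearEquiv.toLinearMap_injective; ext x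
    simp [LinearEquiv.trans_apply]
  · intro g; apply Subtype.ext
    apply LinearEquiv.toLinearMap_injective; ext x
    simp [LinearEquiv.trans_apply]

lemma ekr_count (h6 : 0 < finrank F W)
    (𝓕 : Finset (Submodule F W)) {d : ℕ} (hd : 0 < d) (hdim : ∀ A ∈ 𝓕, finrank F ↥A = d)
    (hint : ∀ A ∈ 𝓕, ∀ B ∈ 𝓕, A ⊓ B ≠ ⊥)
    (ι : Type) [Fintype ι] [Nonempty ι] (Sp : ι → Submodule F W)
    (hSp : ∀ i, finrank F ↥(Sp i) = d)
    (hdisj : ∀ i j, i ≠ j → Sp i ⊓ Sp j = ⊥) :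
    𝓕.card * Fintype.card ι ≤ Nat.card {A : Submodule F W // finrank F ↥A = d} := by
  classical
  haveI : Finite W := Module.finite_of_finite F
  haveI : Finite (W ≃ₗ[F] W) :=
    Finite.of_injective (fun g : W ≃ₗ[F] W => (g : W → W)) DFunLike.coe_injective
  set B0 : Submodule F W := Sp (Classical.arbitrary ι) with hB0
  have hB0d : finrank F ↥B0 = d := hSp _
  set c : ℕ := Nat.card {g : W ≃ₗ[F] W // Submodule.map (g : W →ₗ[F] W) B0 = B0} with hc
  have hcpos : 0 < c := by
    rw [hc]
    have : Nonempty {g : W ≃ₗ[F] W // Submodule.map (g : W →ₗ[F] W) B0 = B0} :=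
      ⟨⟨LinearEquiv.refl F W, by simp [Submodule.map_id]⟩⟩
    exact Nat.card_pos
  -- |G| = cardGr * c
  set Gr := {A : Submodule F W // finrank F ↥A = d} with hGr
  have hmapdim : ∀ (g : W ≃ₗ[F] W) (B : Submodule F W),
      finrank F ↥(Submodule.map (g : W →ₗ[F] W) B) = finrank F ↥B :=
    fun g B => LinearEquiv.finrank_map_eq g B
  set fG : (W ≃ₗ[F] W) → Gr := fun g => ⟨Submodule.map (g : W →ₗ[F] W) B0,
    by rw [hmapdim, hB0d]⟩ with hfG
  have hG : Nat.card (W ≃ₗ[F] W) = Nat.card Gr * c := by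
    rw [← Nat.card_congr (Equiv.sigmaFiberEquiv fG)]
    conv_lhs => rw [Nat.card_eq_fintype_card, Fintype.card_sigma]
    have : ∀ A : Gr, Fintype.card {g : W ≃ₗ[F] W // fG g = A} = c := by
      intro A
      rw [← Nat.card_eq_fintype_card,
        Nat.card_congr (Equiv.subtypeEquivRight (q := fun g : W ≃ₗ[F] W =>
          Submodule.map (g : W →ₗ[F] W) B0 = A.1)
          (fun g => ⟨fun h => congrArg Subtype.val h, fun h => Subtype.ext h⟩))]
      exact transporter_card_eq B0 A.1 B0 B0 rfl (by rw [A.2, hB0d])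
    simp only [this]
    rw [Finset.sum_const, Finset.card_univ, smul_eq_mul, Nat.card_eq_fintype_card]
  -- the incidence set
  set P := {x : ι × {A : Submodule F W // A ∈ 𝓕} × (W ≃ₗ[F] W) //
    Submodule.map (x.2.2 : W →ₗ[F] W) (Sp x.1) = x.2.1.1} with hP
  have hPcard : Nat.card P = Fintype.card ι * (𝓕.card * c) := by
    have e : P ≃ (i : ι) × (A : {A : Submodule F W // A ∈ 𝓕}) ×
        {g : W ≃ₗ[F] W // Submodule.map (g : W →ₗ[F] W) (Sp i) = A.1} := by
      refine ⟨fun x => ⟨x.1.1, x.1.2.1, ⟨x.1.2.2, x.2⟩⟩,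
        fun y => ⟨(y.1, y.2.1, y.2.2.1), y.2.2.2⟩, fun x => rfl, fun y => rfl⟩
    rw [Nat.card_congr e, Nat.card_eq_fintype_card, Fintype.card_sigma]
    have : ∀ i : ι, Fintype.card ((A : {A : Submodule F W // A ∈ 𝓕}) ×
        {g : W ≃ₗ[F] W // Submodule.map (g : W →ₗ[F] W) (Sp i) = A.1}) = 𝓕.card * c := by
      intro i
      rw [Fintype.card_sigma]
      have : ∀ A : {A : Submodule F W // A ∈ 𝓕},
          Fintype.card {g : W ≃ₗ[F] W // Submodule.map (g : W →ₗ[F] W) (Sp i) = A.1} = c := by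
        intro A
        rw [← Nat.card_eq_fintype_card]
        exact transporter_card_eq (Sp i) A.1 B0 B0 (by rw [hB0d, hSp]) (by rw [hB0d, hdim A.1 A.2])
      simp only [this]
      rw [Finset.sum_const, Finset.card_univ, smul_eq_mul,
        ← Nat.card_eq_fintype_card, Nat.card_eq_finsetCard]
    simp only [this]
    rw [Finset.sum_const, Finset.card_univ, smul_eq_mul]
  -- injection P → G
  have hinj : Function.Injective (fun x : P => x.1.2.2) := by
    rintro ⟨⟨i, A, g⟩, hx⟩ ⟨⟨j, B, g'⟩, hy⟩ h
    simp only at h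
    subst h
    have hx' : Submodule.map (g : W →ₗ[F] W) (Sp i) = A.1 := hx
    have hy' : Submodule.map (g : W →ₗ[F] W) (Sp j) = B.1 := hy
    have hij : i = j := by
      by_contra hne
      have h1 : A.1 ⊓ B.1 = ⊥ := by
        rw [← hx', ← hy', ← Submodule.map_inf (g : W →ₗ[F] W) g.injective,
          hdisj i j hne, Submodule.map_bot]
      exact hint A.1 A.2 B.1 B.2 h1
    subst hij
    have hAB : A = B := Subtype.ext (by rw [← hx', ← hy'])
    subst hAB
    rfl
  have hle : Nat.card P ≤ Nat.card (W ≃ₗ[F] W) := by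
    rw [Nat.card_eq_fintype_card, Nat.card_eq_fintype_card]
    exact Fintype.card_le_of_injective _ hinj
  rw [hPcard, hG] at hle
  have := Nat.le_of_mul_le_mul_right (by
    calc 𝓕.card * Fintype.card ι * c = Fintype.card ι * (𝓕.card * c) := by ring
    _ ≤ Nat.card Gr * c := hle) hcpos
  exact this
end EKRCore

section Spread
variable {F W : Type*} [Field F] [Fintype F] [AddCommGroup W] [Module F W]
  [FiniteDimensional F W]

lemma exists_spread (h6 : finrank F W = 6) :
    ∃ (ι : Type) (_ : Finite ι) (Sp : ι → Submodule F W),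
      Nonempty ι ∧ Nat.card ι = Fintype.card F ^ 3 + 1 ∧
      (∀ i, finrank F ↥(Sp i) = 3) ∧ ∀ i j, i ≠ j → Sp i ⊓ Sp j = ⊥ := by
  classical
  set p := ringChar F with hpdef
  haveI : CharP F p := ringChar.charP F
  obtain ⟨m, hp, hq⟩ := FiniteField.card F p
  haveI : Fact p.Prime := ⟨hp⟩
  set n := 3 * (m : ℕ) with hn
  have hm1 : 1 ≤ (m : ℕ) := m.2
  have hn0 : n ≠ 0 := by positivity
  set K := GaloisField p n with hK
  -- divisibility of Galois polynomials
  have key : ∀ a : ℕ, 1 ≤ a → (X : (ZMod p)[X]) ^ a - X = X * (X ^ (a - 1) - 1) := by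
    intro a ha
    rw [mul_sub, mul_one, ← pow_succ', Nat.sub_add_cancel ha]
  have hpm1 : 1 ≤ p ^ (m : ℕ) := Nat.one_le_pow _ _ hp.pos
  have hpn1 : 1 ≤ p ^ n := Nat.one_le_pow _ _ hp.pos
  have hdvd : (X ^ p ^ (m : ℕ) - X : (ZMod p)[X]) ∣ (X ^ p ^ n - X) := by
    rw [key _ hpm1, key _ hpn1]
    apply mul_dvd_mul_left
    obtain ⟨t, ht⟩ : p ^ (m : ℕ) - 1 ∣ p ^ n - 1 := by
      have h := Nat.sub_dvd_pow_sub_pow (p ^ (m : ℕ)) 1 3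
      rwa [one_pow, ← pow_mul, mul_comm (m : ℕ) 3, ← hn] at h
    rw [ht, pow_mul]
    have h := sub_dvd_pow_sub_pow ((X : (ZMod p)[X]) ^ (p ^ (m : ℕ) - 1)) 1 t
    rwa [one_pow] at h
  have hne : (X ^ p ^ n - X : (ZMod p)[X]) ≠ 0 :=
    FiniteField.X_pow_card_pow_sub_X_ne_zero _ hn0 hp.one_lt
  have hsplit : Splits ((X ^ p ^ (m : ℕ) - X : (ZMod p)[X]).map (algebraMap (ZMod p) K)) :=
    (SplittingField.splits (X ^ p ^ n - X : (ZMod p)[X])).of_dvd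
      (Polynomial.map_ne_zero hne) (Polynomial.map_dvd _ hdvd)
  haveI : Algebra (ZMod p) F := ZMod.algebra F p
  haveI hsf : IsSplittingField (ZMod p) F (X ^ p ^ (m : ℕ) - X) := by
    have h := FiniteField.isSplittingField_sub F (ZMod p)
    rwa [hq] at h
  let emb : F →ₐ[ZMod p] K := IsSplittingField.lift F (X ^ p ^ (m : ℕ) - X) hsplit
  letI : Algebra F K := emb.toRingHom.toAlgebra
  haveI : Finite K := inferInstance
  haveI : Fintype K := Fintype.ofFinite K
  haveI : FiniteDimensional F K := Module.Finite.of_finite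
  have hcardK : Fintype.card K = Fintype.card F ^ 3 := by
    rw [← Nat.card_eq_fintype_card, GaloisField.card p n hn0, hq, ← pow_mul, mul_comm (m : ℕ) 3,
      ← hn]
  have hrank : finrank F K = 3 := by
    have h := card_eq_pow_finrank (K := F) (V := K)
    rw [hcardK] at h
    exact (Nat.pow_right_injective Fintype.one_lt_card h).symm
  -- Y = K × K
  have hY : finrank F (K × K) = 6 := by
    rw [Module.finrank_prod, hrank]
  let e : (K × K) ≃ₗ[F] W := LinearEquiv.ofFinrankEq _ _ (by rw [hY, h6])
  -- the K-lines
  let L : Option K → Submodule K (K × K) := fun o =>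
    match o with
    | none => Submodule.span K {((0 : K), (1 : K))}
    | some a => Submodule.span K {((1 : K), a)}
  have hLvec : ∀ o : Option K, ∃ v : K × K, v ≠ 0 ∧ L o = Submodule.span K {v} := by
    rintro (_ | a)
    · exact ⟨(0, 1), by simp [Prod.ext_iff], rfl⟩
    · exact ⟨(1, a), by simp [Prod.ext_iff], rfl⟩
  have hLdim : ∀ o, finrank K ↥(L o) = 1 := by
    intro o
    obtain ⟨v, hv, hvo⟩ := hLvec o
    rw [hvo]
    exact finrank_span_singleton hv
  have hLdisj : ∀ o o', o ≠ o' → L o ⊓ L o' = ⊥ := by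
    have haux : ∀ a b : K, a ≠ b → L (some a) ⊓ L (some b) = ⊥ := by
      intro a b hab
      rw [eq_bot_iff]
      rintro x ⟨hx1, hx2⟩
      obtain ⟨c, hc⟩ := Submodule.mem_span_singleton.mp hx1
      obtain ⟨d, hd⟩ := Submodule.mem_span_singleton.mp hx2
      have h := hc.trans hd.symm
      rw [Prod.ext_iff] at h
      simp only [Prod.smul_mk, smul_eq_mul, mul_one, Prod.fst, Prod.snd] at h
      obtain ⟨h1, h2⟩ := h
      subst h1
      have hc0 : c = 0 := by
        by_contra h0
        exact hab (mul_left_cancel₀ h0 h2)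
      simp [Submodule.mem_bot, ← hc, hc0]
    have haux2 : ∀ a : K, L (some a) ⊓ L none = ⊥ := by
      intro a
      rw [eq_bot_iff]
      rintro x ⟨hx1, hx2⟩
      obtain ⟨c, hc⟩ := Submodule.mem_span_singleton.mp hx1
      obtain ⟨d, hd⟩ := Submodule.mem_span_singleton.mp hx2
      have h := hc.trans hd.symm
      rw [Prod.ext_iff] at h
      simp only [Prod.smul_mk, smul_eq_mul, mul_one, mul_zero, Prod.fst, Prod.snd] at h
      obtain ⟨h1, h2⟩ := h
      simp [Submodule.mem_bot, ← hc, h1]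
    rintro (_ | a) (_ | b) hne
    · exact absurd rfl hne
    · rw [inf_comm]; exact haux2 b
    · exact haux2 a
    · exact haux a b (by rintro rfl; exact hne rfl)
  -- pass to F-submodules of W
  have hrsinf : ∀ P Q : Submodule K (K × K),
      (P.restrictScalars F) ⊓ (Q.restrictScalars F) = (P ⊓ Q).restrictScalars F := by
    intro P Q
    ext x
    simp [Submodule.restrictScalars_mem, Submodule.mem_inf]
  have hrsrank : ∀ o, finrank F ↥((L o).restrictScalars F) = 3 := by
    intro o
    haveI : Module.Finite K ↥((L o).restrictScalars F) := Module.Finite.of_finite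
    have h1 : finrank F K * finrank K ↥((L o).restrictScalars F) =
        finrank F ↥((L o).restrictScalars F) := Module.finrank_mul_finrank F K _
    have h2 : finrank K ↥((L o).restrictScalars F) = finrank K ↥(L o) :=
      (Submodule.restrictScalarsEquiv F K _ (L o)).finrank_eq
    rw [h2, hLdim o, mul_one, hrank] at h1
    exact h1.symm
  refine ⟨Option K, inferInstance,
    fun o => Submodule.map (e : (K × K) →ₗ[F] W) ((L o).restrictScalars F), ⟨none⟩, ?_, ?_, ?_⟩
  · rw [Nat.card_eq_fintype_card, Fintype.card_option, hcardK]
  · intro o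
    rw [LinearEquiv.finrank_map_eq]
    exact hrsrank o
  · intro i j hne
    rw [← Submodule.map_inf (e : (K × K) →ₗ[F] W) e.injective, hrsinf, hLdisj i j hne,
      Submodule.restrictScalars_bot, Submodule.map_bot]
end Spread

section Aux0
lemma nat_poly_id {q : ℕ} (h2 : 2 ≤ q) :
    (q ^ 6 - 1) * (q ^ 6 - q) * (q ^ 6 - q ^ 2) =
      (q ^ 3 + 1) * ((q ^ 6 + q ^ 5 + 2 * q ^ 4 + 2 * q ^ 3 + 2 * q ^ 2 + q + 1) *
        ((q ^ 3 - 1) * (q ^ 3 - q) * (q ^ 3 - q ^ 2))) := by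
  have h1 : 1 ≤ q := by omega
  have e0 : 1 ≤ q ^ 3 := Nat.one_le_pow _ _ (by omega)
  have e1 : q ≤ q ^ 3 := by calc q = q ^ 1 := (pow_one q).symm
                                 _ ≤ q ^ 3 := Nat.pow_le_pow_right h1 (by omega)
  have e2 : q ^ 2 ≤ q ^ 3 := Nat.pow_le_pow_right h1 (by omega)
  have f0 : 1 ≤ q ^ 6 := Nat.one_le_pow _ _ (by omega)
  have f1 : q ≤ q ^ 6 := by calc q = q ^ 1 := (pow_one q).symm
                                 _ ≤ q ^ 6 := Nat.pow_le_pow_right h1 (by omega)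
  have f2 : q ^ 2 ≤ q ^ 6 := Nat.pow_le_pow_right h1 (by omega)
  zify [e0, e1, e2, f0, f1, f2]
  ring

lemma nat_poly_id2 {q : ℕ} (h2 : 2 ≤ q) :
    q ^ 3 - 1 = (q ^ 2 + q + 1) * (q - 1) := by
  have h1 : 1 ≤ q := by omega
  have e0 : 1 ≤ q ^ 3 := Nat.one_le_pow _ _ (by omega)
  zify [e0, h1]
  ring
end Aux0


section Final
variable {F W : Type*} [Field F] [Fintype F] [AddCommGroup W] [Module F W]
  [FiniteDimensional F W]

lemma ekr_bound (h6 : finrank F W = 6) (𝓕 : Finset (Submodule F W))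
    (hdim : ∀ A ∈ 𝓕, finrank F ↥A = 3) (hint : ∀ A ∈ 𝓕, ∀ B ∈ 𝓕, A ⊓ B ≠ ⊥) :
    𝓕.card ≤ Fintype.card F ^ 6 + Fintype.card F ^ 5 + 2 * Fintype.card F ^ 4 +
      2 * Fintype.card F ^ 3 + 2 * Fintype.card F ^ 2 + Fintype.card F + 1 := by
  classical
  set q := Fintype.card F with hqdef
  have hq2 : 2 ≤ q := Fintype.one_lt_card
  obtain ⟨ι, hfin, Sp, hne, hcard, hdims, hdisj⟩ := exists_spread h6
  haveI := hfin
  haveI : Fintype ι := Fintype.ofFinite ι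
  haveI : Nonempty ι := hne
  have hcount := ekr_count (by rw [h6]; omega) 𝓕 (by omega) hdim hint ι Sp hdims hdisj
  rw [← Nat.card_eq_fintype_card, hcard] at hcount
  have hgr := grass_count (F := F) (W := W) 3 (by rw [h6]; omega)
  rw [h6] at hgr
  have hp3 : ∏ i : Fin 3, (q ^ 3 - q ^ (i : ℕ)) = (q ^ 3 - 1) * (q ^ 3 - q) * (q ^ 3 - q ^ 2) := by
    simp [Fin.prod_univ_three]
  have hp6 : ∏ i : Fin 3, (q ^ 6 - q ^ (i : ℕ)) = (q ^ 6 - 1) * (q ^ 6 - q) * (q ^ 6 - q ^ 2) := by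
    simp [Fin.prod_univ_three]
  rw [hp3, hp6, nat_poly_id hq2] at hgr
  set M := q ^ 6 + q ^ 5 + 2 * q ^ 4 + 2 * q ^ 3 + 2 * q ^ 2 + q + 1 with hM
  set bases := (q ^ 3 - 1) * (q ^ 3 - q) * (q ^ 3 - q ^ 2) with hbases
  have hbpos : 0 < bases := by
    have h1 : 0 < q ^ 3 - 1 := by
      have : 1 < q ^ 3 := by calc 1 < q := hq2
                                  _ ≤ q ^ 3 := Nat.le_self_pow (by omega) q
      omega
    have h2 : 0 < q ^ 3 - q := by
      have : q < q ^ 3 := by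
        calc q = q ^ 1 := (pow_one q).symm
        _ < q ^ 3 := Nat.pow_lt_pow_right hq2 (by omega)
      omega
    have h3 : 0 < q ^ 3 - q ^ 2 := by
      have : q ^ 2 < q ^ 3 := Nat.pow_lt_pow_right hq2 (by omega)
      omega
    positivity
  have hchain : 𝓕.card * ((q ^ 3 + 1) * bases) ≤ M * ((q ^ 3 + 1) * bases) := by
    calc 𝓕.card * ((q ^ 3 + 1) * bases) = 𝓕.card * (q ^ 3 + 1) * bases := by ring
    _ ≤ Nat.card {A : Submodule F W // finrank F ↥A = 3} * bases :=
        Nat.mul_le_mul_right bases hcount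
    _ = (q ^ 3 + 1) * (M * bases) := hgr
    _ = M * ((q ^ 3 + 1) * bases) := by ring
  have hpos : 0 < (q ^ 3 + 1) * bases := by positivity
  exact Nat.le_of_mul_le_mul_right (by
    calc 𝓕.card * ((q ^ 3 + 1) * bases) ≤ M * ((q ^ 3 + 1) * bases) := hchain
    ) hpos |>.trans_eq rfl

lemma count_points (h3 : finrank F W = 3) :
    Nat.card {A : Submodule F W // finrank F ↥A = 1} =
      Fintype.card F ^ 2 + Fintype.card F + 1 := by
  classical
  set q := Fintype.card F with hqdef
  have hq2 : 2 ≤ q := Fintype.one_lt_card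
  have hgr := grass_count (F := F) (W := W) 1 (by rw [h3]; omega)
  rw [h3] at hgr
  have hp1 : ∏ i : Fin 1, (q ^ 1 - q ^ (i : ℕ)) = q - 1 := by simp [Fin.prod_univ_one]
  have hp3 : ∏ i : Fin 1, (q ^ 3 - q ^ (i : ℕ)) = q ^ 3 - 1 := by simp [Fin.prod_univ_one]
  rw [hp1, hp3, nat_poly_id2 hq2] at hgr
  exact Nat.eq_of_mul_eq_mul_right (by omega) hgr
end Final
section FiberBound
variable [Fintype F] [FiniteDimensional F V]

lemma fiber_bound (hV : Module.finrank F V = 7)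
    (C : Set (Submodule F V × Submodule F V)) (hC : IsIndep C)
    (E : Submodule F V)
    (P : Submodule F V) (hP1 : finrank F ↥P = 1) (hPE : P ≤ E)
    (𝓖 : Finset (Submodule F V))
    (h𝓖 : ∀ S' ∈ 𝓖, S' ⊓ E = P ∧ ∃ g, g ∈ C ∧ g.2 = S' ∧ g.1 ⊓ E = ⊥) :
    𝓖.card ≤ Fintype.card F ^ 6 + Fintype.card F ^ 5 + 2 * Fintype.card F ^ 4 +
      2 * Fintype.card F ^ 3 + 2 * Fintype.card F ^ 2 + Fintype.card F + 1 := by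
  classical
  have hQ6 : finrank F (V ⧸ P) = 6 := by
    have h := Submodule.finrank_quotient_add_finrank P
    omega
  have hPle : ∀ S' ∈ 𝓖, P ≤ S' := fun S' h => (h𝓖 S' h).1 ▸ inf_le_left
  have hrank4 : ∀ S' ∈ 𝓖, finrank F ↥S' = 4 := by
    intro S' h
    obtain ⟨g, hgC, hg2, _⟩ := (h𝓖 S' h).2
    have := (hC.1 g hgC).2.1
    rwa [hg2] at this
  have hcomap : ∀ S' ∈ 𝓖, Submodule.comap P.mkQ (Submodule.map P.mkQ S') = S' := by
    intro S' h
    rw [Submodule.comap_map_eq, Submodule.ker_mkQ]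
    exact sup_eq_left.mpr (hPle S' h)
  set 𝓗 := 𝓖.image (fun S' => Submodule.map P.mkQ S') with h𝓗
  have hinj : Set.InjOn (fun S' => Submodule.map P.mkQ S') ↑𝓖 := by
    intro S' hS' S'' hS'' h
    simp only at h
    rw [← hcomap S' hS', ← hcomap S'' hS'', h]
  have hcard : 𝓗.card = 𝓖.card := Finset.card_image_of_injOn hinj
  have hdim3 : ∀ S' ∈ 𝓖, finrank F ↥(Submodule.map P.mkQ S') = 3 := by
    intro S' h
    set f : ↥S' →ₗ[F] V ⧸ P := P.mkQ ∘ₗ S'.subtype with hf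
    have hrange : LinearMap.range f = Submodule.map P.mkQ S' := by
      rw [hf, LinearMap.range_comp, Submodule.range_subtype]
    have hker : LinearMap.ker f = Submodule.comap S'.subtype P := by
      rw [hf, LinearMap.ker_comp, Submodule.ker_mkQ]
    have hrn := LinearMap.finrank_range_add_finrank_ker f
    rw [hrange, hker, (Submodule.comapSubtypeEquivOfLe (hPle S' h)).finrank_eq, hP1,
      hrank4 S' h] at hrn
    omega
  have hint : ∀ A ∈ 𝓗, ∀ B ∈ 𝓗, A ⊓ B ≠ ⊥ := by
    intro A hA B hB
    obtain ⟨S', hS', rfl⟩ := Finset.mem_image.mp hA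
    obtain ⟨S'', hS'', rfl⟩ := Finset.mem_image.mp hB
    by_cases heq : Submodule.map P.mkQ S' = Submodule.map P.mkQ S''
    · rw [heq, inf_idem]
      intro hbot
      have := hdim3 S'' hS''
      rw [hbot, finrank_bot] at this
      omega
    · have hSne : S' ≠ S'' := fun h => heq (by rw [h])
      obtain ⟨hPS', g, hgC, hg2, hg1E⟩ := h𝓖 S' hS'
      obtain ⟨hPS'', g', hg'C, hg'2, hg'1E⟩ := h𝓖 S'' hS''
      have hgne : g ≠ g' := fun h => hSne (by rw [← hg2, ← hg'2, h])
      have hngp := hC.2 g hgC g' hg'C hgne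
      rw [GenPos, not_and_or] at hngp
      have hflag := hC.1 g hgC
      have hflag' := hC.1 g' hg'C
      -- in either case we get a vector v ∈ S' ⊓ S'' with v ∉ P
      have hv : ∃ v : V, v ∈ S' ∧ v ∈ S'' ∧ v ∉ P := by
        rcases hngp with h1 | h2
        · obtain ⟨v, hv, hv0⟩ := Submodule.ne_bot_iff _ |>.mp h1
          have hv1 : v ∈ g.1 := hv.1
          refine ⟨v, hg2 ▸ hflag.2.2 hv1, hg'2 ▸ hv.2, fun hvP => hv0 ?_⟩
          have : v ∈ g.1 ⊓ E := ⟨hv1, hPE hvP⟩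
          rwa [hg1E, Submodule.mem_bot] at this
        · obtain ⟨v, hv, hv0⟩ := Submodule.ne_bot_iff _ |>.mp h2
          have hv1 : v ∈ g'.1 := hv.1
          refine ⟨v, hg2 ▸ hv.2, hg'2 ▸ hflag'.2.2 hv1, fun hvP => hv0 ?_⟩
          have : v ∈ g'.1 ⊓ E := ⟨hv1, hPE hvP⟩
          rwa [hg'1E, Submodule.mem_bot] at this
      obtain ⟨v, hvS', hvS'', hvP⟩ := hv
      rw [Submodule.ne_bot_iff]
      refine ⟨P.mkQ v, ⟨Submodule.mem_map_of_mem hvS', Submodule.mem_map_of_mem hvS''⟩, ?_⟩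
      rw [Submodule.mkQ_apply, ne_eq, Submodule.Quotient.mk_eq_zero]
      exact hvP
  calc 𝓖.card = 𝓗.card := hcard.symm
    _ ≤ _ := ekr_bound hQ6 𝓗 (fun A hA => by
        obtain ⟨S', hS', rfl⟩ := Finset.mem_image.mp hA
        exact hdim3 S' hS') hint
end FiberBound

end AuxAll

open Module in
theorem stmt14 {q : ℕ} [Fintype F] [FiniteDimensional F V]
    (hq : Fintype.card F = q) (hV : Module.finrank F V = 7)
    (C : Set (Submodule F V × Submodule F V)) (hC : IsIndep C) (ξ : ℕ)
    (hsolid : ∀ S : Submodule F V, {f ∈ C | f.2 = S}.ncard ≤ ξ)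
    (E S : Submodule F V) (hES : (E, S) ∈ C) :
    {g ∈ C | g.1 ⊓ E = ⊥ ∧ g.2 ⊓ E ≠ ⊥}.ncard ≤
      (q ^ 8 + 2 * q ^ 7 + 4 * q ^ 6 + 5 * q ^ 5 + 6 * q ^ 4 + 5 * q ^ 3 +
        4 * q ^ 2 + 2 * q + 1) * ξ := by
  classical
  haveI : Finite V := Module.finite_of_finite F
  have hq2 : 2 ≤ q := hq ▸ Fintype.one_lt_card
  set M := q ^ 6 + q ^ 5 + 2 * q ^ 4 + 2 * q ^ 3 + 2 * q ^ 2 + q + 1 with hM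
  set X := {g ∈ C | g.1 ⊓ E = ⊥ ∧ g.2 ⊓ E ≠ ⊥} with hX
  have hXfin : X.Finite := Set.toFinite _
  rw [Set.ncard_eq_toFinset_card _ hXfin]
  set Xf := hXfin.toFinset with hXf
  set Tf := Xf.image Prod.snd with hTf
  -- Step 1 : group by solids
  have hstep1 : Xf.card ≤ Tf.card * ξ := by
    rw [Finset.card_eq_sum_card_fiberwise
      (fun x hx => Finset.mem_image_of_mem Prod.snd hx)]
    calc ∑ S' ∈ Tf, (Xf.filter (fun g => g.2 = S')).card ≤ ∑ _S' ∈ Tf, ξ := by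
          apply Finset.sum_le_sum
          intro S' _
          have hsub : ↑(Xf.filter (fun g => g.2 = S')) ⊆ {f ∈ C | f.2 = S'} := by
            intro g hg
            simp only [Finset.coe_filter, Set.mem_setOf_eq] at hg
            obtain ⟨hg1, hg2⟩ := hg
            have hgX : g ∈ X := (hXfin.mem_toFinset).mp hg1
            exact ⟨hgX.1, hg2⟩
          calc (Xf.filter (fun g => g.2 = S')).card
              = (↑(Xf.filter (fun g => g.2 = S')) : Set _).ncard :=
                (Set.ncard_coe_finset _).symm
            _ ≤ {f ∈ C | f.2 = S'}.ncard := Set.ncard_le_ncard hsub (Set.toFinite _)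
            _ ≤ ξ := hsolid S'
        _ = Tf.card * ξ := by rw [Finset.sum_const, smul_eq_mul]
  -- basic facts
  have hflagES := hC.1 (E, S) hES
  have hE3 : finrank F ↥E = 3 := hflagES.1
  have hwit : ∀ S' ∈ Tf, ∃ g, g ∈ C ∧ g.2 = S' ∧ g.1 ⊓ E = ⊥ ∧ S' ⊓ E ≠ ⊥ := by
    intro S' hS'
    obtain ⟨g, hg, rfl⟩ := Finset.mem_image.mp hS'
    have hgX : g ∈ X := (hXfin.mem_toFinset).mp hg
    exact ⟨g, hgX.1, rfl, hgX.2.1, hgX.2.2⟩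
  have hPdim : ∀ S' ∈ Tf, finrank F ↥(S' ⊓ E) = 1 := by
    intro S' hS'
    obtain ⟨g, hgC, hg2, hg1E, hSE⟩ := hwit S' hS'
    have hflag := hC.1 g hgC
    have hge1 : 1 ≤ finrank F ↥(S' ⊓ E) := by
      rcases Nat.eq_zero_or_pos (finrank F ↥(S' ⊓ E)) with h0 | h
      · exact absurd (Submodule.finrank_eq_zero.mp h0) hSE
      · omega
    have hle1 : finrank F ↥(S' ⊓ E) ≤ 1 := by
      have hinf : g.1 ⊓ (S' ⊓ E) = ⊥ := by
        rw [eq_bot_iff, ← hg1E]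
        exact inf_le_inf_left g.1 inf_le_right
      have hsup := Submodule.finrank_sup_add_finrank_inf_eq g.1 (S' ⊓ E)
      rw [hinf, finrank_bot, add_zero, hflag.1] at hsup
      have hle : g.1 ⊔ (S' ⊓ E) ≤ S' := sup_le (hg2 ▸ hflag.2.2) inf_le_left
      have h4 : finrank F ↥S' = 4 := by rw [← hg2]; exact hflag.2.1
      have := Submodule.finrank_mono hle
      omega
    omega
  -- the point set
  haveI : Finite (Submodule F ↥E) := inferInstance
  haveI : Fintype {A : Submodule F ↥E // finrank F ↥A = 1} := Fintype.ofFinite _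
  set Pts := (Finset.univ : Finset {A : Submodule F ↥E // finrank F ↥A = 1}).image
    (fun A => Submodule.map E.subtype A.1) with hPts
  have hPtscard : Pts.card ≤ q ^ 2 + q + 1 := by
    calc Pts.card ≤ (Finset.univ : Finset {A : Submodule F ↥E // finrank F ↥A = 1}).card :=
          Finset.card_image_le
      _ = Nat.card {A : Submodule F ↥E // finrank F ↥A = 1} := by
          rw [Finset.card_univ, Nat.card_eq_fintype_card]
      _ = q ^ 2 + q + 1 := by rw [count_points hE3, hq]
  have hmemPts : ∀ S' ∈ Tf, S' ⊓ E ∈ Pts := by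
    intro S' hS'
    have hd1 := hPdim S' hS'
    have hdE : S' ⊓ E ≤ E := inf_le_right
    refine Finset.mem_image.mpr ⟨⟨Submodule.comap E.subtype (S' ⊓ E), ?_⟩,
      Finset.mem_univ _, ?_⟩
    · rw [(Submodule.comapSubtypeEquivOfLe hdE).finrank_eq]
      exact hd1
    · show Submodule.map E.subtype (Submodule.comap E.subtype (S' ⊓ E)) = S' ⊓ E
      rw [Submodule.map_comap_eq, Submodule.range_subtype]
      exact inf_eq_right.mpr hdE
  -- properties of members of Pts
  have hPtsprop : ∀ P ∈ Pts, finrank F ↥P = 1 ∧ P ≤ E := by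
    intro P hP
    obtain ⟨A, _, rfl⟩ := Finset.mem_image.mp hP
    constructor
    · rw [Submodule.finrank_map_subtype_eq]
      exact A.2
    · exact Submodule.map_subtype_le E A.1
  -- Step 2
  have hstep2 : Tf.card ≤ (q ^ 2 + q + 1) * M := by
    rw [Finset.card_eq_sum_card_fiberwise hmemPts]
    calc ∑ P ∈ Pts, (Tf.filter (fun S' => S' ⊓ E = P)).card ≤ ∑ _P ∈ Pts, M := by
          apply Finset.sum_le_sum
          intro P hP
          obtain ⟨hP1, hPE⟩ := hPtsprop P hP
          have hbd := fiber_bound hV C hC E P hP1 hPE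
            (Tf.filter (fun S' => S' ⊓ E = P)) (by
              intro S' hS'
              rw [Finset.mem_filter] at hS'
              obtain ⟨hS'Tf, hS'P⟩ := hS'
              obtain ⟨g, hgC, hg2, hg1E, _⟩ := hwit S' hS'Tf
              exact ⟨hS'P, g, hgC, hg2, hg1E⟩)
          rw [hq] at hbd
          exact hbd
        _ = Pts.card * M := by rw [Finset.sum_const, smul_eq_mul]
        _ ≤ (q ^ 2 + q + 1) * M := Nat.mul_le_mul_right M hPtscard
  calc Xf.card ≤ Tf.card * ξ := hstep1
    _ ≤ ((q ^ 2 + q + 1) * M) * ξ := Nat.mul_le_mul_right ξ hstep2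
    _ = (q ^ 8 + 2 * q ^ 7 + 4 * q ^ 6 + 5 * q ^ 5 + 6 * q ^ 4 + 5 * q ^ 3 +
        4 * q ^ 2 + 2 * q + 1) * ξ := by rw [hM]; ring
end

section
/- Let P₁ and P₂ be distinct points of PG(6,q) and let E₁, E₂, E₃ be planes such that for all distinct i, j ∈ {1,2,3} one has Eᵢ ∩ Eⱼ = P₁ and P₂ ⊄ Eᵢ + Eⱼ. Then the number of solids S with P₂ ⊆ S and S ∩ Eᵢ ≠ 0 for all i ∈ {1,2,3} is at most 3q^6 + 6q^5 + 7q^4 + 4q^3 + 2q^2 + q + 1. -/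
variable {F V : Type*} [Field F] [AddCommGroup V] [Module F V]

open Module Submodule Set


section counting
variable {α β : Type*}

lemma lemB (s : Set α) (hs : s.Finite) (t : Set β) (ht : t.Finite) (f : α → β) (k : ℕ)
    (hmem : ∀ a ∈ s, f a ∈ t) (hf : ∀ b ∈ t, (s ∩ f ⁻¹' {b}).ncard ≤ k) :
    s.ncard ≤ t.ncard * k := by
  classical
  rw [Set.ncard_eq_toFinset_card _ hs, Set.ncard_eq_toFinset_card _ ht]
  rw [Finset.card_eq_sum_card_fiberwise (f := f) (t := ht.toFinset)
    (fun x hx => ht.mem_toFinset.mpr (hmem x (hs.mem_toFinset.mp hx)))]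
  calc ∑ b ∈ ht.toFinset, (hs.toFinset.filter (fun a => f a = b)).card
      ≤ ∑ _b ∈ ht.toFinset, k := by
        refine Finset.sum_le_sum fun b hb => ?_
        have hb' := ht.mem_toFinset.mp hb
        refine le_trans (le_of_eq ?_) (hf b hb')
        rw [Set.ncard_eq_toFinset_card (s ∩ f ⁻¹' {b}) (hs.inter_of_left _)]
        congr 1
        ext a
        simp [Set.Finite.mem_toFinset]
    _ = ht.toFinset.card * k := by rw [Finset.sum_const, smul_eq_mul]

lemma lemA (s : Set α) (hs : s.Finite) (t : Set β) (ht : t.Finite) (f : α → β) (k : ℕ)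
    (hf : ∀ b ∈ t, k ≤ (s ∩ f ⁻¹' {b}).ncard) :
    t.ncard * k ≤ s.ncard := by
  classical
  rw [Set.ncard_eq_toFinset_card _ hs, Set.ncard_eq_toFinset_card _ ht]
  have hdisj : ∀ b₁ ∈ ht.toFinset, ∀ b₂ ∈ ht.toFinset, b₁ ≠ b₂ →
      Disjoint (hs.toFinset.filter (fun a => f a = b₁))
        (hs.toFinset.filter (fun a => f a = b₂)) := by
    intro b₁ _ b₂ _ hne
    rw [Finset.disjoint_left]
    intro a ha1 ha2
    exact hne ((Finset.mem_filter.mp ha1).2 ▸ (Finset.mem_filter.mp ha2).2.symm ▸ rfl)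
  calc ht.toFinset.card * k = ∑ _b ∈ ht.toFinset, k := by rw [Finset.sum_const, smul_eq_mul]
    _ ≤ ∑ b ∈ ht.toFinset, (hs.toFinset.filter (fun a => f a = b)).card := by
        refine Finset.sum_le_sum fun b hb => ?_
        refine le_trans (hf b (ht.mem_toFinset.mp hb)) (le_of_eq ?_)
        rw [Set.ncard_eq_toFinset_card (s ∩ f ⁻¹' {b}) (hs.inter_of_left _)]
        congr 1
        ext a
        simp [Set.Finite.mem_toFinset]
    _ = (ht.toFinset.biUnion (fun b => hs.toFinset.filter (fun a => f a = b))).card :=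
        (Finset.card_biUnion hdisj).symm
    _ ≤ hs.toFinset.card := Finset.card_le_card (Finset.biUnion_subset.mpr
        (fun b _ => Finset.filter_subset _ _))

end counting

section fr
variable [FiniteDimensional F V]

lemma fr_pos {X : Submodule F V} (h : X ≠ ⊥) : 1 ≤ finrank F X :=
  Nat.one_le_iff_ne_zero.mpr (fun h0 => h (Submodule.finrank_eq_zero.mp h0))

lemma pt_inf_bot {P S : Submodule F V} (hP : finrank F P = 1) (h : ¬ P ≤ S) : S ⊓ P = ⊥ := by
  by_contra hb
  have h1 : 1 ≤ finrank F (S ⊓ P : Submodule F V) := fr_pos hb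
  have h2 : S ⊓ P ≤ P := inf_le_right
  have h3 : finrank F P ≤ finrank F (S ⊓ P : Submodule F V) := hP ▸ h1
  have := Submodule.eq_of_le_of_finrank_le h2 h3
  exact h (this ▸ inf_le_left)

lemma pts_inf_bot {P Q : Submodule F V} (hP : finrank F P = 1) (hQ : finrank F Q = 1)
    (h : P ≠ Q) : P ⊓ Q = ⊥ := by
  refine pt_inf_bot hQ (fun hle => h ?_)
  exact (Submodule.eq_of_le_of_finrank_le hle (by omega)).symm ▸ rfl

lemma fr_sup_disj {X Y : Submodule F V} (h : X ⊓ Y = ⊥) :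
    finrank F (X ⊔ Y : Submodule F V) = finrank F X + finrank F Y := by
  have := Submodule.finrank_sup_add_finrank_inf_eq X Y
  rw [h] at this
  simpa using this

lemma span_eq_pt {P : Submodule F V} {v : V} (hv : v ≠ 0) (hm : v ∈ P)
    (hP : finrank F P = 1) : Submodule.span F {v} = P := by
  refine Submodule.eq_of_le_of_finrank_le ((Submodule.span_singleton_le_iff_mem v P).mpr hm) ?_
  rw [hP, finrank_span_singleton hv]

lemma pt_eq_pt {P Q : Submodule F V} (hP : finrank F P = 1) (hQ : finrank F Q = 1)
    (h : P ≤ Q) : P = Q :=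
  Submodule.eq_of_le_of_finrank_le h (by omega)

end fr

/-- points of `X` different from `P₀` -/
def ptsNe (F : Type*) {V : Type*} [Field F] [AddCommGroup V] [Module F V]
    (X P₀ : Submodule F V) : Set (Submodule F V) :=
  {P : Submodule F V | finrank F P = 1 ∧ P ≤ X ∧ P ≠ P₀}

section geom
variable {q : ℕ} [Fintype F] [FiniteDimensional F V]

lemma g_finSub : Finite (Submodule F V) := by
  haveI : Finite V := Module.finite_of_finite F
  exact Finite.of_injective (fun X => (X : Set V)) SetLike.coe_injective

lemma g_two_le (hq : Fintype.card F = q) : 2 ≤ q := hq ▸ Fintype.one_lt_card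

lemma g_card (hq : Fintype.card F = q) (X : Submodule F V) :
    (X : Set V).ncard = q ^ finrank F X := by
  haveI : Finite V := Module.finite_of_finite F
  haveI : Fintype V := Fintype.ofFinite V
  haveI : Fintype ↥X := Fintype.ofFinite ↥X
  have h := card_eq_pow_finrank (K := F) (V := ↥X)
  rw [hq] at h
  rw [← Nat.card_coe_set_eq, Nat.card_eq_fintype_card]
  convert h using 2
  rfl

lemma g_cardV (hq : Fintype.card F = q) (hV : finrank F V = 7) : Nat.card V = q ^ 7 := by
  haveI : Finite V := Module.finite_of_finite F
  haveI : Fintype V := Fintype.ofFinite V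
  have h := card_eq_pow_finrank (K := F) (V := V)
  rw [hq, hV] at h
  rw [Nat.card_eq_fintype_card]
  exact h

lemma g_diff (hq : Fintype.card F = q) {X Y : Submodule F V} (h : X ≤ Y) :
    ((Y : Set V) \ (X : Set V)).ncard + q ^ finrank F X = q ^ finrank F Y := by
  haveI : Finite V := Module.finite_of_finite F
  rw [Set.ncard_diff h (X : Set V).toFinite, g_card hq, g_card hq]
  refine Nat.sub_add_cancel ?_
  have h2 := g_two_le (F := F) hq
  exact Nat.pow_le_pow_right (by omega) (Submodule.finrank_mono h)

lemma g_compl (hq : Fintype.card F = q) (hV : finrank F V = 7) (X : Submodule F V) :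
    ((X : Set V)ᶜ).ncard + q ^ finrank F X = q ^ 7 := by
  haveI : Finite V := Module.finite_of_finite F
  have h1 := Set.ncard_add_ncard_compl (X : Set V)
  rw [g_card hq, g_cardV hq hV] at h1
  omega

lemma ptsNe_mul (hq : Fintype.card F = q) {X P₀ : Submodule F V} (h0 : finrank F P₀ = 1)
    (hle : P₀ ≤ X) :
    (ptsNe F X P₀).ncard * (q - 1) + q ≤ q ^ finrank F X := by
  haveI : Finite V := Module.finite_of_finite F
  haveI : Finite (Submodule F V) := g_finSub
  have key := lemA ((X : Set V) \ (P₀ : Set V)) (Set.toFinite _) (ptsNe F X P₀)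
    (Set.toFinite _) (fun v => Submodule.span F {v}) (q - 1) ?_
  · have hdiff := g_diff hq hle
    rw [h0, pow_one] at hdiff
    omega
  · intro P hP
    obtain ⟨hP1, hPX, hP0⟩ := hP
    have hsub : ((P : Set V) \ ((⊥ : Submodule F V) : Set V)) ⊆
        ((X : Set V) \ (P₀ : Set V)) ∩ (fun v => Submodule.span F {v}) ⁻¹' {P} := by
      rintro v ⟨hvP, hv0⟩
      rw [Submodule.bot_coe, Set.mem_singleton_iff] at hv0
      have hspan : Submodule.span F {v} = P := span_eq_pt hv0 hvP hP1
      exact ⟨⟨hPX hvP, fun hvP0 => hP0 (pt_eq_pt hP1 h0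
        (hspan ▸ (Submodule.span_singleton_le_iff_mem v P₀).mpr hvP0))⟩, hspan⟩
    have hcard : ((P : Set V) \ ((⊥ : Submodule F V) : Set V)).ncard = q - 1 := by
      have := g_diff hq (bot_le : (⊥ : Submodule F V) ≤ P)
      rw [hP1, pow_one, finrank_bot, pow_zero] at this
      omega
    calc q - 1 = ((P : Set V) \ ((⊥ : Submodule F V) : Set V)).ncard := hcard.symm
      _ ≤ _ := Set.ncard_le_ncard hsub (Set.toFinite _)

lemma ptsNe_le3 (hq : Fintype.card F = q) {X P₀ : Submodule F V} (h0 : finrank F P₀ = 1)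
    (hle : P₀ ≤ X) (hX : finrank F X = 3) :
    (ptsNe F X P₀).ncard ≤ q ^ 2 + q := by
  have h2 := g_two_le (F := F) hq
  have key := ptsNe_mul hq h0 hle
  rw [hX] at key
  have hid : (q ^ 2 + q) * (q - 1) + q = q ^ 3 := by
    zify [show (1:ℕ) ≤ q by omega]
    ring
  refine Nat.le_of_mul_le_mul_right ?_ (show 0 < q - 1 by omega)
  omega

lemma ptsNe_le1 (hq : Fintype.card F = q) {X P₀ : Submodule F V} (h0 : finrank F P₀ = 1)
    (hle : P₀ ≤ X) (hX : finrank F X ≤ 2) :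
    (ptsNe F X P₀).ncard ≤ q := by
  have h2 := g_two_le (F := F) hq
  have key := ptsNe_mul hq h0 hle
  have hmono : q ^ finrank F X ≤ q ^ 2 := Nat.pow_le_pow_right (by omega) hX
  have hid : q * (q - 1) + q = q ^ 2 := by
    zify [show (1:ℕ) ≤ q by omega]
    ring
  refine Nat.le_of_mul_le_mul_right ?_ (show 0 < q - 1 by omega)
  omega

end geom

section solids
variable {q : ℕ} [Fintype F] [FiniteDimensional F V]

lemma fr_sup_pt (hq : Fintype.card F = q) {X : Submodule F V} {x : V} (hx : x ∉ X) :
    finrank F (X ⊔ Submodule.span F {x} : Submodule F V) = finrank F X + 1 := by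
  have hx0 : x ≠ 0 := fun h => hx (h ▸ X.zero_mem)
  have hd : X ⊓ Submodule.span F {x} = ⊥ :=
    pt_inf_bot (finrank_span_singleton hx0) (fun h => hx ((Submodule.span_singleton_le_iff_mem x X).mp h))
  rw [fr_sup_disj hd, finrank_span_singleton hx0]

lemma solidsThru_le (hq : Fintype.card F = q) (hV : finrank F V = 7)
    {m : Submodule F V} (hm : finrank F m = 2) :
    {S : Submodule F V | finrank F S = 4 ∧ m ≤ S}.ncard ≤
      q ^ 6 + q ^ 5 + 2 * q ^ 4 + 2 * q ^ 3 + 2 * q ^ 2 + q + 1 := by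
  haveI : Finite V := Module.finite_of_finite F
  haveI : Finite (Submodule F V) := g_finSub
  have h2 := g_two_le (F := F) hq
  set Ω : Set (V × V) := {xy | xy.1 ∉ m ∧ xy.2 ∉ m ⊔ Submodule.span F {xy.1}} with hΩ
  set T : Set (Submodule F V) := {S | finrank F S = 4 ∧ m ≤ S} with hT
  -- lower bound on fibers
  have hlow : T.ncard * ((q ^ 4 - q ^ 2) * (q ^ 4 - q ^ 3)) ≤ Ω.ncard := by
    refine lemA Ω (Set.toFinite _) T (Set.toFinite _)
      (fun xy => m ⊔ Submodule.span F {xy.1} ⊔ Submodule.span F {xy.2}) _ ?_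
    rintro S ⟨hS4, hmS⟩
    set ΩS : Set (V × V) := {xy | xy.1 ∈ S ∧ xy.1 ∉ m ∧ xy.2 ∈ S ∧
      xy.2 ∉ m ⊔ Submodule.span F {xy.1}} with hΩS
    have hsub : ΩS ⊆ Ω ∩ (fun xy => m ⊔ Submodule.span F {xy.1} ⊔ Submodule.span F {xy.2}) ⁻¹' {S} := by
      rintro ⟨x, y⟩ ⟨hxS, hxm, hyS, hym⟩
      refine ⟨⟨hxm, hym⟩, Set.mem_singleton_iff.mpr ?_⟩
      show m ⊔ Submodule.span F {x} ⊔ Submodule.span F {y} = S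
      have hfr3 : finrank F (m ⊔ Submodule.span F {x} : Submodule F V) = 3 := by
        rw [fr_sup_pt hq hxm, hm]
      have hfr4 : finrank F (m ⊔ Submodule.span F {x} ⊔ Submodule.span F {y} : Submodule F V) = 4 := by
        rw [fr_sup_pt hq hym, hfr3]
      have hle : m ⊔ Submodule.span F {x} ⊔ Submodule.span F {y} ≤ S := by
        refine sup_le (sup_le hmS ?_) ?_
        · exact (Submodule.span_singleton_le_iff_mem x S).mpr hxS
        · exact (Submodule.span_singleton_le_iff_mem y S).mpr hyS
      exact Submodule.eq_of_le_of_finrank_le hle (by omega)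
    refine le_trans ?_ (Set.ncard_le_ncard hsub (Set.toFinite _))
    -- count ΩS by fibering over the first coordinate
    have hinner := lemA ΩS (Set.toFinite _) ((S : Set V) \ (m : Set V)) (Set.toFinite _)
      Prod.fst (q ^ 4 - q ^ 3) ?_
    · refine le_trans ?_ hinner
      have hc : ((S : Set V) \ (m : Set V)).ncard = q ^ 4 - q ^ 2 := by
        have := g_diff hq hmS
        rw [hm, hS4] at this
        omega
      rw [hc]
    · rintro x ⟨hxS, hxm⟩
      have hmx : m ⊔ Submodule.span F {x} ≤ S := by
        refine sup_le hmS ((Submodule.span_singleton_le_iff_mem x S).mpr hxS)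
      have himg : (fun y => ((x, y) : V × V)) ''
          ((S : Set V) \ ((m ⊔ Submodule.span F {x} : Submodule F V) : Set V)) ⊆
          ΩS ∩ Prod.fst ⁻¹' {x} := by
        rintro ⟨x', y⟩ ⟨y', ⟨hy'S, hy'm⟩, heq⟩
        obtain ⟨h1, h2⟩ := Prod.mk.injEq .. ▸ heq
        subst h1; subst h2
        exact ⟨⟨hxS, hxm, hy'S, hy'm⟩, rfl⟩
      have hcard : ((fun y => ((x, y) : V × V)) ''
          ((S : Set V) \ ((m ⊔ Submodule.span F {x} : Submodule F V) : Set V))).ncard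
          = q ^ 4 - q ^ 3 := by
        rw [Set.ncard_image_of_injective _ (fun a b h => (Prod.mk.injEq .. ▸ h).2)]
        have := g_diff hq hmx
        rw [hS4, fr_sup_pt hq hxm, hm] at this
        norm_num at this
        omega
      exact hcard ▸ Set.ncard_le_ncard himg (Set.toFinite _)
  -- upper bound on Ω
  have hup : Ω.ncard ≤ (q ^ 7 - q ^ 2) * (q ^ 7 - q ^ 3) := by
    have := lemB Ω (Set.toFinite _) ((m : Set V)ᶜ) (Set.toFinite _) Prod.fst (q ^ 7 - q ^ 3)
      (fun xy hxy => hxy.1) ?_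
    · refine le_trans this (le_of_eq ?_)
      congr 1
      have := g_compl hq hV m
      rw [hm] at this
      omega
    · intro x hx
      have hsub : Ω ∩ Prod.fst ⁻¹' {x} ⊆ (fun y => ((x, y) : V × V)) ''
          (((m ⊔ Submodule.span F {x} : Submodule F V) : Set V)ᶜ) := by
        rintro ⟨x', y⟩ ⟨⟨hxm, hym⟩, hfst⟩
        simp only [Set.mem_preimage, Set.mem_singleton_iff] at hfst
        subst hfst
        exact ⟨y, hym, rfl⟩
      refine le_trans (Set.ncard_le_ncard hsub (Set.toFinite _)) ?_
      rw [Set.ncard_image_of_injective _ (fun a b h => (Prod.mk.injEq .. ▸ h).2)]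
      have := g_compl hq hV (m ⊔ Submodule.span F {x})
      rw [fr_sup_pt hq hx, hm] at this
      norm_num at this
      omega
  -- combine
  have hid : (q ^ 7 - q ^ 2) * (q ^ 7 - q ^ 3) =
      (q ^ 6 + q ^ 5 + 2 * q ^ 4 + 2 * q ^ 3 + 2 * q ^ 2 + q + 1) *
        ((q ^ 4 - q ^ 2) * (q ^ 4 - q ^ 3)) := by
    zify [show q ^ 2 ≤ q ^ 7 from Nat.pow_le_pow_right (by omega) (by omega),
      show q ^ 3 ≤ q ^ 7 from Nat.pow_le_pow_right (by omega) (by omega),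
      show q ^ 2 ≤ q ^ 4 from Nat.pow_le_pow_right (by omega) (by omega),
      show q ^ 3 ≤ q ^ 4 from Nat.pow_le_pow_right (by omega) (by omega)]
    ring
  have hpos : 0 < (q ^ 4 - q ^ 2) * (q ^ 4 - q ^ 3) := by
    have h1 : q ^ 2 < q ^ 4 := Nat.pow_lt_pow_right (by omega) (by omega)
    have h3 : q ^ 3 < q ^ 4 := Nat.pow_lt_pow_right (by omega) (by omega)
    exact Nat.mul_pos (by omega) (by omega)
  refine Nat.le_of_mul_le_mul_right ?_ hpos
  calc T.ncard * ((q ^ 4 - q ^ 2) * (q ^ 4 - q ^ 3)) ≤ Ω.ncard := hlow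
    _ ≤ (q ^ 7 - q ^ 2) * (q ^ 7 - q ^ 3) := hup
    _ = _ := hid

end solids

/-- planes through P₂ missing P₁ that meet all three planes -/
def auxTT (F : Type*) {V : Type*} [Field F] [AddCommGroup V] [Module F V]
    (P₁ P₂ : Submodule F V) (E : Fin 3 → Submodule F V) : Set (Submodule F V) :=
  {T : Submodule F V | finrank F T = 3 ∧ P₂ ≤ T ∧ ¬ P₁ ≤ T ∧ ∀ i, T ⊓ E i ≠ ⊥}

/-- solids over T meeting the E's only inside T -/
def auxBB (F : Type*) {V : Type*} [Field F] [AddCommGroup V] [Module F V]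
    (E : Fin 3 → Submodule F V) (T : Submodule F V) : Set (Submodule F V) :=
  {S : Submodule F V | finrank F S = 4 ∧ T ≤ S ∧ ∀ i, S ⊓ (T ⊔ E i) = T}

section config
variable [FiniteDimensional F V]
variable {P₁ P₂ : Submodule F V} {E : Fin 3 → Submodule F V}

lemma fin3_ne_succ : ∀ i : Fin 3, i ≠ i + 1 := by decide

lemma cfg_P1_le (hmeet : ∀ i j, i ≠ j → E i ⊓ E j = P₁ ∧ ¬ P₂ ≤ E i ⊔ E j) (i : Fin 3) :
    P₁ ≤ E i :=
  le_of_eq_of_le (hmeet i (i+1) (fin3_ne_succ i)).1.symm inf_le_left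

lemma cfg_P2_nle (hmeet : ∀ i j, i ≠ j → E i ⊓ E j = P₁ ∧ ¬ P₂ ≤ E i ⊔ E j) (i : Fin 3) :
    ¬ P₂ ≤ E i :=
  fun h => (hmeet i (i+1) (fin3_ne_succ i)).2 (h.trans le_sup_left)

/-- a member of auxTT meets each E i in exactly a point -/
lemma TT_inf_pt (hP₁ : finrank F P₁ = 1) (hP₂ : finrank F P₂ = 1)
    (hmeet : ∀ i j, i ≠ j → E i ⊓ E j = P₁ ∧ ¬ P₂ ≤ E i ⊔ E j)
    {T : Submodule F V} (hT : T ∈ auxTT F P₁ P₂ E) (i : Fin 3) :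
    finrank F (T ⊓ E i : Submodule F V) = 1 := by
  obtain ⟨hT3, hP2T, hP1T, hTE⟩ := hT
  have hge : 1 ≤ finrank F (T ⊓ E i : Submodule F V) := fr_pos (hTE i)
  by_contra hne1
  have hge2 : 2 ≤ finrank F (T ⊓ E i : Submodule F V) := by omega
  have hle3 : finrank F (T ⊓ E i : Submodule F V) ≤ 3 :=
    hT3 ▸ Submodule.finrank_mono inf_le_left
  -- it cannot be all of T
  have hne3 : finrank F (T ⊓ E i : Submodule F V) ≠ 3 := by
    intro h3
    have heq : T ⊓ E i = T := Submodule.eq_of_le_of_finrank_le inf_le_left (by omega)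
    have hTle : T ≤ E i := by rw [← heq]; exact inf_le_right
    exact cfg_P2_nle hmeet i (hP2T.trans hTle)
  have h2 : finrank F (T ⊓ E i : Submodule F V) = 2 := by omega
  -- T = (T ⊓ E i) ⊔ P₂
  have hdisj : (T ⊓ E i) ⊓ P₂ = ⊥ := by
    have h' : (T ⊓ E i) ⊓ P₂ ≤ E i ⊓ P₂ := inf_le_inf_right _ inf_le_right
    rw [pt_inf_bot hP₂ (cfg_P2_nle hmeet i)] at h'
    exact le_bot_iff.mp h'
  have hTeq : (T ⊓ E i) ⊔ P₂ = T := by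
    refine Submodule.eq_of_le_of_finrank_le (sup_le inf_le_left hP2T) ?_
    rw [fr_sup_disj hdisj, h2, hP₂, hT3]
  -- now get a contradiction from T ⊓ E j ≠ ⊥
  set j := i + 1 with hj
  have hij : i ≠ j := fin3_ne_succ i
  obtain ⟨r, hrT, hr0⟩ := (Submodule.ne_bot_iff _).mp (hTE j)
  have hrmem : r ∈ (T ⊓ E i) ⊔ P₂ := by rw [hTeq]; exact (Submodule.mem_inf.mp hrT).1
  obtain ⟨y, hy, z, hz, hyz⟩ := Submodule.mem_sup.mp hrmem
  by_cases hz0 : z = 0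
  · -- r = y ∈ E i, so r ∈ E i ⊓ E j = P₁, giving P₁ ≤ T
    have hry : r = y := by rw [← hyz, hz0, add_zero]
    have hrEi : r ∈ E i := hry ▸ (Submodule.mem_inf.mp hy).2
    have hrP1 : r ∈ P₁ := by
      rw [← (hmeet i j hij).1]
      exact Submodule.mem_inf.mpr ⟨hrEi, (Submodule.mem_inf.mp hrT).2⟩
    have : P₁ ≤ T := by
      rw [← span_eq_pt hr0 hrP1 hP₁]
      exact (Submodule.span_singleton_le_iff_mem r T).mpr (Submodule.mem_inf.mp hrT).1
    exact hP1T this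
  · -- z = r - y ∈ E i ⊔ E j, so P₂ ≤ E i ⊔ E j
    have hzmem : z ∈ E i ⊔ E j := by
      have hrj : r ∈ E i ⊔ E j := le_sup_right (α := Submodule F V) (Submodule.mem_inf.mp hrT).2
      have hyi : y ∈ E i ⊔ E j := le_sup_left (α := Submodule F V) (Submodule.mem_inf.mp hy).2
      have : z = r - y := by rw [← hyz]; abel
      rw [this]
      exact Submodule.sub_mem _ hrj hyi
    have : P₂ ≤ E i ⊔ E j := by
      rw [← span_eq_pt hz0 hz hP₂]
      exact (Submodule.span_singleton_le_iff_mem z _).mpr hzmem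
    exact (hmeet i j hij).2 this

end config

section config2
variable [FiniteDimensional F V]
variable {P₁ P₂ : Submodule F V} {E : Fin 3 → Submodule F V}

/-- a member of auxTT is spanned by P₂ and its points of contact -/
lemma TT_plane_eq (hP₁ : finrank F P₁ = 1) (hP₂ : finrank F P₂ = 1)
    (hmeet : ∀ i j, i ≠ j → E i ⊓ E j = P₁ ∧ ¬ P₂ ≤ E i ⊔ E j)
    {T : Submodule F V} (hT : T ∈ auxTT F P₁ P₂ E) {i j : Fin 3} (hij : i ≠ j) :
    ((T ⊓ E i) ⊔ (T ⊓ E j)) ⊔ P₂ = T := by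
  obtain ⟨hT3, hP2T, hP1T, hTE⟩ := hT
  have hfi := TT_inf_pt hP₁ hP₂ hmeet ⟨hT3, hP2T, hP1T, hTE⟩ i
  have hfj := TT_inf_pt hP₁ hP₂ hmeet ⟨hT3, hP2T, hP1T, hTE⟩ j
  have hAB : T ⊓ E i ≠ T ⊓ E j := by
    intro heq
    have h1 : T ⊓ E i ≤ P₁ := by
      rw [← (hmeet i j hij).1]
      exact le_inf inf_le_right (heq ▸ inf_le_right : T ⊓ E i ≤ E j)
    exact hP1T ((pt_eq_pt hfi hP₁ h1) ▸ inf_le_left)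
  have hfr2 : finrank F ((T ⊓ E i) ⊔ (T ⊓ E j) : Submodule F V) = 2 := by
    rw [fr_sup_disj (pts_inf_bot hfi hfj hAB), hfi, hfj]
  have hdisj : ((T ⊓ E i) ⊔ (T ⊓ E j)) ⊓ P₂ = ⊥ := by
    have h' : ((T ⊓ E i) ⊔ (T ⊓ E j)) ⊓ P₂ ≤ (E i ⊔ E j) ⊓ P₂ :=
      inf_le_inf_right _ (sup_le (inf_le_right.trans le_sup_left) (inf_le_right.trans le_sup_right))
    rw [pt_inf_bot hP₂ (hmeet i j hij).2] at h'
    exact le_bot_iff.mp h'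
  refine Submodule.eq_of_le_of_finrank_le
    (sup_le (sup_le inf_le_left inf_le_left) hP2T) ?_
  rw [fr_sup_disj hdisj, hfr2, hP₂, hT3]

/-- the number of planes in auxTT -/
lemma TT_card {q : ℕ} [Fintype F] (hq : Fintype.card F = q)
    (hP₁ : finrank F P₁ = 1) (hP₂ : finrank F P₂ = 1)
    (hE : ∀ i, finrank F (E i) = 3)
    (hmeet : ∀ i j, i ≠ j → E i ⊓ E j = P₁ ∧ ¬ P₂ ≤ E i ⊔ E j) :
    (auxTT F P₁ P₂ E).ncard ≤ (q ^ 2 + q) * (q * 1) := by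
  haveI : Finite V := Module.finite_of_finite F
  haveI : Finite (Submodule F V) := g_finSub
  refine le_trans (lemB (auxTT F P₁ P₂ E) (Set.toFinite _) (ptsNe F (E 2) P₁)
    (Set.toFinite _) (fun T => T ⊓ E 2) (q * 1) ?_ ?_)
    (Nat.mul_le_mul_right _ (ptsNe_le3 hq hP₁ (cfg_P1_le hmeet 2) (hE 2)))
  · intro T hT
    refine ⟨TT_inf_pt hP₁ hP₂ hmeet hT 2, inf_le_right, ?_⟩
    intro heq
    exact hT.2.2.1 (heq ▸ inf_le_left)
  · rintro R₃ ⟨hR1, hRE, hRP⟩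
    set Z' : Submodule F V := E 0 ⊓ (P₂ ⊔ R₃ ⊔ E 1) with hZ'
    have hfrZ : finrank F Z' ≤ 2 := by
      by_contra hgt
      have h3 : finrank F (E 0) ≤ finrank F Z' := by rw [hE 0]; omega
      have hZE : Z' = E 0 := Submodule.eq_of_le_of_finrank_le inf_le_left h3
      have hE0le : E 0 ≤ P₂ ⊔ R₃ ⊔ E 1 := by rw [← hZE]; exact inf_le_right
      have h5 : finrank F (P₂ ⊔ R₃ ⊔ E 1 : Submodule F V) ≤ 5 := by
        calc finrank F (P₂ ⊔ R₃ ⊔ E 1 : Submodule F V)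
            ≤ finrank F (P₂ ⊔ R₃ : Submodule F V) + finrank F (E 1) :=
              Submodule.finrank_add_le_finrank_add_finrank _ _
          _ ≤ (finrank F P₂ + finrank F R₃) + finrank F (E 1) :=
              Nat.add_le_add_right (Submodule.finrank_add_le_finrank_add_finrank _ _) _
          _ ≤ 5 := by rw [hP₂, hR1, hE 1]
      have hW : finrank F (E 0 ⊔ E 1 : Submodule F V) = 5 := by
        have := Submodule.finrank_sup_add_finrank_inf_eq (E 0) (E 1)
        rw [(hmeet 0 1 (by decide)).1, hP₁, hE 0, hE 1] at this
        omega
      have hWP : finrank F ((E 0 ⊔ E 1) ⊔ P₂ : Submodule F V) = 6 := by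
        rw [fr_sup_disj (pt_inf_bot hP₂ (hmeet 0 1 (by decide)).2), hW, hP₂]
      have hle6 : (E 0 ⊔ E 1) ⊔ P₂ ≤ P₂ ⊔ R₃ ⊔ E 1 := by
        refine sup_le (sup_le hE0le le_sup_right) ?_
        exact le_sup_left.trans le_sup_left
      have := Submodule.finrank_mono hle6
      omega
    refine le_trans (lemB _ (Set.toFinite _) (ptsNe F Z' P₁) (Set.toFinite _)
      (fun T => T ⊓ E 0) 1 ?_ ?_)
      (Nat.mul_le_mul_right _ (ptsNe_le1 hq hP₁
        (le_inf (cfg_P1_le hmeet 0) ((cfg_P1_le hmeet 1).trans le_sup_right)) hfrZ))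
    · rintro T ⟨hT, hTR⟩
      simp only [Set.mem_preimage, Set.mem_singleton_iff] at hTR
      refine ⟨TT_inf_pt hP₁ hP₂ hmeet hT 0, le_inf inf_le_right ?_, ?_⟩
      · -- T ⊓ E 0 ≤ P₂ ⊔ R₃ ⊔ E 1
        have hTeq := TT_plane_eq hP₁ hP₂ hmeet hT (show (1 : Fin 3) ≠ 2 by decide)
        have hTle : T ≤ P₂ ⊔ R₃ ⊔ E 1 := by
          rw [← hTeq]
          refine sup_le (sup_le ?_ ?_) ?_
          · exact inf_le_right.trans (le_sup_right : E 1 ≤ P₂ ⊔ R₃ ⊔ E 1)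
          · rw [hTR]; exact le_sup_right.trans le_sup_left
          · exact le_sup_left.trans le_sup_left
        exact inf_le_left.trans hTle
      · intro heq
        exact hT.2.2.1 (heq ▸ inf_le_left)
    · rintro R₁ ⟨hR11, hR1Z, hR1P⟩
      have hsub : (auxTT F P₁ P₂ E ∩ (fun T => T ⊓ E 2) ⁻¹' {R₃}) ∩ (fun T => T ⊓ E 0) ⁻¹' {R₁}
          ⊆ {((R₁ ⊔ R₃) ⊔ P₂ : Submodule F V)} := by
        rintro T ⟨⟨hT, hTR3⟩, hTR1⟩
        simp only [Set.mem_preimage, Set.mem_singleton_iff] at hTR3 hTR1 ⊢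
        have := TT_plane_eq hP₁ hP₂ hmeet hT (show (0 : Fin 3) ≠ 2 by decide)
        rw [hTR3, hTR1] at this
        exact this.symm
      calc _ ≤ ({((R₁ ⊔ R₃) ⊔ P₂ : Submodule F V)} : Set (Submodule F V)).ncard :=
            Set.ncard_le_ncard hsub (Set.toFinite _)
        _ = 1 := Set.ncard_singleton _

end config2

section config3
variable [FiniteDimensional F V]
variable {P₁ P₂ : Submodule F V} {E : Fin 3 → Submodule F V}

lemma TT_pts_ne (hP₁ : finrank F P₁ = 1) (hP₂ : finrank F P₂ = 1)
    (hmeet : ∀ i j, i ≠ j → E i ⊓ E j = P₁ ∧ ¬ P₂ ≤ E i ⊔ E j)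
    {T : Submodule F V} (hT : T ∈ auxTT F P₁ P₂ E) {i j : Fin 3} (hij : i ≠ j) :
    T ⊓ E i ≠ T ⊓ E j := by
  intro heq
  have h1 : T ⊓ E i ≤ P₁ := by
    rw [← (hmeet i j hij).1]
    exact le_inf inf_le_right (heq ▸ inf_le_right : T ⊓ E i ≤ E j)
  exact hT.2.2.1 ((pt_eq_pt (TT_inf_pt hP₁ hP₂ hmeet hT i) hP₁ h1) ▸ inf_le_left)

lemma BB_card {q : ℕ} [Fintype F] (hq : Fintype.card F = q) (hV : finrank F V = 7)
    (hP₁ : finrank F P₁ = 1) (hP₂ : finrank F P₂ = 1)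
    (hE : ∀ i, finrank F (E i) = 3)
    (hmeet : ∀ i j, i ≠ j → E i ⊓ E j = P₁ ∧ ¬ P₂ ≤ E i ⊔ E j)
    {T : Submodule F V} (hT : T ∈ auxTT F P₁ P₂ E) :
    (auxBB F E T).ncard ≤ q ^ 3 + q ^ 2 - 2 * q := by
  haveI : Finite V := Module.finite_of_finite F
  haveI : Finite (Submodule F V) := g_finSub
  have h2 := g_two_le (F := F) hq
  obtain ⟨hT3, hP2T, hP1T, hTE⟩ := hT
  have hT' : T ∈ auxTT F P₁ P₂ E := ⟨hT3, hP2T, hP1T, hTE⟩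
  have hU5 : ∀ i, finrank F (T ⊔ E i : Submodule F V) = 5 := by
    intro i
    have := Submodule.finrank_sup_add_finrank_inf_eq T (E i)
    rw [TT_inf_pt hP₁ hP₂ hmeet hT' i, hT3, hE i] at this
    omega
  have hG4 : finrank F (T ⊔ P₁ : Submodule F V) = 4 := by
    rw [fr_sup_disj (pt_inf_bot hP₁ hP1T), hT3, hP₁]
  have hG : ∀ i j, i ≠ j → (T ⊔ E i) ⊓ (T ⊔ E j) = T ⊔ P₁ := by
    intro i j hij
    have frW : finrank F (E i ⊔ E j : Submodule F V) = 5 := by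
      have := Submodule.finrank_sup_add_finrank_inf_eq (E i) (E j)
      rw [(hmeet i j hij).1, hP₁, hE i, hE j] at this
      omega
    have hTW2 : finrank F (T ⊓ (E i ⊔ E j) : Submodule F V) = 2 := by
      have hge : 2 ≤ finrank F (T ⊓ (E i ⊔ E j) : Submodule F V) := by
        have hle : (T ⊓ E i) ⊔ (T ⊓ E j) ≤ T ⊓ (E i ⊔ E j) :=
          sup_le (le_inf inf_le_left (inf_le_right.trans le_sup_left))
            (le_inf inf_le_left (inf_le_right.trans le_sup_right))
        have hfr2 : finrank F ((T ⊓ E i) ⊔ (T ⊓ E j) : Submodule F V) = 2 := by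
          rw [fr_sup_disj (pts_inf_bot (TT_inf_pt hP₁ hP₂ hmeet hT' i)
            (TT_inf_pt hP₁ hP₂ hmeet hT' j) (TT_pts_ne hP₁ hP₂ hmeet hT' hij)),
            TT_inf_pt hP₁ hP₂ hmeet hT' i, TT_inf_pt hP₁ hP₂ hmeet hT' j]
        exact hfr2 ▸ Submodule.finrank_mono hle
      have hlt : T ⊓ (E i ⊔ E j) < T := by
        refine lt_of_le_of_ne inf_le_left (fun heq => ?_)
        exact (hmeet i j hij).2 (hP2T.trans (heq ▸ inf_le_right))
      have := Submodule.finrank_lt_finrank_of_lt hlt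
      rw [hT3] at this
      omega
    have hTW6 : finrank F (T ⊔ (E i ⊔ E j) : Submodule F V) = 6 := by
      have := Submodule.finrank_sup_add_finrank_inf_eq T (E i ⊔ E j)
      rw [hTW2, hT3, frW] at this
      omega
    have hUU : (T ⊔ E i) ⊔ (T ⊔ E j) = T ⊔ (E i ⊔ E j) := by
      rw [sup_sup_sup_comm, sup_idem]
    have hcap4 : finrank F ((T ⊔ E i) ⊓ (T ⊔ E j) : Submodule F V) = 4 := by
      have := Submodule.finrank_sup_add_finrank_inf_eq (T ⊔ E i) (T ⊔ E j)
      rw [hUU, hTW6, hU5 i, hU5 j] at this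
      omega
    refine (Submodule.eq_of_le_of_finrank_le ?_ (by omega)).symm
    exact le_inf (sup_le le_sup_left ((cfg_P1_le hmeet i).trans le_sup_right))
      (sup_le le_sup_left ((cfg_P1_le hmeet j).trans le_sup_right))
  -- set-level counting
  set A : Set V := ((T ⊔ E 0 : Submodule F V) : Set V) with hA
  set B : Set V := ((T ⊔ E 1 : Submodule F V) : Set V) with hB
  set C : Set V := ((T ⊔ E 2 : Submodule F V) : Set V) with hC
  set G : Set V := ((T ⊔ P₁ : Submodule F V) : Set V) with hGs
  have hcapAB : A ∩ B = G := by
    rw [hA, hB, hGs, ← Submodule.coe_inf]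
    exact congrArg _ (hG 0 1 (by decide))
  have hcapAC : A ∩ C = G := by
    rw [hA, hC, hGs, ← Submodule.coe_inf]
    exact congrArg _ (hG 0 2 (by decide))
  have hcapBC : B ∩ C = G := by
    rw [hB, hC, hGs, ← Submodule.coe_inf]
    exact congrArg _ (hG 1 2 (by decide))
  have hcardA : A.ncard = q ^ 5 := by rw [hA, g_card hq, hU5 0]
  have hcardB : B.ncard = q ^ 5 := by rw [hB, g_card hq, hU5 1]
  have hcardC : C.ncard = q ^ 5 := by rw [hC, g_card hq, hU5 2]
  have hcardG : G.ncard = q ^ 4 := by rw [hGs, g_card hq, hG4]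
  have hAB : (A ∪ B).ncard + q ^ 4 = 2 * q ^ 5 := by
    have := Set.ncard_union_add_ncard_inter A B (Set.toFinite _) (Set.toFinite _)
    rw [hcapAB, hcardA, hcardB, hcardG] at this
    omega
  have hABC : (A ∪ B ∪ C).ncard + 2 * q ^ 4 = 3 * q ^ 5 := by
    have h := Set.ncard_union_add_ncard_inter (A ∪ B) C (Set.toFinite _) (Set.toFinite _)
    have hdist : (A ∪ B) ∩ C = G := by
      rw [Set.union_inter_distrib_right, hcapAC, hcapBC, Set.union_self]
    rw [hdist, hcardC, hcardG] at h
    omega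
  have hcompl : ((A ∪ B ∪ C)ᶜ).ncard + (A ∪ B ∪ C).ncard = q ^ 7 := by
    have := Set.ncard_add_ncard_compl (A ∪ B ∪ C)
    rw [g_cardV hq hV] at this
    omega
  -- fibration
  have hfib : (auxBB F E T).ncard * (q ^ 4 - q ^ 3) ≤ ((A ∪ B ∪ C)ᶜ).ncard := by
    refine lemA _ (Set.toFinite _) _ (Set.toFinite _)
      (fun x => T ⊔ Submodule.span F {x}) _ ?_
    rintro S ⟨hS4, hTS, hSU⟩
    have hsub : ((S : Set V) \ (T : Set V)) ⊆
        (A ∪ B ∪ C)ᶜ ∩ (fun x => T ⊔ Submodule.span F {x}) ⁻¹' {S} := by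
      rintro x ⟨hxS, hxT⟩
      constructor
      · intro hmem
        have hxU : ∃ i : Fin 3, x ∈ (T ⊔ E i : Submodule F V) := by
          rcases hmem with (h | h) | h
          exacts [⟨0, h⟩, ⟨1, h⟩, ⟨2, h⟩]
        obtain ⟨i, hxi⟩ := hxU
        have : x ∈ S ⊓ (T ⊔ E i) := Submodule.mem_inf.mpr ⟨hxS, hxi⟩
        rw [hSU i] at this
        exact hxT this
      · simp only [Set.mem_preimage, Set.mem_singleton_iff]
        refine Submodule.eq_of_le_of_finrank_le
          (sup_le hTS ((Submodule.span_singleton_le_iff_mem x S).mpr hxS)) ?_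
        rw [fr_sup_pt hq hxT, hT3, hS4]
    have hcard : ((S : Set V) \ (T : Set V)).ncard = q ^ 4 - q ^ 3 := by
      have := g_diff hq hTS
      rw [hT3, hS4] at this
      omega
    exact hcard ▸ Set.ncard_le_ncard hsub (Set.toFinite _)
  -- arithmetic
  have t1 : (auxBB F E T).ncard * (q ^ 4 - q ^ 3) + (A ∪ B ∪ C).ncard ≤ q ^ 7 := by
    calc _ ≤ (A ∪ B ∪ C)ᶜ.ncard + (A ∪ B ∪ C).ncard := Nat.add_le_add_right hfib _
      _ = q ^ 7 := hcompl
  have hchain : (auxBB F E T).ncard * (q ^ 4 - q ^ 3) + 3 * q ^ 5 ≤ q ^ 7 + 2 * q ^ 4 := by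
    calc (auxBB F E T).ncard * (q ^ 4 - q ^ 3) + 3 * q ^ 5
        = (auxBB F E T).ncard * (q ^ 4 - q ^ 3) + ((A ∪ B ∪ C).ncard + 2 * q ^ 4) := by
          rw [hABC]
      _ = ((auxBB F E T).ncard * (q ^ 4 - q ^ 3) + (A ∪ B ∪ C).ncard) + 2 * q ^ 4 := by
          ring
      _ ≤ q ^ 7 + 2 * q ^ 4 := Nat.add_le_add_right t1 _
  have hid : (q ^ 3 + q ^ 2 - 2 * q) * (q ^ 4 - q ^ 3) + 3 * q ^ 5 = q ^ 7 + 2 * q ^ 4 := by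
    have e1 : 2 * q ≤ q ^ 3 + q ^ 2 := by
      have h3 : 2 * q ≤ q * q := Nat.mul_le_mul_right q h2
      have h4 : q * q = q ^ 2 := by ring
      omega
    have e2 : q ^ 3 ≤ q ^ 4 := Nat.pow_le_pow_right (by omega) (by omega)
    zify [e1, e2]
    ring
  have h' : (auxBB F E T).ncard * (q ^ 4 - q ^ 3) + 3 * q ^ 5 ≤
      (q ^ 3 + q ^ 2 - 2 * q) * (q ^ 4 - q ^ 3) + 3 * q ^ 5 := by
    rw [hid]; exact hchain
  refine Nat.le_of_mul_le_mul_right ?_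
    (show 0 < q ^ 4 - q ^ 3 by
      have : q ^ 3 < q ^ 4 := Nat.pow_lt_pow_right (by omega) (by omega)
      omega)
  exact Nat.le_of_add_le_add_right h'

end config3

set_option maxHeartbeats 1600000 in
theorem stmt15 {q : ℕ} [Fintype F] [FiniteDimensional F V]
    (hq : Fintype.card F = q) (hV : Module.finrank F V = 7)
    (P₁ P₂ : Submodule F V) (hP₁ : Module.finrank F P₁ = 1)
    (hP₂ : Module.finrank F P₂ = 1) (hne : P₁ ≠ P₂)
    (E : Fin 3 → Submodule F V) (hE : ∀ i, Module.finrank F (E i) = 3)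
    (hmeet : ∀ i j, i ≠ j → E i ⊓ E j = P₁ ∧ ¬ P₂ ≤ E i ⊔ E j) :
    {S : Submodule F V | Module.finrank F S = 4 ∧ P₂ ≤ S ∧
        ∀ i, S ⊓ E i ≠ ⊥}.ncard ≤
      3 * q ^ 6 + 6 * q ^ 5 + 7 * q ^ 4 + 4 * q ^ 3 + 2 * q ^ 2 + q + 1 := by
  haveI : Finite V := Module.finite_of_finite F
  haveI : Finite (Submodule F V) := g_finSub
  have h2 := g_two_le (F := F) hq
  set M : Set (Submodule F V) :=
    {S : Submodule F V | finrank F S = 4 ∧ P₂ ≤ S ∧ ∀ i, S ⊓ E i ≠ ⊥} with hMdef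
  set M1 : Set (Submodule F V) := {S | S ∈ M ∧ P₁ ≤ S} with hM1def
  set ML : Fin 3 → Set (Submodule F V) :=
    fun i => {S | S ∈ M ∧ ¬ P₁ ≤ S ∧ finrank F (S ⊓ E i : Submodule F V) = 2} with hMLdef
  set MPa : Set (Submodule F V) :=
    {S | S ∈ M ∧ ¬ P₁ ≤ S ∧ (∀ i, finrank F (S ⊓ E i : Submodule F V) = 1) ∧
      S = P₂ ⊔ (S ⊓ E 0) ⊔ (S ⊓ E 1) ⊔ (S ⊓ E 2)} with hMPadef
  set MPb : Set (Submodule F V) :=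
    {S | S ∈ M ∧ ¬ P₁ ≤ S ∧ (∀ i, finrank F (S ⊓ E i : Submodule F V) = 1) ∧
      S ⊓ E 2 ≤ P₂ ⊔ (S ⊓ E 0) ⊔ (S ⊓ E 1)} with hMPbdef
  -- the two-point infimum lemma inside S
  have hSP1 : ∀ S : Submodule F V, ¬ P₁ ≤ S → ∀ i j : Fin 3, i ≠ j →
      (S ⊓ E i) ⊓ (S ⊓ E j) = ⊥ := by
    intro S hP1S i j hij
    have h' : (S ⊓ E i) ⊓ (S ⊓ E j) ≤ S ⊓ P₁ := by
      rw [← (hmeet i j hij).1]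
      exact le_inf (inf_le_left.trans inf_le_left)
        (inf_le_inf (inf_le_right) (inf_le_right))
    rw [pt_inf_bot hP₁ hP1S] at h'
    exact le_bot_iff.mp h'
  -- pairwise dimension bound
  have hd2 : ∀ S ∈ M, ¬ P₁ ≤ S → ∀ i j : Fin 3, i ≠ j →
      finrank F (S ⊓ E i : Submodule F V) + finrank F (S ⊓ E j : Submodule F V) ≤ 3 := by
    rintro S ⟨hS4, hP2S, hSE⟩ hP1S i j hij
    have hsup := fr_sup_disj (hSP1 S hP1S i j hij)
    have hlt : (S ⊓ E i) ⊔ (S ⊓ E j) < S := by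
      refine lt_of_le_of_ne (sup_le inf_le_left inf_le_left) (fun heq => ?_)
      refine (hmeet i j hij).2 (hP2S.trans ?_)
      conv_lhs => rw [← heq]
      exact sup_le (inf_le_right.trans le_sup_left) (inf_le_right.trans le_sup_right)
    have := Submodule.finrank_lt_finrank_of_lt hlt
    rw [hS4] at this
    omega
  -- the span fact for two points and P₂
  have hplane : ∀ S ∈ M, ¬ P₁ ≤ S →
      finrank F (S ⊓ E 0 : Submodule F V) = 1 → finrank F (S ⊓ E 1 : Submodule F V) = 1 →
      finrank F (P₂ ⊔ (S ⊓ E 0) ⊔ (S ⊓ E 1) : Submodule F V) = 3 := by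
    rintro S ⟨hS4, hP2S, hSE⟩ hP1S hf0 hf1
    have hQQ : finrank F ((S ⊓ E 0) ⊔ (S ⊓ E 1) : Submodule F V) = 2 := by
      rw [fr_sup_disj (hSP1 S hP1S 0 1 (by decide)), hf0, hf1]
    have hdisj : P₂ ⊓ ((S ⊓ E 0) ⊔ (S ⊓ E 1)) = ⊥ := by
      rw [inf_comm]
      have h' : ((S ⊓ E 0) ⊔ (S ⊓ E 1)) ⊓ P₂ ≤ (E 0 ⊔ E 1) ⊓ P₂ :=
        inf_le_inf_right _ (sup_le (inf_le_right.trans le_sup_left)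
          (inf_le_right.trans le_sup_right))
      rw [pt_inf_bot hP₂ (hmeet 0 1 (by decide)).2] at h'
      exact le_bot_iff.mp h'
    rw [sup_assoc, fr_sup_disj hdisj, hQQ, hP₂]
  -- cover
  have hcover : M ⊆ M1 ∪ (ML 0 ∪ (ML 1 ∪ (ML 2 ∪ (MPa ∪ MPb)))) := by
    intro S hS
    obtain ⟨hS4, hP2S, hSE⟩ := hS
    have hSM : S ∈ M := ⟨hS4, hP2S, hSE⟩
    by_cases h1 : P₁ ≤ S
    · exact Set.mem_union_left _ ⟨hSM, h1⟩
    refine Set.mem_union_right _ ?_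
    have dge : ∀ k : Fin 3, 1 ≤ finrank F (S ⊓ E k : Submodule F V) :=
      fun k => fr_pos (hSE k)
    have dle : ∀ k : Fin 3, finrank F (S ⊓ E k : Submodule F V) ≤ 2 := by
      intro k
      have ha := hd2 S hSM h1 k (k+1) (fin3_ne_succ k)
      have hb := dge (k+1)
      omega
    by_cases h20 : finrank F (S ⊓ E 0 : Submodule F V) = 2
    · exact Set.mem_union_left _ ⟨hSM, h1, h20⟩
    refine Set.mem_union_right _ ?_
    by_cases h21 : finrank F (S ⊓ E 1 : Submodule F V) = 2
    · exact Set.mem_union_left _ ⟨hSM, h1, h21⟩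
    refine Set.mem_union_right _ ?_
    by_cases h22 : finrank F (S ⊓ E 2 : Submodule F V) = 2
    · exact Set.mem_union_left _ ⟨hSM, h1, h22⟩
    refine Set.mem_union_right _ ?_
    have hall : ∀ k : Fin 3, finrank F (S ⊓ E k : Submodule F V) = 1 := by
      intro k
      have h1k := dge k
      have h2k := dle k
      have hne2 : finrank F (S ⊓ E k : Submodule F V) ≠ 2 :=
        match k with
        | ⟨0, _⟩ => h20
        | ⟨1, _⟩ => h21
        | ⟨2, _⟩ => h22
      omega
    by_cases hQ2 : S ⊓ E 2 ≤ P₂ ⊔ (S ⊓ E 0) ⊔ (S ⊓ E 1)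
    · exact Set.mem_union_right _ ⟨hSM, h1, hall, hQ2⟩
    refine Set.mem_union_left _ ⟨hSM, h1, hall, ?_⟩
    have hT3 := hplane S hSM h1 (hall 0) (hall 1)
    have hdisj : (P₂ ⊔ (S ⊓ E 0) ⊔ (S ⊓ E 1)) ⊓ (S ⊓ E 2) = ⊥ :=
      pt_inf_bot (hall 2) hQ2
    have hfr4 : finrank F (P₂ ⊔ (S ⊓ E 0) ⊔ (S ⊓ E 1) ⊔ (S ⊓ E 2) : Submodule F V) = 4 := by
      rw [fr_sup_disj hdisj, hT3, hall 2]
    refine (Submodule.eq_of_le_of_finrank_le ?_ (by omega)).symm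
    exact sup_le (sup_le (sup_le hP2S inf_le_left) inf_le_left) inf_le_left
  -- bound on M1
  have hbM1 : M1.ncard ≤ q ^ 6 + q ^ 5 + 2 * q ^ 4 + 2 * q ^ 3 + 2 * q ^ 2 + q + 1 := by
    have hm2 : finrank F (P₁ ⊔ P₂ : Submodule F V) = 2 := by
      rw [fr_sup_disj (pts_inf_bot hP₁ hP₂ hne), hP₁, hP₂]
    refine le_trans (Set.ncard_le_ncard ?_ (Set.toFinite _)) (solidsThru_le hq hV hm2)
    rintro S ⟨⟨hS4, hP2S, _⟩, hP1S⟩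
    exact ⟨hS4, sup_le hP1S hP2S⟩
  -- bound on ML i (with auxiliary index j)
  have hbML : ∀ i j : Fin 3, i ≠ j → (ML i).ncard ≤ q * q * ((q ^ 2 + q) * 1) := by
    intro i j hij
    set LN : Set (Submodule F V) :=
      {ℓ | finrank F ℓ = 2 ∧ ℓ ≤ E i ∧ ¬ P₁ ≤ ℓ} with hLNdef
    -- counting lines in E i missing P₁
    have hLN : LN.ncard ≤ q * q := by
      have hEP : ¬ E i ≤ P₁ := by
        intro hle
        have := Submodule.finrank_mono hle
        rw [hE i, hP₁] at this
        omega
      obtain ⟨a, haE, haP⟩ := SetLike.not_le_iff_exists.mp hEP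
      set m₁ : Submodule F V := P₁ ⊔ Submodule.span F {a} with hm₁def
      have hm₁2 : finrank F m₁ = 2 := by rw [hm₁def, fr_sup_pt hq haP, hP₁]
      have hm₁E : m₁ ≤ E i := sup_le (cfg_P1_le hmeet i)
        ((Submodule.span_singleton_le_iff_mem a _).mpr haE)
      have hEm₁ : ¬ E i ≤ m₁ := by
        intro hle
        have := Submodule.finrank_mono hle
        rw [hE i, hm₁2] at this
        omega
      obtain ⟨b, hbE, hbm⟩ := SetLike.not_le_iff_exists.mp hEm₁
      have hbP : b ∉ P₁ := fun h => hbm (le_sup_left (α := Submodule F V) h)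
      set m₂ : Submodule F V := P₁ ⊔ Submodule.span F {b} with hm₂def
      have hm₂2 : finrank F m₂ = 2 := by rw [hm₂def, fr_sup_pt hq hbP, hP₁]
      have hm₂E : m₂ ≤ E i := sup_le (cfg_P1_le hmeet i)
        ((Submodule.span_singleton_le_iff_mem b _).mpr hbE)
      have hm12 : m₁ ≠ m₂ := by
        intro h
        exact hbm (h ▸ Submodule.mem_sup_right (Submodule.mem_span_singleton_self b))
      have hmm : m₁ ⊓ m₂ = P₁ := by
        have hP1le : P₁ ≤ m₁ ⊓ m₂ := le_inf le_sup_left le_sup_left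
        have hfr : finrank F (m₁ ⊓ m₂ : Submodule F V) ≤ 1 := by
          by_contra hgt
          have hge2 : 2 ≤ finrank F (m₁ ⊓ m₂ : Submodule F V) := by omega
          have he1 : m₁ ⊓ m₂ = m₁ :=
            Submodule.eq_of_le_of_finrank_le inf_le_left (by omega)
          have : m₁ ≤ m₂ := he1 ▸ inf_le_right
          exact hm12 (Submodule.eq_of_le_of_finrank_le this (by omega))
        exact (Submodule.eq_of_le_of_finrank_le hP1le (hP₁ ▸ hfr)).symm
      -- a line of LN meets m₁ and m₂ in points other than P₁
      have hmeetline : ∀ m : Submodule F V, finrank F m = 2 → m ≤ E i → P₁ ≤ m →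
          ∀ ℓ ∈ LN, finrank F (ℓ ⊓ m : Submodule F V) = 1 ∧ ℓ ⊓ m ≠ P₁ := by
        rintro m hm2 hmE hP1m ℓ ⟨hl2, hlE, hlP⟩
        have hkey := Submodule.finrank_sup_add_finrank_inf_eq ℓ m
        rw [hl2, hm2] at hkey
        have hsle : finrank F (ℓ ⊔ m : Submodule F V) ≤ 3 := by
          have := Submodule.finrank_mono (sup_le hlE hmE)
          rw [hE i] at this
          exact this
        have hub : finrank F (ℓ ⊓ m : Submodule F V) ≤ 1 := by
          by_contra hgt
          have : ℓ ⊓ m = ℓ := Submodule.eq_of_le_of_finrank_le inf_le_left (by omega)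
          have hlm : ℓ ≤ m := this ▸ inf_le_right
          have : ℓ = m := Submodule.eq_of_le_of_finrank_le hlm (by omega)
          exact hlP (this ▸ hP1m)
        refine ⟨by omega, fun heq => hlP (heq ▸ inf_le_left)⟩
      refine le_trans (lemB LN (Set.toFinite _) (ptsNe F m₁ P₁) (Set.toFinite _)
        (fun ℓ => ℓ ⊓ m₁) (q * 1) ?_ ?_)
        (by
          have := ptsNe_le1 hq hP₁ le_sup_left (le_of_eq hm₁2)
          calc (ptsNe F m₁ P₁).ncard * (q * 1) ≤ q * (q * 1) :=
              Nat.mul_le_mul_right _ this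
            _ = q * q := by ring)
      · intro ℓ hl
        obtain ⟨hfr1, hnP⟩ := hmeetline m₁ hm₁2 hm₁E le_sup_left ℓ hl
        exact ⟨hfr1, inf_le_right, hnP⟩
      · rintro A ⟨hA1, hAm, hAP⟩
        refine le_trans (lemB _ (Set.toFinite _) (ptsNe F m₂ P₁) (Set.toFinite _)
          (fun ℓ => ℓ ⊓ m₂) 1 ?_ ?_) (Nat.mul_le_mul_right _
            (ptsNe_le1 hq hP₁ le_sup_left (le_of_eq hm₂2)))
        · rintro ℓ ⟨hl, _⟩
          obtain ⟨hfr1, hnP⟩ := hmeetline m₂ hm₂2 hm₂E le_sup_left ℓ hl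
          exact ⟨hfr1, inf_le_right, hnP⟩
        · rintro B ⟨hB1, hBm, hBP⟩
          have hsub : (LN ∩ (fun ℓ => ℓ ⊓ m₁) ⁻¹' {A}) ∩ (fun ℓ => ℓ ⊓ m₂) ⁻¹' {B}
              ⊆ {(A ⊔ B : Submodule F V)} := by
            rintro ℓ ⟨⟨hl, hlA⟩, hlB⟩
            obtain ⟨hl2', hlE', hlP'⟩ := hl
            simp only [Set.mem_preimage, Set.mem_singleton_iff] at hlA hlB ⊢
            have hABne : A ≠ B := by
              intro heq
              have : A ≤ P₁ := by
                rw [← hmm]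
                refine le_inf ?_ ?_
                · rw [← hlA]; exact inf_le_right
                · rw [heq, ← hlB]; exact inf_le_right
              exact hAP (pt_eq_pt hA1 hP₁ this)
            have hfrAB : finrank F (A ⊔ B : Submodule F V) = 2 := by
              rw [fr_sup_disj (pts_inf_bot hA1 hB1 hABne), hA1, hB1]
            refine (Submodule.eq_of_le_of_finrank_le ?_ (by omega)).symm
            refine sup_le ?_ ?_
            · rw [← hlA]; exact inf_le_left
            · rw [← hlB]; exact inf_le_left
          calc _ ≤ ({(A ⊔ B : Submodule F V)} : Set (Submodule F V)).ncard :=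
                Set.ncard_le_ncard hsub (Set.toFinite _)
            _ = 1 := Set.ncard_singleton _
    -- now the main fibration for ML i
    refine le_trans (lemB (ML i) (Set.toFinite _) LN (Set.toFinite _)
      (fun S => S ⊓ E i) ((q ^ 2 + q) * 1) ?_ ?_) (Nat.mul_le_mul_right _ hLN)
    · rintro S ⟨hSM, hP1S, hfr2⟩
      exact ⟨hfr2, inf_le_right, fun heq => hP1S (heq.trans inf_le_left)⟩
    · rintro ℓ ⟨hl2, hlE, hlP⟩
      refine le_trans (lemB _ (Set.toFinite _) (ptsNe F (E j) P₁) (Set.toFinite _)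
        (fun S => S ⊓ E j) 1 ?_ ?_) (Nat.mul_le_mul_right _
          (ptsNe_le3 hq hP₁ (cfg_P1_le hmeet j) (hE j)))
      · rintro S ⟨⟨hSM, hP1S, hfr2⟩, _⟩
        have hd := hd2 S hSM hP1S i j hij
        have hg := fr_pos (hSM.2.2 j)
        refine ⟨?_, inf_le_right, fun heq => hP1S (heq ▸ inf_le_left)⟩
        show finrank F (S ⊓ E j : Submodule F V) = 1
        omega
      · rintro Q ⟨hQ1, hQE, hQP⟩
        have hsub : ((ML i ∩ (fun S => S ⊓ E i) ⁻¹' {ℓ}) ∩ (fun S => S ⊓ E j) ⁻¹' {Q})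
            ⊆ {((ℓ ⊔ Q) ⊔ P₂ : Submodule F V)} := by
          rintro S ⟨⟨⟨hSM, hP1S, hfr2⟩, hSl⟩, hSQ⟩
          simp only [Set.mem_preimage, Set.mem_singleton_iff] at hSl hSQ ⊢
          obtain ⟨hS4, hP2S, hSE⟩ := hSM
          have hlQdisj : ℓ ⊓ Q = ⊥ := by
            rw [← hSl, ← hSQ]
            exact hSP1 S hP1S i j hij
          have hfrlQ : finrank F (ℓ ⊔ Q : Submodule F V) = 3 := by
            rw [fr_sup_disj hlQdisj, hl2, hQ1]
          have hdisj2 : (ℓ ⊔ Q) ⊓ P₂ = ⊥ := by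
            have h' : (ℓ ⊔ Q) ⊓ P₂ ≤ (E i ⊔ E j) ⊓ P₂ :=
              inf_le_inf_right _ (sup_le (hlE.trans le_sup_left) (hQE.trans le_sup_right))
            rw [pt_inf_bot hP₂ (hmeet i j hij).2] at h'
            exact le_bot_iff.mp h'
          have hfr4 : finrank F ((ℓ ⊔ Q) ⊔ P₂ : Submodule F V) = 4 := by
            rw [fr_sup_disj hdisj2, hfrlQ, hP₂]
          refine (Submodule.eq_of_le_of_finrank_le ?_ (by omega)).symm
          refine sup_le (sup_le ?_ ?_) hP2S
          · rw [← hSl]; exact inf_le_left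
          · rw [← hSQ]; exact inf_le_left
        calc _ ≤ ({((ℓ ⊔ Q) ⊔ P₂ : Submodule F V)} : Set (Submodule F V)).ncard :=
              Set.ncard_le_ncard hsub (Set.toFinite _)
          _ = 1 := Set.ncard_singleton _
  -- bound on MPa
  have hbMPa : MPa.ncard ≤ (q ^ 2 + q) * ((q ^ 2 + q) * ((q ^ 2 + q) * 1)) := by
    refine le_trans (lemB MPa (Set.toFinite _) (ptsNe F (E 0) P₁) (Set.toFinite _)
      (fun S => S ⊓ E 0) ((q ^ 2 + q) * ((q ^ 2 + q) * 1)) ?_ ?_)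
      (Nat.mul_le_mul_right _ (ptsNe_le3 hq hP₁ (cfg_P1_le hmeet 0) (hE 0)))
    · rintro S ⟨hSM, hP1S, hall, hspan⟩
      exact ⟨hall 0, inf_le_right, fun heq => hP1S (heq ▸ inf_le_left)⟩
    · rintro Q0 hQ0
      refine le_trans (lemB _ (Set.toFinite _) (ptsNe F (E 1) P₁) (Set.toFinite _)
        (fun S => S ⊓ E 1) ((q ^ 2 + q) * 1) ?_ ?_)
        (Nat.mul_le_mul_right _ (ptsNe_le3 hq hP₁ (cfg_P1_le hmeet 1) (hE 1)))
      · rintro S ⟨⟨hSM, hP1S, hall, hspan⟩, _⟩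
        exact ⟨hall 1, inf_le_right, fun heq => hP1S (heq ▸ inf_le_left)⟩
      · rintro Q1 hQ1
        refine le_trans (lemB _ (Set.toFinite _) (ptsNe F (E 2) P₁) (Set.toFinite _)
          (fun S => S ⊓ E 2) 1 ?_ ?_)
          (Nat.mul_le_mul_right _ (ptsNe_le3 hq hP₁ (cfg_P1_le hmeet 2) (hE 2)))
        · rintro S ⟨⟨⟨hSM, hP1S, hall, hspan⟩, _⟩, _⟩
          exact ⟨hall 2, inf_le_right, fun heq => hP1S (heq ▸ inf_le_left)⟩
        · rintro Q2 hQ2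
          have hsub : (((MPa ∩ (fun S => S ⊓ E 0) ⁻¹' {Q0}) ∩ (fun S => S ⊓ E 1) ⁻¹' {Q1})
              ∩ (fun S => S ⊓ E 2) ⁻¹' {Q2}) ⊆ {(P₂ ⊔ Q0 ⊔ Q1 ⊔ Q2 : Submodule F V)} := by
            rintro S ⟨⟨⟨⟨hSM, hP1S, hall, hspan⟩, hS0⟩, hS1⟩, hS2⟩
            simp only [Set.mem_preimage, Set.mem_singleton_iff] at hS0 hS1 hS2 ⊢
            rw [hspan, hS0, hS1, hS2]
          calc _ ≤ ({(P₂ ⊔ Q0 ⊔ Q1 ⊔ Q2 : Submodule F V)} : Set (Submodule F V)).ncard :=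
                Set.ncard_le_ncard hsub (Set.toFinite _)
            _ = 1 := Set.ncard_singleton _
  -- bound on MPb
  have hbMPb : MPb.ncard ≤ (q ^ 2 + q) * (q * 1) * (q ^ 3 + q ^ 2 - 2 * q) := by
    refine le_trans (lemB MPb (Set.toFinite _) (auxTT F P₁ P₂ E) (Set.toFinite _)
      (fun S => P₂ ⊔ (S ⊓ E 0) ⊔ (S ⊓ E 1)) (q ^ 3 + q ^ 2 - 2 * q) ?_ ?_)
      (Nat.mul_le_mul_right _ (TT_card hq hP₁ hP₂ hE hmeet))
    · rintro S ⟨hSM, hP1S, hall, hQ2le⟩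
      obtain ⟨hS4, hP2S, hSE⟩ := hSM
      have hT3 := hplane S ⟨hS4, hP2S, hSE⟩ hP1S (hall 0) (hall 1)
      have hTleS : P₂ ⊔ (S ⊓ E 0) ⊔ (S ⊓ E 1) ≤ S :=
        sup_le (sup_le hP2S inf_le_left) inf_le_left
      refine ⟨hT3, le_sup_left.trans le_sup_left, fun h => hP1S (h.trans hTleS), ?_⟩
      intro k
      have hQknb : ∀ k : Fin 3, S ⊓ E k ≠ ⊥ := hSE
      have hQle : ∀ k : Fin 3, S ⊓ E k ≤ P₂ ⊔ (S ⊓ E 0) ⊔ (S ⊓ E 1) :=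
        fun k => match k with
        | ⟨0, _⟩ => le_sup_right.trans le_sup_left
        | ⟨1, _⟩ => le_sup_right
        | ⟨2, _⟩ => hQ2le
      intro hbot
      refine hQknb k ?_
      have : S ⊓ E k ≤ (P₂ ⊔ (S ⊓ E 0) ⊔ (S ⊓ E 1)) ⊓ E k :=
        le_inf (hQle k) inf_le_right
      rw [hbot] at this
      exact le_bot_iff.mp this
    · rintro T hT
      have hsub : MPb ∩ (fun S => P₂ ⊔ (S ⊓ E 0) ⊔ (S ⊓ E 1)) ⁻¹' {T} ⊆ auxBB F E T := by
        rintro S ⟨⟨hSM, hP1S, hall, hQ2le⟩, hST⟩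
        simp only [Set.mem_preimage, Set.mem_singleton_iff] at hST
        obtain ⟨hS4, hP2S, hSE⟩ := hSM
        have hTleS : T ≤ S := by
          rw [← hST]
          exact sup_le (sup_le hP2S inf_le_left) inf_le_left
        have hQleT : ∀ k : Fin 3, S ⊓ E k ≤ T := by
          intro k
          rw [← hST]
          exact match k with
          | ⟨0, _⟩ => le_sup_right.trans le_sup_left
          | ⟨1, _⟩ => le_sup_right
          | ⟨2, _⟩ => hQ2le
        refine ⟨hS4, hTleS, fun k => ?_⟩
        refine le_antisymm ?_ (le_inf hTleS le_sup_left)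
        rintro v ⟨hvS, hvTE⟩
        obtain ⟨t, ht, e, he, hte⟩ := Submodule.mem_sup.mp hvTE
        have heS : e ∈ S := by
          have : e = v - t := by rw [← hte]; abel
          rw [this]
          exact Submodule.sub_mem _ hvS (hTleS ht)
        have : e ∈ T := hQleT k (Submodule.mem_inf.mpr ⟨heS, he⟩)
        rw [← hte]
        exact Submodule.add_mem _ ht this
      exact le_trans (Set.ncard_le_ncard hsub (Set.toFinite _))
        (BB_card hq hV hP₁ hP₂ hE hmeet hT)
  -- assemble
  have hsum : M.ncard ≤ M1.ncard + ((ML 0).ncard + ((ML 1).ncard + ((ML 2).ncard +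
      (MPa.ncard + MPb.ncard)))) := by
    refine le_trans (Set.ncard_le_ncard hcover (Set.toFinite _)) ?_
    refine le_trans (Set.ncard_union_le _ _) (Nat.add_le_add_left ?_ _)
    refine le_trans (Set.ncard_union_le _ _) (Nat.add_le_add_left ?_ _)
    refine le_trans (Set.ncard_union_le _ _) (Nat.add_le_add_left ?_ _)
    refine le_trans (Set.ncard_union_le _ _) (Nat.add_le_add_left ?_ _)
    exact Set.ncard_union_le _ _
  have hL0 := hbML 0 1 (by decide)
  have hL1 := hbML 1 2 (by decide)
  have hL2 := hbML 2 0 (by decide)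
  have htot : (q ^ 6 + q ^ 5 + 2 * q ^ 4 + 2 * q ^ 3 + 2 * q ^ 2 + q + 1) +
      ((q * q * ((q ^ 2 + q) * 1)) + ((q * q * ((q ^ 2 + q) * 1)) +
      ((q * q * ((q ^ 2 + q) * 1)) + ((q ^ 2 + q) * ((q ^ 2 + q) * ((q ^ 2 + q) * 1)) +
      (q ^ 2 + q) * (q * 1) * (q ^ 3 + q ^ 2 - 2 * q))))) =
      3 * q ^ 6 + 6 * q ^ 5 + 7 * q ^ 4 + 4 * q ^ 3 + 2 * q ^ 2 + q + 1 := by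
    have e1 : 2 * q ≤ q ^ 3 + q ^ 2 := by
      have h3 : 2 * q ≤ q * q := Nat.mul_le_mul_right q h2
      have h4 : q * q = q ^ 2 := by ring
      omega
    zify [e1]
    ring
  calc M.ncard ≤ _ := hsum
    _ ≤ (q ^ 6 + q ^ 5 + 2 * q ^ 4 + 2 * q ^ 3 + 2 * q ^ 2 + q + 1) +
      ((q * q * ((q ^ 2 + q) * 1)) + ((q * q * ((q ^ 2 + q) * 1)) +
      ((q * q * ((q ^ 2 + q) * 1)) + ((q ^ 2 + q) * ((q ^ 2 + q) * ((q ^ 2 + q) * 1)) +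
      (q ^ 2 + q) * (q * 1) * (q ^ 3 + q ^ 2 - 2 * q))))) := by
        refine Nat.add_le_add hbM1 ?_
        refine Nat.add_le_add hL0 ?_
        refine Nat.add_le_add hL1 ?_
        refine Nat.add_le_add hL2 ?_
        exact Nat.add_le_add hbMPa hbMPb
    _ = _ := htot
end
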